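/- arXiv:1507.00641 — 5 statements merged into one kernel-verified Lean document; each statement's English description precedes it below -/
import Mathlib

section
/- Let [a,b] ⊆ [0,1], κ > 0, m ∈ ℕ and N ∈ ℕ. Suppose g ∈ C¹([a,b]) with g'(x) > 0 for all x ∈ [a,b], let σ := max_{x∈[a,b]} |g'(x)|, and suppose Ψ := (f/g') ∘ g^{-1} belongs to C^{m+1}([g(a), g(b)]). Then the composite moment-free Filon rule satisfies |I_κ^{[a,b]}[f,g] − Q_{N,κ,m}^{[a,b]}[f,g]| ≤ (3(m+1)/(m! κ² N^{m−1})) ‖Ψ^{(m+1)}‖_∞ σ^m (b−a)^m. In particular, if N = ⌈σ⌉ (the smallest integer not less than σ), then |I_κ^{[a,b]}[f,g] − Q_{N,κ,m}^{[a,b]}[f,g]| ≤ (3(m+1)/(m! κ²)) ‖Ψ^{(m+1)}‖_∞ σ (b−a)^m. -/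
open scoped BigOperators
open MeasureTheory

noncomputable section

/-- Polynomial evaluation is smooth. -/
lemma polyeval_contDiff (p : Polynomial ℝ) (n : ℕ∞) :
    ContDiff ℝ n (fun x : ℝ => p.eval x) := by
  have : (fun x : ℝ => p.eval x)
      = fun x => ∑ i ∈ Finset.range (p.natDegree + 1), p.coeff i * x ^ i := by
    funext x; rw [Polynomial.eval_eq_sum_range]
  rw [this]
  exact ContDiff.sum fun i _ => (contDiff_const).mul (contDiff_id.pow i)

/-- iterated derivative within `Icc` equals global iterated derivative on the interior. -/
lemma idw_Icc_eq {f : ℝ → ℝ} {n : ℕ} {A B x : ℝ} (hx : x ∈ Set.Ioo A B) :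
    iteratedDerivWithin n f (Set.Icc A B) x = iteratedDeriv n f x := by
  rw [iteratedDerivWithin_eq_iteratedFDerivWithin, iteratedDeriv_eq_iteratedFDeriv]
  have h1 : Set.Icc A B ∩ Set.Ioo A B = Set.Ioo A B :=
    Set.inter_eq_self_of_subset_right Set.Ioo_subset_Icc_self
  rw [← iteratedFDerivWithin_inter_open isOpen_Ioo hx, h1,
    iteratedFDerivWithin_of_isOpen n isOpen_Ioo hx]

/-- iterated global derivative of a polynomial evaluation. -/
lemma iteratedDeriv_polyeval (p : Polynomial ℝ) (n : ℕ) :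
    iteratedDeriv n (fun x : ℝ => p.eval x)
      = fun x => ((Polynomial.derivative)^[n] p).eval x := by
  induction n generalizing p with
  | zero => simp
  | succ n ih =>
    rw [iteratedDeriv_succ']
    have : deriv (fun x : ℝ => p.eval x) = fun x => (Polynomial.derivative p).eval x := by
      funext x; exact Polynomial.deriv p
    rw [this, ih, Function.iterate_succ_apply]

/-- extend a bound from the open interval to the closed one, by continuity. -/
lemma bound_of_Ioo {f : ℝ → ℝ} {α β c : ℝ} (hαβ : α < β)
    (hf : ContinuousOn f (Set.Icc α β))
    (h : ∀ x ∈ Set.Ioo α β, |f x| ≤ c) : ∀ x ∈ Set.Icc α β, |f x| ≤ c := by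
  intro x hx
  have hxc : x ∈ closure (Set.Ioo α β) := by
    rw [closure_Ioo hαβ.ne]; exact hx
  have hne : (nhdsWithin x (Set.Ioo α β)).NeBot :=
    mem_closure_iff_nhdsWithin_neBot.mp hxc
  have hcw : ContinuousWithinAt f (Set.Ioo α β) x :=
    (hf x hx).mono Set.Ioo_subset_Icc_self
  have htend : Filter.Tendsto (fun y => |f y|) (nhdsWithin x (Set.Ioo α β)) (nhds |f x|) :=
    (continuous_abs.continuousAt.tendsto.comp hcw)
  exact le_of_tendsto htend (eventually_mem_nhdsWithin.mono h)

/-- Iterated Rolle: a `C^n` function on an open set with `n+1` increasing zeros has a zero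
of its `n`-th derivative between the extreme zeros. -/
lemma iter_rolle {U : Set ℝ} (hU : IsOpen U) :
    ∀ (n : ℕ) (F : ℝ → ℝ), ContDiffOn ℝ n F U →
    ∀ s : Fin (n+1) → ℝ, StrictMono s → Set.Icc (s 0) (s (Fin.last n)) ⊆ U →
    (∀ i, F (s i) = 0) →
    ∃ ξ ∈ Set.Icc (s 0) (s (Fin.last n)), iteratedDeriv n F ξ = 0 := by
  intro n
  induction n with
  | zero =>
    intro F _ s _ _ h0
    exact ⟨s 0, Set.left_mem_Icc.mpr le_rfl, by simpa using h0 0⟩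
  | succ n ih =>
    intro F hF s hs hsub h0
    have hmem : ∀ i : Fin (n+2), s i ∈ Set.Icc (s 0) (s (Fin.last (n+1))) := by
      intro i
      exact ⟨hs.monotone (Fin.zero_le i), hs.monotone (Fin.le_last i)⟩
    have key : ∀ i : Fin (n+1), ∃ c ∈ Set.Ioo (s i.castSucc) (s i.succ), deriv F c = 0 := by
      intro i
      have hlt : s i.castSucc < s i.succ := hs Fin.castSucc_lt_succ
      have hsubi : Set.Icc (s i.castSucc) (s i.succ) ⊆ U := by
        refine subset_trans (Set.Icc_subset_Icc ?_ ?_) hsub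
        · exact (hmem i.castSucc).1
        · exact (hmem i.succ).2
      exact exists_deriv_eq_zero hlt (hF.continuousOn.mono hsubi)
        ((h0 i.castSucc).trans (h0 i.succ).symm)
    choose w hw hw0 using key
    have hwmono : StrictMono w := by
      intro i j hij
      calc w i < s i.succ := (hw i).2
        _ ≤ s j.castSucc := hs.monotone (by
            rw [Fin.le_def]
            simpa using hij)
        _ < w j := (hw j).1
    have hwsub : Set.Icc (w 0) (w (Fin.last n)) ⊆ Set.Icc (s 0) (s (Fin.last (n+1))) := by
      apply Set.Icc_subset_Icc
      · exact le_of_lt (by simpa using (hw 0).1)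
      · refine le_of_lt (lt_of_lt_of_le (hw (Fin.last n)).2 ?_)
        rw [Fin.succ_last]
    have hF' : ContDiffOn ℝ n (deriv F) U := by
      apply hF.deriv_of_isOpen hU
      norm_cast
    obtain ⟨ξ, hξ, hξ0⟩ := ih (deriv F) hF' w hwmono (subset_trans hwsub hsub) hw0
    exact ⟨ξ, hwsub hξ, by rwa [iteratedDeriv_succ']⟩

/-- Finset version of the iterated Rolle theorem. -/
lemma iter_rolle_finset {U : Set ℝ} (hU : IsOpen U) (n : ℕ) (F : ℝ → ℝ)
    (hF : ContDiffOn ℝ n F U) (Z : Finset ℝ) (hcard : Z.card = n + 1)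
    (hne : Z.Nonempty)
    (hsub : Set.Icc (Z.min' hne) (Z.max' hne) ⊆ U)
    (h0 : ∀ x ∈ Z, F x = 0) :
    ∃ ξ ∈ Set.Icc (Z.min' hne) (Z.max' hne), iteratedDeriv n F ξ = 0 := by
  set e := Z.orderIsoOfFin hcard with he
  set s : Fin (n+1) → ℝ := fun i => (e i : ℝ) with hsdef
  have hsmono : StrictMono s := fun i j hij => by
    exact_mod_cast e.strictMono hij
  have hsmem : ∀ i, s i ∈ Z := fun i => (e i).2
  have hmin : s 0 = Z.min' hne := by
    apply le_antisymm
    · obtain ⟨j, hj⟩ := e.surjective ⟨Z.min' hne, Z.min'_mem hne⟩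
      have : s j = Z.min' hne := by rw [hsdef]; exact congrArg Subtype.val hj
      rw [← this]
      exact hsmono.monotone (Fin.zero_le j)
    · exact Z.min'_le _ (hsmem 0)
  have hmax : s (Fin.last n) = Z.max' hne := by
    apply le_antisymm
    · exact Z.le_max' _ (hsmem _)
    · obtain ⟨j, hj⟩ := e.surjective ⟨Z.max' hne, Z.max'_mem hne⟩
      have : s j = Z.max' hne := by rw [hsdef]; exact congrArg Subtype.val hj
      rw [← this]
      exact hsmono.monotone (Fin.le_last j)
  rw [← hmin, ← hmax]
  exact iter_rolle hU n F hF s hsmono (by rw [hmin, hmax]; exact hsub)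
    (fun i => h0 _ (hsmem i))

lemma idw_open_eq {f : ℝ → ℝ} {n : ℕ} {s : Set ℝ} {x : ℝ} (hs : IsOpen s) (hx : x ∈ s) :
    iteratedDerivWithin n f s x = iteratedDeriv n f x := by
  rw [iteratedDerivWithin_eq_iteratedFDerivWithin, iteratedDeriv_eq_iteratedFDeriv,
    iteratedFDerivWithin_of_isOpen n hs hx]

/-- Mean-value style bound: a `C^n` function with `n` zeros in `(α,β)` is bounded by
`M (β-α)^n / n!` where `M` bounds the `n`-th derivative. -/
lemma mv_bound {A B α β : ℝ} (hAα : A ≤ α) (hβB : β ≤ B) (hαβ : α < β) (n : ℕ)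
    (F : ℝ → ℝ) (hF : ContDiffOn ℝ n F (Set.Ioo A B))
    (z : Fin n → ℝ) (hz : StrictMono z) (hzm : ∀ i, z i ∈ Set.Ioo α β)
    (hz0 : ∀ i, F (z i) = 0)
    (M : ℝ) (hM : ∀ y ∈ Set.Ioo α β, |iteratedDeriv n F y| ≤ M) :
    ∀ x ∈ Set.Ioo α β, |F x| ≤ M * (β - α) ^ n / n.factorial := by
  intro x hx
  have hIsub : Set.Ioo α β ⊆ Set.Ioo A B := Set.Ioo_subset_Ioo hAα hβB
  have hM0 : 0 ≤ M := le_trans (abs_nonneg _) (hM x hx)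
  have hfac : (0:ℝ) < n.factorial := by exact_mod_cast n.factorial_pos
  by_cases hxz : ∃ i, x = z i
  · obtain ⟨i, rfl⟩ := hxz
    rw [hz0 i, abs_zero]
    exact div_nonneg (mul_nonneg hM0 (pow_nonneg (by linarith) n)) hfac.le
  · set ω : ℝ → ℝ := fun t => ∏ i : Fin n, (t - z i) with hωdef
    have hωx : ω x ≠ 0 := by
      rw [hωdef]
      exact Finset.prod_ne_zero_iff.mpr fun i _ => sub_ne_zero.mpr fun h => hxz ⟨i, h⟩
    set c : ℝ := F x / ω x with hcdef
    set G : ℝ → ℝ := fun t => F t - c * ω t with hGdef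
    have hωcd : ContDiff ℝ n ω :=
      contDiff_prod fun i _ => contDiff_id.sub contDiff_const
    have hG : ContDiffOn ℝ n G (Set.Ioo A B) :=
      hF.sub ((contDiff_const.mul hωcd).contDiffOn)
    set Z : Finset ℝ := insert x (Finset.image z Finset.univ) with hZdef
    have hxnot : x ∉ Finset.image z Finset.univ := by
      simp only [Finset.mem_image, Finset.mem_univ, true_and]
      rintro ⟨i, hi⟩
      exact hxz ⟨i, hi.symm⟩
    have hcard : Z.card = n + 1 := by
      rw [hZdef, Finset.card_insert_of_notMem hxnot,
        Finset.card_image_of_injective _ hz.injective, Finset.card_univ, Fintype.card_fin]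
    have hZmem : ∀ y ∈ Z, y ∈ Set.Ioo α β := by
      intro y hy
      rw [hZdef, Finset.mem_insert] at hy
      rcases hy with rfl | hy
      · exact hx
      · simp only [Finset.mem_image, Finset.mem_univ, true_and] at hy
        obtain ⟨i, rfl⟩ := hy
        exact hzm i
    have hzeros : ∀ y ∈ Z, G y = 0 := by
      intro y hy
      rw [hZdef, Finset.mem_insert] at hy
      rcases hy with rfl | hy
      · simp only [hGdef, hcdef]
        rw [div_mul_cancel₀ _ hωx, sub_self]
      · simp only [Finset.mem_image, Finset.mem_univ, true_and] at hy
        obtain ⟨i, rfl⟩ := hy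
        have hω0 : ω (z i) = 0 :=
          Finset.prod_eq_zero (Finset.mem_univ i) (sub_self _)
        simp [hGdef, hz0 i, hω0]
    have hne : Z.Nonempty := ⟨x, Finset.mem_insert_self _ _⟩
    have hminI := hZmem _ (Z.min'_mem hne)
    have hmaxI := hZmem _ (Z.max'_mem hne)
    have hIccsub : Set.Icc (Z.min' hne) (Z.max' hne) ⊆ Set.Ioo α β := fun y hy =>
      ⟨lt_of_lt_of_le hminI.1 hy.1, lt_of_le_of_lt hy.2 hmaxI.2⟩
    obtain ⟨ξ, hξ, hξ0⟩ := iter_rolle_finset isOpen_Ioo n G hG Z hcard hne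
      (subset_trans hIccsub hIsub) hzeros
    have hξI : ξ ∈ Set.Ioo α β := hIccsub hξ
    have hξU : ξ ∈ Set.Ioo A B := hIsub hξI
    -- compute the n-th derivative of ω : it is constantly n!
    set P : Polynomial ℝ := ∏ i : Fin n, (Polynomial.X - Polynomial.C (z i)) with hPdef
    have hω_eval : ω = fun t => P.eval t := by
      funext t; simp [hωdef, hPdef, Polynomial.eval_prod]
    have hPmonic : P.Monic :=
      Polynomial.monic_prod_of_monic _ _ fun i _ => Polynomial.monic_X_sub_C _
    have hPdeg : P.natDegree = n := by
      rw [hPdef, Polynomial.natDegree_prod _ _ fun i _ => Polynomial.X_sub_C_ne_zero _]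
      simp [Polynomial.natDegree_X_sub_C]
    have hcω : (fun t => c * ω t) = fun t => (Polynomial.C c * P).eval t := by
      funext t; simp [hω_eval]
    have hcωn : iteratedDeriv n (fun t => c * ω t) = fun _ => c * n.factorial := by
      rw [hcω, iteratedDeriv_polyeval]
      funext t
      rw [Polynomial.iterate_derivative_C_mul]
      have h1 : ((Polynomial.derivative)^[n] P).natDegree ≤ 0 :=
        le_trans (Polynomial.natDegree_iterate_derivative P n) (by rw [hPdeg]; simp)
      rw [Polynomial.eval_mul, Polynomial.eval_C,
        Polynomial.eq_C_of_natDegree_le_zero h1, Polynomial.eval_C,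
        Polynomial.coeff_iterate_derivative]
      have : P.coeff (0 + n) = 1 := by
        rw [zero_add, ← hPdeg]
        exact hPmonic.coeff_natDegree
      rw [this]
      simp [Nat.descFactorial_self]
    have key : iteratedDeriv n F ξ = c * n.factorial := by
      have hud : UniqueDiffOn ℝ (Set.Ioo A B) := isOpen_Ioo.uniqueDiffOn
      have h1 : iteratedDeriv n G ξ
          = iteratedDeriv n F ξ - iteratedDeriv n (fun t => c * ω t) ξ := by
        rw [← idw_open_eq isOpen_Ioo hξU, ← idw_open_eq isOpen_Ioo hξU (f := F),
          ← idw_open_eq isOpen_Ioo hξU (f := fun t => c * ω t)]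
        exact iteratedDerivWithin_sub hξU hud (hF ξ hξU) ((contDiff_const.mul hωcd).contDiffOn ξ hξU)
      rw [hξ0, hcωn] at h1
      have h2 := sub_eq_zero.mp h1.symm
      simpa using h2
    -- conclude
    have hFx : F x = c * ω x := by
      rw [hcdef, div_mul_cancel₀ _ hωx]
    have hωbound : |ω x| ≤ (β - α) ^ n := by
      rw [hωdef, Finset.abs_prod]
      calc ∏ i : Fin n, |x - z i| ≤ ∏ _i : Fin n, (β - α) := by
            apply Finset.prod_le_prod (fun i _ => abs_nonneg _)
            intro i _
            have h1 := hx.1; have h2 := hx.2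
            have h3 := (hzm i).1; have h4 := (hzm i).2
            rw [abs_sub_le_iff]; constructor <;> linarith
        _ = (β - α) ^ n := by simp
    have hc : |c| ≤ M / n.factorial := by
      have := hM ξ hξI
      rw [key] at this
      rw [abs_mul] at this
      have h2 : |(n.factorial : ℝ)| = (n.factorial : ℝ) := abs_of_pos hfac
      rw [h2] at this
      rw [le_div_iff₀ hfac]
      exact this
    calc |F x| = |c| * |ω x| := by rw [hFx, abs_mul]
      _ ≤ (M / n.factorial) * (β - α) ^ n := by
          apply mul_le_mul hc hωbound (abs_nonneg _) (by positivity)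
      _ = M * (β - α) ^ n / n.factorial := by ring

/-- Integration by parts (twice) estimate for oscillatory integrals with a function vanishing
at both endpoints. -/
lemma osc_ibp_est {α β κ : ℝ} (hκ : 0 < κ) (hαβ : α < β)
    (E E₁ E₂ : ℝ → ℝ)
    (hEc : ContinuousOn E (Set.Icc α β))
    (hE1c : ContinuousOn E₁ (Set.Icc α β))
    (hE2c : ContinuousOn E₂ (Set.Icc α β))
    (hd1 : ∀ x ∈ Set.Ioo α β, HasDerivAt E (E₁ x) x)
    (hd2 : ∀ x ∈ Set.Ioo α β, HasDerivAt E₁ (E₂ x) x)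
    (hEα : E α = 0) (hEβ : E β = 0)
    (M1 M2 : ℝ) (hM1 : ∀ x ∈ Set.Icc α β, |E₁ x| ≤ M1)
    (hM2 : ∀ x ∈ Set.Icc α β, |E₂ x| ≤ M2) :
    ‖∫ u in α..β, (E u : ℂ) * Complex.exp (Complex.I * κ * u)‖
      ≤ (2 * M1 + (β - α) * M2) / κ ^ 2 := by
  set c : ℂ := Complex.I * κ with hcdef
  have hcne : c ≠ 0 := by
    simp [hcdef, Complex.ext_iff, hκ.ne']
  have hcabs : ‖c‖ = κ := by
    simp [hcdef, abs_of_pos hκ]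
  set e : ℝ → ℂ := fun u => Complex.exp (c * u) with hedef
  have hede : ∀ u : ℝ, HasDerivAt e (c * e u) u := by
    intro u
    have h0 : HasDerivAt (fun w : ℂ => c * w) c (u:ℂ) := by
      simpa using (hasDerivAt_id (u:ℂ)).const_mul c
    have h1 := h0.cexp
    have h2 := h1.comp_ofReal
    have h3 : Complex.exp (c * (u:ℂ)) * c = c * e u := by
      rw [hedef]; ring
    rw [h3] at h2
    exact h2
  have hec : Continuous e := by
    fun_prop
  have huIcc : Set.uIcc α β = Set.Icc α β := Set.uIcc_of_le hαβ.le
  -- integrability of various products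
  have hint : ∀ (φ : ℝ → ℝ), ContinuousOn φ (Set.Icc α β) →
      IntervalIntegrable (fun u => (φ u : ℂ) * e u) volume α β := by
    intro φ hφ
    apply ContinuousOn.intervalIntegrable
    rw [huIcc]
    exact ((Complex.continuous_ofReal.comp_continuousOn hφ).mul hec.continuousOn)
  -- first integration by parts
  have ibp : ∀ (φ φ' : ℝ → ℝ), ContinuousOn φ (Set.Icc α β) →
      ContinuousOn φ' (Set.Icc α β) →
      (∀ x ∈ Set.Ioo α β, HasDerivAt φ (φ' x) x) →
      ∫ u in α..β, ((φ' u : ℂ) * e u / c + (φ u : ℂ) * e u)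
        = (φ β : ℂ) * e β / c - (φ α : ℂ) * e α / c := by
    intro φ φ' hφ hφ' hd
    have key : ∀ x ∈ Set.Ioo α β,
        HasDerivAt (fun u => (φ u : ℂ) * e u / c) ((φ' x : ℂ) * e x / c + (φ x : ℂ) * e x) x := by
      intro x hx
      have h1 : HasDerivAt (fun u : ℝ => (φ u : ℂ)) (φ' x : ℂ) x := (hd x hx).ofReal_comp
      have h2 := (h1.mul (hede x)).div_const c
      exact h2.congr_deriv (by rw [div_add' _ _ _ hcne]; ring)
    have hcont : ContinuousOn (fun u => (φ u : ℂ) * e u / c) (Set.Icc α β) :=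
      ((Complex.continuous_ofReal.comp_continuousOn hφ).mul hec.continuousOn).div_const c
    have hii : IntervalIntegrable (fun u => (φ' u : ℂ) * e u / c + (φ u : ℂ) * e u) volume α β := by
      exact ((hint φ' hφ').div_const c).add (hint φ hφ)
    exact intervalIntegral.integral_eq_sub_of_hasDerivAt_of_le hαβ.le hcont key hii
  have ibp1 := ibp E E₁ hEc hE1c hd1
  have ibp2 := ibp E₁ E₂ hE1c hE2c hd2
  rw [hEα, hEβ] at ibp1
  simp only [Complex.ofReal_zero, zero_mul, zero_div, sub_zero, sub_self] at ibp1
  -- split the integrals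
  have hsplit1 : (∫ u in α..β, ((E₁ u : ℂ) * e u / c + (E u : ℂ) * e u))
      = (∫ u in α..β, (E₁ u : ℂ) * e u) / c + ∫ u in α..β, (E u : ℂ) * e u := by
    rw [intervalIntegral.integral_add ((hint E₁ hE1c).div_const c) (hint E hEc),
      intervalIntegral.integral_div]
  have hsplit2 : (∫ u in α..β, ((E₂ u : ℂ) * e u / c + (E₁ u : ℂ) * e u))
      = (∫ u in α..β, (E₂ u : ℂ) * e u) / c + ∫ u in α..β, (E₁ u : ℂ) * e u := by
    rw [intervalIntegral.integral_add ((hint E₂ hE2c).div_const c) (hint E₁ hE1c),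
      intervalIntegral.integral_div]
  rw [hsplit1] at ibp1
  rw [hsplit2] at ibp2
  -- solve for the integrals
  have hI : (∫ u in α..β, (E u : ℂ) * e u) = -(∫ u in α..β, (E₁ u : ℂ) * e u) / c := by
    field_simp at ibp1 ⊢
    linear_combination ibp1
  have hI1 : ‖∫ u in α..β, (E₁ u : ℂ) * e u‖ ≤ (2 * M1 + (β - α) * M2) / κ := by
    have hA := ibp2
    have h2 : (∫ u in α..β, (E₁ u : ℂ) * e u)
        = (E₁ β : ℂ) * e β / c - (E₁ α : ℂ) * e α / c - (∫ u in α..β, (E₂ u : ℂ) * e u) / c := by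
      linear_combination hA
    rw [h2]
    have habse : ∀ u : ℝ, ‖e u‖ = 1 := by
      intro u
      rw [hedef]
      simp [Complex.norm_exp, hcdef]
    have hb1 : ‖(E₁ β : ℂ) * e β / c‖ ≤ M1 / κ := by
      rw [norm_div, norm_mul, hcabs, habse]
      simp only [Complex.norm_real, Real.norm_eq_abs, mul_one]
      gcongr
      exact hM1 β (Set.right_mem_Icc.mpr hαβ.le)
    have hb2 : ‖(E₁ α : ℂ) * e α / c‖ ≤ M1 / κ := by
      rw [norm_div, norm_mul, hcabs, habse]
      simp only [Complex.norm_real, Real.norm_eq_abs, mul_one]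
      gcongr
      exact hM1 α (Set.left_mem_Icc.mpr hαβ.le)
    have hb3 : ‖(∫ u in α..β, (E₂ u : ℂ) * e u) / c‖ ≤ (β - α) * M2 / κ := by
      rw [norm_div, hcabs]
      gcongr
      have := intervalIntegral.norm_integral_le_of_norm_le_const (C := M2)
        (f := fun u => (E₂ u : ℂ) * e u) (a := α) (b := β) ?_
      · refine this.trans ?_
        rw [abs_of_nonneg (by linarith : (0:ℝ) ≤ β - α)]
        ring_nf
        exact le_rfl
      · intro x hx
        rw [Set.uIoc_of_le hαβ.le] at hx
        have hx' : x ∈ Set.Icc α β := ⟨hx.1.le, hx.2⟩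
        have heq : ‖(E₂ x : ℂ) * e x‖ = |E₂ x| := by
          rw [norm_mul, Complex.norm_real, Real.norm_eq_abs, habse, mul_one]
        rw [heq]
        exact hM2 x hx'
    calc ‖(E₁ β : ℂ) * e β / c - (E₁ α : ℂ) * e α / c
            - (∫ u in α..β, (E₂ u : ℂ) * e u) / c‖
        ≤ ‖(E₁ β : ℂ) * e β / c - (E₁ α : ℂ) * e α / c‖
            + ‖(∫ u in α..β, (E₂ u : ℂ) * e u) / c‖ := by
          apply (norm_sub_le _ _).trans_eq rfl
      _ ≤ (M1 / κ + M1 / κ) + (β - α) * M2 / κ := by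
          have := (norm_sub_le ((E₁ β : ℂ) * e β / c) ((E₁ α : ℂ) * e α / c))
          gcongr
          exact this.trans (by gcongr)
      _ = (2 * M1 + (β - α) * M2) / κ := by ring
  rw [hI]
  rw [norm_div, norm_neg, hcabs]
  have hnum : 0 ≤ 2 * M1 + (β - α) * M2 := by
    have h1 : 0 ≤ M1 := le_trans (abs_nonneg _) (hM1 α (Set.left_mem_Icc.mpr hαβ.le))
    have h2 : 0 ≤ M2 := le_trans (abs_nonneg _) (hM2 α (Set.left_mem_Icc.mpr hαβ.le))
    have h3 : (0:ℝ) ≤ β - α := by linarith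
    positivity
  calc ‖∫ u in α..β, (E₁ u : ℂ) * e u‖ / κ
      ≤ ((2 * M1 + (β - α) * M2) / κ) / κ := by gcongr
    _ = (2 * M1 + (β - α) * M2) / κ ^ 2 := by
        rw [div_div, ← sq]

/-- Per-subinterval Filon error estimate. -/
lemma sub_est {A B α β κ : ℝ} {m : ℕ} (hκ : 0 < κ) (hm : 1 ≤ m)
    (hAα : A ≤ α) (hαβ : α < β) (hβB : β ≤ B)
    (Ψ : ℝ → ℝ) (hΨ : ContDiffOn ℝ (m+1) Ψ (Set.Icc A B)) (C : ℝ)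
    (hC : ∀ x ∈ Set.Icc A B, |iteratedDerivWithin (m+1) Ψ (Set.Icc A B) x| ≤ C)
    (u : Fin (m+1) → ℝ) (hu : StrictMono u) (hu0 : u 0 = α) (hul : u (Fin.last m) = β) :
    ‖(∫ x in α..β, (Ψ x : ℂ) * Complex.exp (Complex.I * κ * x))
      - ∫ x in α..β, ((((Lagrange.interpolate Finset.univ u (fun j => Ψ (u j))).eval x : ℝ)) : ℂ)
          * Complex.exp (Complex.I * κ * x)‖
      ≤ ((m:ℝ) + 2) * C * (β - α) ^ m / (m.factorial * κ ^ 2) := by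
  obtain ⟨m', rfl⟩ : ∃ m', m = m' + 1 := ⟨m - 1, (Nat.succ_pred_eq_of_pos hm).symm⟩
  have hAB : A < B := lt_of_le_of_lt hAα (lt_of_lt_of_le hαβ hβB)
  have hUD : UniqueDiffOn ℝ (Set.Icc A B) := uniqueDiffOn_Icc hAB
  set D := Set.Icc A B with hDdef
  have hicc : Set.Icc α β ⊆ D := Set.Icc_subset_Icc hAα hβB
  have hioo : Set.Ioo α β ⊆ Set.Ioo A B := Set.Ioo_subset_Ioo hAα hβB
  have hiooD : Set.Ioo A B ⊆ D := Set.Ioo_subset_Icc_self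
  set p := Lagrange.interpolate Finset.univ u (fun j => Ψ (u j)) with hpdef
  set E : ℝ → ℝ := fun x => Ψ x - p.eval x with hEdef
  have hnode : ∀ j, u j ∈ Set.Icc α β := fun j =>
    ⟨hu0 ▸ hu.monotone (Fin.zero_le j), hul ▸ hu.monotone (Fin.le_last j)⟩
  have hip : ∀ j, E (u j) = 0 := by
    intro j
    have h : Polynomial.eval (u j) p = Ψ (u j) :=
      Lagrange.eval_interpolate_at_node _ (Set.injOn_of_injective hu.injective)
        (Finset.mem_univ j)
    show Ψ (u j) - Polynomial.eval (u j) p = 0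
    rw [h, sub_self]
  have hEcd : ContDiffOn ℝ (m' + 1 + 1) E D :=
    hΨ.sub ((polyeval_contDiff p _).contDiffOn)
  -- the (m+1)-st derivative of the interpolation polynomial vanishes
  have hpdeg : p.natDegree < m' + 1 + 1 := by
    rcases eq_or_ne p 0 with h | h
    · rw [h]; simp
    · rw [Polynomial.natDegree_lt_iff_degree_lt h]
      have := Lagrange.degree_interpolate_lt (s := Finset.univ) (v := u)
        (fun j => Ψ (u j)) (Set.injOn_of_injective hu.injective)
      exact lt_of_lt_of_eq this (by simp)
  have hEMd : ∀ y ∈ Set.Ioo α β, |iteratedDeriv (m' + 1 + 1) E y| ≤ C := by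
    intro y hy
    have hy' : y ∈ Set.Ioo A B := hioo hy
    have h1 : iteratedDeriv (m' + 1 + 1) E y = iteratedDerivWithin (m' + 1 + 1) E D y :=
      (idw_Icc_eq hy').symm
    have h2 : iteratedDerivWithin (m' + 1 + 1) E D y
        = iteratedDerivWithin (m' + 1 + 1) Ψ D y
          - iteratedDerivWithin (m' + 1 + 1) (fun x => p.eval x) D y :=
      iteratedDerivWithin_sub (hiooD hy') hUD (by exact_mod_cast hΨ y (hiooD hy')) ((polyeval_contDiff p _).contDiffOn y (hiooD hy'))
    have h3 : iteratedDerivWithin (m' + 1 + 1) (fun x => p.eval x) D y = 0 := by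
      rw [idw_Icc_eq hy', iteratedDeriv_polyeval, Polynomial.iterate_derivative_eq_zero hpdeg]
      simp
    rw [h1, h2, h3, sub_zero]
    exact hC y (hiooD hy')
  set E₁ : ℝ → ℝ := derivWithin E D with hE1def
  set E₂ : ℝ → ℝ := iteratedDerivWithin 2 E D with hE2def
  have hE1c : ContinuousOn E₁ D := hEcd.continuousOn_derivWithin hUD (by norm_cast <;> omega)
  have hE2c : ContinuousOn E₂ D :=
    hEcd.continuousOn_iteratedDerivWithin (by norm_cast <;> omega) hUD
  have hE1d : ∀ x ∈ Set.Ioo A B, HasDerivAt E (E₁ x) x := by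
    intro x hx
    have hdw := (hEcd.differentiableOn (by norm_cast <;> omega)) x (hiooD hx)
    exact hdw.hasDerivWithinAt.hasDerivAt (Icc_mem_nhds hx.1 hx.2)
  have hE1cd : ContDiffOn ℝ (m' + 1) E₁ D := by
    apply hEcd.derivWithin hUD
    norm_cast
  have hE2eq : ∀ x ∈ D, E₂ x = derivWithin E₁ D x := by
    intro x hx
    rw [hE2def, iteratedDerivWithin_succ]
    apply derivWithin_congr
    · exact fun y hy => by rw [iteratedDerivWithin_one]
    · exact by rw [iteratedDerivWithin_one]
  have hE2d : ∀ x ∈ Set.Ioo A B, HasDerivAt E₁ (E₂ x) x := by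
    intro x hx
    have hdw := (hE1cd.differentiableOn (by norm_cast <;> omega)) x (hiooD hx)
    rw [hE2eq x (hiooD hx)]
    exact hdw.hasDerivWithinAt.hasDerivAt (Icc_mem_nhds hx.1 hx.2)
  have hderivE : ∀ x ∈ Set.Ioo A B, deriv E x = E₁ x := fun x hx => (hE1d x hx).deriv
  have hderiv2 : ∀ x ∈ Set.Ioo A B, deriv (deriv E) x = E₂ x := by
    intro x hx
    have hmem : Set.Ioo A B ∈ nhds x := isOpen_Ioo.mem_nhds hx
    have h1 : deriv E =ᶠ[nhds x] E₁ :=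
      Filter.eventuallyEq_of_mem hmem fun y hy => hderivE y hy
    rw [h1.deriv_eq]
    exact (hE2d x hx).deriv
  -- first Rolle step: zeros of deriv E
  have key1 : ∀ i : Fin (m' + 1), ∃ c ∈ Set.Ioo (u i.castSucc) (u i.succ), deriv E c = 0 := by
    intro i
    have hlt : u i.castSucc < u i.succ := hu Fin.castSucc_lt_succ
    have hsubi : Set.Icc (u i.castSucc) (u i.succ) ⊆ D :=
      subset_trans (Set.Icc_subset_Icc (hnode _).1 (hnode _).2) hicc
    exact exists_deriv_eq_zero hlt (hEcd.continuousOn.mono hsubi)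
      ((hip i.castSucc).trans (hip i.succ).symm)
  choose w hwI hw0 using key1
  have hwIoo : ∀ i, w i ∈ Set.Ioo α β := fun i =>
    ⟨lt_of_le_of_lt (hu0 ▸ hu.monotone (Fin.zero_le _)) (hwI i).1,
     lt_of_lt_of_le (hwI i).2 (hul ▸ hu.monotone (Fin.le_last _))⟩
  have hwmono : StrictMono w := by
    intro i j hij
    calc w i < u i.succ := (hwI i).2
      _ ≤ u j.castSucc := hu.monotone (by rw [Fin.le_def]; simpa using hij)
      _ < w j := (hwI j).1
  have hFcd : ContDiffOn ℝ (m' + 1) (deriv E) (Set.Ioo A B) := by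
    apply (hEcd.mono hiooD).deriv_of_isOpen isOpen_Ioo
    norm_cast
  have hFM : ∀ y ∈ Set.Ioo α β, |iteratedDeriv (m' + 1) (deriv E) y| ≤ C := by
    intro y hy
    rw [← iteratedDeriv_succ']
    exact hEMd y hy
  have bnd1 := mv_bound hAα hβB hαβ (m' + 1) (deriv E) hFcd w hwmono hwIoo hw0 C hFM
  have hM1 : ∀ x ∈ Set.Icc α β, |E₁ x| ≤ C * (β - α) ^ (m' + 1) / (m' + 1).factorial := by
    apply bound_of_Ioo hαβ (hE1c.mono hicc)
    intro x hx
    rw [← hderivE x (hioo hx)]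
    exact bnd1 x hx
  -- second Rolle step: zeros of deriv (deriv E)
  have key2 : ∀ i : Fin m', ∃ c ∈ Set.Ioo (w i.castSucc) (w i.succ), deriv (deriv E) c = 0 := by
    intro i
    have hlt : w i.castSucc < w i.succ := hwmono Fin.castSucc_lt_succ
    have hsubi : Set.Icc (w i.castSucc) (w i.succ) ⊆ Set.Ioo α β := fun y hy =>
      ⟨lt_of_lt_of_le (hwIoo _).1 hy.1, lt_of_le_of_lt hy.2 (hwIoo _).2⟩
    have hcont : ContinuousOn (deriv E) (Set.Icc (w i.castSucc) (w i.succ)) := by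
      apply ContinuousOn.congr (hE1c.mono (subset_trans hsubi (subset_trans hioo hiooD)))
      intro y hy
      exact hderivE y (hioo (hsubi hy))
    exact exists_deriv_eq_zero hlt hcont ((hw0 i.castSucc).trans (hw0 i.succ).symm)
  choose v hvI hv0 using key2
  have hvIoo : ∀ i, v i ∈ Set.Ioo α β := fun i =>
    ⟨lt_trans (hwIoo _).1 (hvI i).1, lt_trans (hvI i).2 (hwIoo _).2⟩
  have hvmono : StrictMono v := by
    intro i j hij
    calc v i < w i.succ := (hvI i).2
      _ ≤ w j.castSucc := hwmono.monotone (by rw [Fin.le_def]; simpa using hij)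
      _ < v j := (hvI j).1
  have hF2cd : ContDiffOn ℝ m' (deriv (deriv E)) (Set.Ioo A B) := by
    apply hFcd.deriv_of_isOpen isOpen_Ioo
    norm_cast
  have hF2M : ∀ y ∈ Set.Ioo α β, |iteratedDeriv m' (deriv (deriv E)) y| ≤ C := by
    intro y hy
    rw [← iteratedDeriv_succ', ← iteratedDeriv_succ']
    exact hEMd y hy
  have bnd2 := mv_bound hAα hβB hαβ m' (deriv (deriv E)) hF2cd v hvmono hvIoo hv0 C hF2M
  have hM2 : ∀ x ∈ Set.Icc α β, |E₂ x| ≤ C * (β - α) ^ m' / m'.factorial := by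
    apply bound_of_Ioo hαβ (hE2c.mono hicc)
    intro x hx
    rw [← hderiv2 x (hioo hx)]
    exact bnd2 x hx
  -- put everything together
  have hdiff : (∫ x in α..β, (Ψ x : ℂ) * Complex.exp (Complex.I * κ * x))
      - (∫ x in α..β, ((p.eval x : ℝ) : ℂ) * Complex.exp (Complex.I * κ * x))
      = ∫ x in α..β, (E x : ℂ) * Complex.exp (Complex.I * κ * x) := by
    rw [← intervalIntegral.integral_sub]
    · apply intervalIntegral.integral_congr
      intro x _
      simp only [hEdef]
      push_cast
      ring
    · apply ContinuousOn.intervalIntegrable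
      rw [Set.uIcc_of_le hαβ.le]
      exact (Complex.continuous_ofReal.comp_continuousOn
        ((hΨ.continuousOn).mono hicc)).mul (by fun_prop)
    · apply ContinuousOn.intervalIntegrable
      rw [Set.uIcc_of_le hαβ.le]
      exact (Complex.continuous_ofReal.comp_continuousOn
        ((polyeval_contDiff p 0).continuous.continuousOn)).mul (by fun_prop)
  rw [hdiff]
  have hest := osc_ibp_est hκ hαβ E E₁ E₂
    (hEcd.continuousOn.mono hicc) (hE1c.mono hicc) (hE2c.mono hicc)
    (fun x hx => hE1d x (hioo hx)) (fun x hx => hE2d x (hioo hx))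
    (hu0 ▸ hip 0) (hul ▸ hip (Fin.last (m' + 1)))
    _ _ hM1 hM2
  refine hest.trans ?_
  -- arithmetic
  have hC0 : 0 ≤ C := le_trans (abs_nonneg _) (hC A ⟨le_rfl, hAB.le⟩)
  have hh : (0:ℝ) ≤ β - α := by linarith
  have hfs : (((m' + 1).factorial : ℕ) : ℝ) = ((m' : ℝ) + 1) * m'.factorial := by
    rw [Nat.factorial_succ]; push_cast; ring
  have hfac' : (0:ℝ) < m'.factorial := by exact_mod_cast m'.factorial_pos
  have heq : 2 * (C * (β - α) ^ (m' + 1) / (m' + 1).factorial)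
      + (β - α) * (C * (β - α) ^ m' / m'.factorial)
      = ((m' : ℝ) + 1 + 2) * C * (β - α) ^ (m' + 1) / (m' + 1).factorial := by
    rw [hfs, pow_succ]
    field_simp
    ring
  rw [heq]
  rw [div_div (((m':ℝ) + 1 + 2) * C * (β - α) ^ (m' + 1)) _ (κ^2)]
  apply le_of_eq
  congr 1
  push_cast
  ring


/-- Oscillatory integral `∫_a^b f(x) e^{iκ g(x)} dx`. -/
def oscInt (κ : ℝ) (f g : ℝ → ℝ) (a b : ℝ) : ℂ :=
  ∫ x in a..b, (f x : ℂ) * Complex.exp (Complex.I * κ * g x)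

/-- Moment-free Filon rule: `∫_{g(t_0)}^{g(t_m)} p_m(x) e^{iκx} dx` where `p_m` is the
Lagrange polynomial interpolating `Ψ` at the points `g(t_j)`. -/
def filonQ (κ : ℝ) (m : ℕ) (g : ℝ → ℝ) (Ψ : ℝ → ℝ) (t : Fin (m+1) → ℝ) : ℂ :=
  ∫ x in (g (t 0))..(g (t (Fin.last m))),
    (((Lagrange.interpolate Finset.univ (fun j => g (t j)) (fun j => Ψ (g (t j)))).eval x : ℝ) : ℂ)
      * Complex.exp (Complex.I * κ * x)

/-- Composite moment-free Filon rule `Q_{N,κ,m}^{[a,b]}[f,g] = Σ_{l=1}^N Q_{κ,m}^{[y_{l-1},y_l]}`,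
with the nodes on each subinterval supplied by `t`. -/
def compFilonQ (κ : ℝ) (m N : ℕ) (g : ℝ → ℝ) (Ψ : ℝ → ℝ)
    (t : Fin N → Fin (m+1) → ℝ) : ℂ :=
  ∑ l : Fin N, filonQ κ m g Ψ (t l)

/-- Admissible node families for the composite rule on `[a,b]` with `N` equal subintervals:
on the `l`-th subinterval `[y_l, y_{l+1}]` (`y_l = a + (b-a) l/N`) the `m+1` strictly
increasing nodes include both endpoints. -/
def FilonNodes (a b : ℝ) (m N : ℕ) (t : Fin N → Fin (m+1) → ℝ) : Prop :=
  ∀ l : Fin N, StrictMono (t l) ∧ t l 0 = a + (b-a)*(l:ℝ)/(N:ℝ) ∧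
    t l (Fin.last m) = a + (b-a)*((l:ℝ)+1)/(N:ℝ)

/-- error bound for the composite moment-free Filon rule on `[a,b] ⊆ [0,1]`. -/
theorem stmt_0 (a b : ℝ) (hab : a < b) (hsub : Set.Icc a b ⊆ Set.Icc (0:ℝ) 1)
    (κ : ℝ) (hκ : 0 < κ) (m N : ℕ) (hm : 1 ≤ m) (hN : 1 ≤ N)
    (f g Ψ : ℝ → ℝ) (σ C : ℝ)
    (hf : ContinuousOn f (Set.Icc a b))
    (hg : ContDiffOn ℝ 1 g (Set.Icc a b))
    (hg' : ∀ x ∈ Set.Icc a b, 0 < derivWithin g (Set.Icc a b) x)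
    (hσ : IsGreatest ((fun x => |derivWithin g (Set.Icc a b) x|) '' Set.Icc a b) σ)
    (hΨdef : ∀ x ∈ Set.Icc a b, Ψ (g x) = f x / derivWithin g (Set.Icc a b) x)
    (hΨ : ContDiffOn ℝ (m+1) Ψ (Set.Icc (g a) (g b)))
    (hC : ∀ x ∈ Set.Icc (g a) (g b),
      |iteratedDerivWithin (m+1) Ψ (Set.Icc (g a) (g b)) x| ≤ C)
    (t : Fin N → Fin (m+1) → ℝ) (ht : FilonNodes a b m N t) :
    ‖oscInt κ f g a b - compFilonQ κ m N g Ψ t‖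
      ≤ 3*((m:ℝ)+1) / ((m.factorial : ℝ) * κ^2 * (N:ℝ)^(m-1)) * C * σ^m * (b-a)^m
    ∧ (N = ⌈σ⌉₊ →
        ‖oscInt κ f g a b - compFilonQ κ m N g Ψ t‖
          ≤ 3*((m:ℝ)+1) / ((m.factorial : ℝ) * κ^2) * C * σ * (b-a)^m) := by
  classical
  have hUab : UniqueDiffOn ℝ (Set.Icc a b) := uniqueDiffOn_Icc hab
  have hgc : ContinuousOn g (Set.Icc a b) := hg.continuousOn
  set g' : ℝ → ℝ := derivWithin g (Set.Icc a b) with hg'def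
  have hgdiff : ∀ x ∈ Set.Icc a b, HasDerivWithinAt g (g' x) (Set.Icc a b) x := by
    intro x hx
    exact ((hg.differentiableOn one_ne_zero) x hx).hasDerivWithinAt
  have hgdAt : ∀ x ∈ Set.Ioo a b, HasDerivAt g (g' x) x := by
    intro x hx
    exact (hgdiff x (Set.Ioo_subset_Icc_self hx)).hasDerivAt (Icc_mem_nhds hx.1 hx.2)
  have hgsm : StrictMonoOn g (Set.Icc a b) := by
    apply strictMonoOn_of_deriv_pos (convex_Icc a b) hgc
    intro x hx
    rw [interior_Icc] at hx
    rw [(hgdAt x hx).deriv]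
    exact hg' x (Set.Ioo_subset_Icc_self hx)
  have hAB : g a < g b := hgsm ⟨le_rfl, hab.le⟩ ⟨hab.le, le_rfl⟩ hab
  have hσa : |g' a| ≤ σ := hσ.2 ⟨a, ⟨le_rfl, hab.le⟩, rfl⟩
  have hσpos : 0 < σ :=
    lt_of_lt_of_le (abs_pos.mpr (hg' a ⟨le_rfl, hab.le⟩).ne') hσa
  have hσbound : ∀ x ∈ Set.Icc a b, |g' x| ≤ σ := fun x hx => hσ.2 ⟨x, hx, rfl⟩
  have hC0 : 0 ≤ C := le_trans (abs_nonneg _) (hC (g a) ⟨le_rfl, hAB.le⟩)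
  have hNpos : (0:ℝ) < N := by exact_mod_cast hN
  have hba : (0:ℝ) < b - a := by linarith
  -- the grid
  set y : ℕ → ℝ := fun k => a + (b-a)*k/N with hydef
  have hy0 : y 0 = a := by simp [hydef]
  have hyN : y N = b := by
    simp only [hydef]
    field_simp
    ring
  have hyd : ∀ k : ℕ, y (k+1) - y k = (b-a)/N := by
    intro k
    simp only [hydef]
    push_cast
    field_simp
    ring
  have ht0 : ∀ l : Fin N, t l 0 = y l := by
    intro l
    rw [(ht l).2.1]
  have htl : ∀ l : Fin N, t l (Fin.last m) = y ((l:ℕ)+1) := by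
    intro l
    rw [(ht l).2.2]
    simp only [hydef]
    push_cast
    ring
  clear_value y
  have hylt : ∀ k : ℕ, y k < y (k+1) := by
    intro k
    have h1 := hyd k
    have h2 : 0 < (b-a)/N := by positivity
    linarith
  have hymono : Monotone y := monotone_nat_of_le_succ fun k => (hylt k).le
  have hyab : ∀ k, k ≤ N → y k ∈ Set.Icc a b := fun k hk =>
    ⟨hy0 ▸ hymono (Nat.zero_le k), hyN ▸ hymono hk⟩
  -- continuous integrand in u-space
  set Φ : ℝ → ℂ := fun u => (Ψ u : ℂ) * Complex.exp (Complex.I * κ * u) with hΦdef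
  have hΦc : ContinuousOn Φ (Set.Icc (g a) (g b)) := by
    apply ContinuousOn.mul
    · exact Complex.continuous_ofReal.comp_continuousOn hΨ.continuousOn
    · fun_prop
  -- change of variables
  have hiosc : oscInt κ f g a b = ∫ u in (g a)..(g b), Φ u := by
    rw [oscInt]
    have huIcc : Set.uIcc a b = Set.Icc a b := Set.uIcc_of_le hab.le
    have hmin : a ⊓ b = a := min_eq_left hab.le
    have hmax : a ⊔ b = b := max_eq_right hab.le
    have himg : g '' Set.uIcc a b ⊆ Set.Icc (g a) (g b) := by
      rw [huIcc]
      rintro _ ⟨x, hx, rfl⟩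
      exact ⟨hgsm.monotoneOn ⟨le_rfl, hab.le⟩ hx hx.1, hgsm.monotoneOn hx ⟨hab.le, le_rfl⟩ hx.2⟩
    have hcv := intervalIntegral.integral_comp_smul_deriv''
      (f := g) (f' := g') (g := Φ)
      (by rw [huIcc]; exact hgc)
      (by
        intro x hx
        rw [hmin, hmax] at hx
        exact (hgdAt x hx).hasDerivWithinAt)
      (by rw [huIcc]; exact hg.continuousOn_derivWithin hUab le_rfl)
      (hΦc.mono himg)
    rw [← hcv]
    apply intervalIntegral.integral_congr
    intro x hx
    rw [huIcc] at hx
    have hne : g' x ≠ 0 := (hg' x hx).ne'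
    have hnec : (g' x : ℂ) ≠ 0 := Complex.ofReal_ne_zero.mpr hne
    show (f x : ℂ) * Complex.exp (Complex.I * κ * g x) = g' x • Φ (g x)
    rw [hΦdef]
    simp only [Complex.real_smul]
    rw [hΨdef x hx, Complex.ofReal_div]
    field_simp
  -- splitting into subintervals
  have hint : ∀ k, k < N → IntervalIntegrable Φ volume (g (y k)) (g (y (k+1))) := by
    intro k hk
    apply ContinuousOn.intervalIntegrable
    have h1 : y k ∈ Set.Icc a b := hyab k hk.le
    have h2 : y (k+1) ∈ Set.Icc a b := hyab (k+1) hk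
    have hle : g (y k) ≤ g (y (k+1)) := (hgsm h1 h2 (hylt k)).le
    rw [Set.uIcc_of_le hle]
    apply hΦc.mono
    apply Set.Icc_subset_Icc
    · exact hgsm.monotoneOn ⟨le_rfl, hab.le⟩ h1 h1.1
    · exact hgsm.monotoneOn h2 ⟨hab.le, le_rfl⟩ h2.2
  have hsplit : (∫ u in (g a)..(g b), Φ u)
      = ∑ k ∈ Finset.range N, ∫ u in (g (y k))..(g (y (k+1))), Φ u := by
    rw [intervalIntegral.sum_integral_adjacent_intervals hint, hy0, hyN]
  -- node endpoints
  have htmem : ∀ (l : Fin N) (j : Fin (m+1)), t l j ∈ Set.Icc a b := by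
    intro l j
    have h1 : y l ≤ t l j := by
      rw [← ht0 l]; exact (ht l).1.monotone (Fin.zero_le j)
    have h2 : t l j ≤ y ((l:ℕ)+1) := by
      rw [← htl l]; exact (ht l).1.monotone (Fin.le_last j)
    have h3 := hyab l l.2.le
    have h4 := hyab ((l:ℕ)+1) l.2
    exact ⟨le_trans h3.1 h1, le_trans h2 h4.2⟩
  -- rewrite the difference as a sum
  have hQ : oscInt κ f g a b - compFilonQ κ m N g Ψ t
      = ∑ l : Fin N, ((∫ u in (g (y l))..(g (y ((l:ℕ)+1))), Φ u) - filonQ κ m g Ψ (t l)) := by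
    rw [hiosc, hsplit, compFilonQ, Finset.sum_sub_distrib]
    congr 1
    rw [← Fin.sum_univ_eq_sum_range (fun k => ∫ u in (g (y k))..(g (y (k+1))), Φ u) N]
  rw [hQ]
  -- per-term estimate
  have hterm : ∀ l : Fin N,
      ‖(∫ u in (g (y l))..(g (y ((l:ℕ)+1))), Φ u) - filonQ κ m g Ψ (t l)‖
        ≤ ((m:ℝ) + 2) * C * (σ * (b-a) / N) ^ m / (m.factorial * κ ^ 2) := by
    intro l
    have hyl := hyab l l.2.le
    have hyl1 := hyab ((l:ℕ)+1) l.2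
    have hαβ : g (y l) < g (y ((l:ℕ)+1)) := hgsm hyl hyl1 (hylt l)
    have hAα : g a ≤ g (y l) := hgsm.monotoneOn ⟨le_rfl, hab.le⟩ hyl hyl.1
    have hβB : g (y ((l:ℕ)+1)) ≤ g b := hgsm.monotoneOn hyl1 ⟨hab.le, le_rfl⟩ hyl1.2
    have husm : StrictMono (fun j => g (t l j)) := fun i j hij =>
      hgsm (htmem l i) (htmem l j) ((ht l).1 hij)
    have hu0 : g (t l 0) = g (y l) := congrArg g (ht0 l)
    have hul : g (t l (Fin.last m)) = g (y ((l:ℕ)+1)) := congrArg g (htl l)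
    have hse := sub_est hκ hm hAα hαβ hβB Ψ hΨ C hC (fun j => g (t l j)) husm hu0 hul
    have hQl : filonQ κ m g Ψ (t l)
        = ∫ x in (g (y l))..(g (y ((l:ℕ)+1))),
            (((Lagrange.interpolate Finset.univ (fun j => g (t l j))
              (fun j => Ψ (g (t l j)))).eval x : ℝ) : ℂ) * Complex.exp (Complex.I * κ * x) := by
      rw [filonQ, hu0, hul]
    rw [hQl]
    refine hse.trans ?_
    -- bound the subinterval length
    have hlen : g (y ((l:ℕ)+1)) - g (y l) ≤ σ * (b-a) / N := by
      have := Convex.norm_image_sub_le_of_norm_hasDerivWithin_le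
        hgdiff hσbound (convex_Icc a b) hyl hyl1
      rw [Real.norm_eq_abs, Real.norm_eq_abs] at this
      have h1 : |g (y ((l:ℕ)+1)) - g (y l)| = g (y ((l:ℕ)+1)) - g (y l) :=
        abs_of_nonneg (by linarith)
      have h2 : |y ((l:ℕ)+1) - y l| = (b-a)/N := by
        rw [hyd l, abs_of_nonneg (by positivity)]
      rw [h1, h2] at this
      calc g (y ((l:ℕ)+1)) - g (y l) ≤ σ * ((b-a)/N) := this
        _ = σ * (b-a) / N := by ring
    have hlen0 : (0:ℝ) ≤ g (y ((l:ℕ)+1)) - g (y l) := by linarith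
    gcongr
  -- sum up
  have htotal : ‖∑ l : Fin N,
        ((∫ u in (g (y l))..(g (y ((l:ℕ)+1))), Φ u) - filonQ κ m g Ψ (t l))‖
      ≤ N * (((m:ℝ) + 2) * C * (σ * (b-a) / N) ^ m / (m.factorial * κ ^ 2)) := by
    calc ‖_‖ ≤ ∑ l : Fin N,
          ‖(∫ u in (g (y l))..(g (y ((l:ℕ)+1))), Φ u) - filonQ κ m g Ψ (t l)‖ :=
        norm_sum_le _ _
      _ ≤ ∑ _l : Fin N, ((m:ℝ) + 2) * C * (σ * (b-a) / N) ^ m / (m.factorial * κ ^ 2) :=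
        Finset.sum_le_sum fun l _ => hterm l
      _ = N * (((m:ℝ) + 2) * C * (σ * (b-a) / N) ^ m / (m.factorial * κ ^ 2)) := by
        rw [Finset.sum_const, Finset.card_univ, Fintype.card_fin, nsmul_eq_mul]
  -- final arithmetic
  have hfac : (0:ℝ) < m.factorial := by exact_mod_cast m.factorial_pos
  have hNm : (N:ℝ)^m = (N:ℝ)^(m-1) * N := by
    rw [← pow_succ]
    congr 1
    omega
  have hden1 : ((m.factorial : ℝ) * κ^2 * (N:ℝ)^(m-1)) ≠ 0 := by positivity
  have hden2 : ((m.factorial : ℝ) * κ^2) ≠ 0 := by positivity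
  have hNm1 : ((N:ℝ))^(m-1) ≠ 0 := by positivity
  have hmain : (N:ℝ) * (((m:ℝ) + 2) * C * (σ * (b-a) / N) ^ m / (m.factorial * κ ^ 2))
      ≤ 3*((m:ℝ)+1) / ((m.factorial : ℝ) * κ^2 * (N:ℝ)^(m-1)) * C * σ^m * (b-a)^m := by
    rw [div_pow, mul_pow]
    rw [show (N:ℝ) * (((m:ℝ) + 2) * C * (σ^m * (b-a)^m / (N:ℝ)^m) / (m.factorial * κ ^ 2))
        = ((m:ℝ) + 2) * C * σ^m * (b-a)^m * ((N:ℝ) / (N:ℝ)^m) / (m.factorial * κ ^ 2) by ring]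
    rw [hNm]
    rw [show (N:ℝ) / ((N:ℝ)^(m-1) * N) = 1 / (N:ℝ)^(m-1) by
      field_simp]
    rw [show 3*((m:ℝ)+1) / ((m.factorial : ℝ) * κ^2 * (N:ℝ)^(m-1)) * C * σ^m * (b-a)^m
        = (3*((m:ℝ)+1)) * C * σ^m * (b-a)^m * (1 / (N:ℝ)^(m-1)) / (m.factorial * κ^2) by
      field_simp
      try ring
      try (left; trivial)]
    gcongr <;> first
      | positivity
      | linarith
  have hbound1 := htotal.trans hmain
  refine ⟨hbound1, ?_⟩
  intro hNσ
  refine hbound1.trans ?_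
  -- second bound
  have hNσ' : σ ≤ N := by
    rw [hNσ]
    exact Nat.le_ceil σ
  have hσm : σ^m / (N:ℝ)^(m-1) ≤ σ := by
    have h1 : σ^m = σ^(m-1) * σ := by
      rw [← pow_succ]
      congr 1
      omega
    have h2 : σ^(m-1) ≤ (N:ℝ)^(m-1) := pow_le_pow_left₀ hσpos.le hNσ' _
    rw [h1, div_le_iff₀ (by positivity)]
    calc σ^(m-1) * σ ≤ (N:ℝ)^(m-1) * σ := by
          apply mul_le_mul_of_nonneg_right h2 hσpos.le
      _ = σ * (N:ℝ)^(m-1) := by ring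
  calc 3*((m:ℝ)+1) / ((m.factorial : ℝ) * κ^2 * (N:ℝ)^(m-1)) * C * σ^m * (b-a)^m
      = 3*((m:ℝ)+1) / ((m.factorial : ℝ) * κ^2) * C * (σ^m / (N:ℝ)^(m-1)) * (b-a)^m := by
        field_simp
        try ring
    _ ≤ 3*((m:ℝ)+1) / ((m.factorial : ℝ) * κ^2) * C * σ * (b-a)^m := by
        gcongr <;> positivity
end
end

section
/- Let κ > 1, let n ∈ ℕ with n > 1, let m ∈ ℕ, and set η := max(1/κ, 1 − κ^{−1/(n−1)}). Suppose f, g ∈ C²([0,1]), g is strictly increasing with g'(x) > 0 on [0,1] and g''(x) ≠ 0 on (0,1), σ := max_{x∈[0,1]} |g'(x)|, and Ψ := (f/g') ∘ g^{-1} ∈ C^{m+1}([g(0), g(1)]). Let x_0 = 0 and x_j = κ^{(j−1)/(n−1)−1} for j = 1, …, n, and set N_j := ⌈max(|g'(x_{j−1})|, |g'(x_j)|)⌉. Then for the quadrature Q_{κ,n,m}[f,g] := Σ_{j=1}^n Q_{N_j,κ,m}^{[x_{j−1},x_j]}[f,g] one has |∫_0^1 f(x) e^{iκ g(x)} dx −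 Q_{κ,n,m}[f,g]| ≤ (3(m+1)/(m! κ²)) ‖Ψ^{(m+1)}‖_∞ σ η^{m−1}. -/
open scoped BigOperators
open MeasureTheory

noncomputable section

section AuxLemmas
open Set Polynomial intervalIntegral Topology

/-- One Rolle step: from k+1 zeros of φ get k zeros of φ' strictly inside. -/
lemma rolle_step {φ φ' : ℝ → ℝ} {c d : ℝ} {k : ℕ} (Z : Finset ℝ)
    (hcard : Z.card = k + 1 + 1) (hsub : ↑Z ⊆ Set.Icc c d)
    (hc : ContinuousOn φ (Set.Icc c d))
    (hd : ∀ x ∈ Set.Ioo c d, HasDerivAt φ (φ' x) x)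
    (h0 : ∀ z ∈ Z, φ z = 0) :
    ∃ Z' : Finset ℝ, Z'.card = k + 1 ∧ ↑Z' ⊆ Set.Ioo c d ∧ ∀ z ∈ Z', φ' z = 0 := by
  set e := Z.orderIsoOfFin hcard with he
  set z : Fin (k+2) → ℝ := fun i => (e i : ℝ) with hzdef
  have hzmono : StrictMono z := fun i j hij => e.strictMono hij
  have hzmem : ∀ i, z i ∈ Set.Icc c d := fun i => hsub (e i).2
  have hstep : ∀ i : Fin (k+1), ∃ w ∈ Set.Ioo (z i.castSucc) (z i.succ), φ' w = 0 := by
    intro i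
    have hlt : z i.castSucc < z i.succ := hzmono (Fin.castSucc_lt_succ : i.castSucc < i.succ)
    refine exists_hasDerivAt_eq_zero hlt (hc.mono ?_) ?_ ?_
    · exact Set.Icc_subset_Icc (hzmem _).1 (hzmem _).2
    · rw [h0 _ (e i.castSucc).2, h0 _ (e i.succ).2]
    · intro x hx
      refine hd x ⟨lt_of_le_of_lt (hzmem i.castSucc).1 hx.1, lt_of_lt_of_le hx.2 (hzmem i.succ).2⟩
  choose w hw hw0 using hstep
  have hwmono : StrictMono w := by
    intro i j hij
    calc w i < z i.succ := (hw i).2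
    _ ≤ z j.castSucc := hzmono.monotone (by
        rw [Fin.succ_le_castSucc_iff]; exact hij)
    _ < w j := (hw j).1
  refine ⟨Finset.image w Finset.univ, ?_, ?_, ?_⟩
  · rw [Finset.card_image_of_injective _ hwmono.injective, Finset.card_univ, Fintype.card_fin]
  · intro u hu
    simp only [Finset.coe_image, Set.mem_image] at hu
    obtain ⟨i, -, rfl⟩ := hu
    exact ⟨lt_of_le_of_lt (hzmem i.castSucc).1 (hw i).1,
      lt_of_lt_of_le (hw i).2 (hzmem i.succ).2⟩
  · intro u hu
    simp only [Finset.mem_image] at hu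
    obtain ⟨i, -, rfl⟩ := hu
    exact hw0 i

/-- Iterated Rolle. -/
lemma rolle_iter : ∀ (k : ℕ) (F : ℕ → ℝ → ℝ) (c d : ℝ) (Z : Finset ℝ),
    Z.card = k + 1 → ↑Z ⊆ Set.Icc c d → ContinuousOn (F 0) (Set.Icc c d) →
    (∀ s < k, ∀ x ∈ Set.Ioo c d, HasDerivAt (F s) (F (s+1) x) x) →
    (∀ z ∈ Z, F 0 z = 0) → ∃ ξ ∈ Set.Icc c d, F k ξ = 0 := by
  intro k
  induction k with
  | zero =>
    intro F c d Z hcard hsub _ _ h0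
    obtain ⟨z, hz⟩ := Finset.card_eq_one.mp hcard
    exact ⟨z, hsub (by simp [hz]), h0 z (by simp [hz])⟩
  | succ k ih =>
    intro F c d Z hcard hsub hc hd h0
    obtain ⟨Z', hcard', hsub', h0'⟩ := rolle_step (k := k) Z hcard hsub hc
      (fun x hx => hd 0 (Nat.succ_pos k) x hx) h0
    -- Z' has k+1 zeros of F 1 inside Ioo c d
    have hZ'ne : Z'.Nonempty := Finset.card_pos.mp (by omega)
    obtain ⟨c', hc'min⟩ := Z'.exists_min_image id hZ'ne
    obtain ⟨d', hd'max⟩ := Z'.exists_max_image id hZ'ne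
    have hc'Ioo : c' ∈ Set.Ioo c d := hsub' hc'min.1
    have hd'Ioo : d' ∈ Set.Ioo c d := hsub' hd'max.1
    have hsubIcc : Set.Icc c' d' ⊆ Set.Ioo c d :=
      Set.Icc_subset_Ioo hc'Ioo.1 hd'Ioo.2
    have hZ'sub : ↑Z' ⊆ Set.Icc c' d' := fun u hu =>
      ⟨hc'min.2 u hu, hd'max.2 u hu⟩
    rcases Nat.eq_zero_or_pos k with rfl | hk
    · obtain ⟨ξ, hξ⟩ := hZ'ne
      exact ⟨ξ, Set.Ioo_subset_Icc_self (hsub' hξ), h0' ξ hξ⟩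
    obtain ⟨ξ, hξ, hξ0⟩ := ih (fun s => F (s+1)) c' d' Z' hcard' hZ'sub
      (fun x hx => ((hd 1 (by omega) x (hsubIcc hx)).continuousAt).continuousWithinAt)
      (fun s hs x hx => hd (s+1) (by omega) x (hsubIcc (Set.mem_Icc.mpr ⟨hx.1.le, hx.2.le⟩)))
      h0'
    exact ⟨ξ, Set.Ioo_subset_Icc_self (hsubIcc hξ), hξ0⟩

/-- Interpolation-remainder-type bound: a function with `j` distinct zeros in `[c,d]` whose
`j`-th derivative is bounded by `M` satisfies `|φ| ≤ M (d-c)^j / j!`. -/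
lemma remainder_bound (j : ℕ) (F : ℕ → ℝ → ℝ) (c d M : ℝ) (hcd : c ≤ d)
    (Z : Finset ℝ) (hcard : Z.card = j) (hsub : ↑Z ⊆ Set.Icc c d)
    (hc : ContinuousOn (F 0) (Set.Icc c d))
    (hd : ∀ s < j, ∀ x ∈ Set.Ioo c d, HasDerivAt (F s) (F (s+1) x) x)
    (h0 : ∀ z ∈ Z, F 0 z = 0)
    (hM : ∀ x ∈ Set.Icc c d, |F j x| ≤ M) :
    ∀ y ∈ Set.Icc c d, |F 0 y| ≤ M * (d - c)^j / j.factorial := by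
  intro y hy
  have hM0 : 0 ≤ M := (abs_nonneg _).trans (hM y hy)
  have hpow0 : (0:ℝ) ≤ (d - c)^j := pow_nonneg (by linarith [hy.1, hy.2]) j
  have hRHS0 : 0 ≤ M * (d - c)^j / j.factorial :=
    div_nonneg (mul_nonneg hM0 hpow0) (Nat.cast_nonneg _)
  by_cases hyZ : y ∈ Z
  · rw [h0 y hyZ, abs_zero]; exact hRHS0
  -- auxiliary polynomial W = ∏_{i ∈ Z} (X - C i)
  set W : Polynomial ℝ := ∏ i ∈ Z, (X - C i) with hW
  have hWmonic : W.Monic := monic_prod_of_monic _ _ (fun i _ => monic_X_sub_C i)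
  have hWdeg : W.natDegree = j := by
    rw [hW, natDegree_prod _ _ (fun i _ => X_sub_C_ne_zero i)]
    simp [hcard]
  have hWj : derivative^[j] W = C ((j.factorial : ℝ)) := by
    have hdeg0 : (derivative^[j] W).natDegree = 0 := by
      have := natDegree_iterate_derivative W j
      omega
    have := Polynomial.eq_C_of_natDegree_le_zero hdeg0.le
    rw [this, coeff_iterate_derivative]
    simp [hWdeg ▸ hWmonic.coeff_natDegree, Nat.descFactorial_self]
  have hWeval : ∀ u : ℝ, W.eval u = ∏ i ∈ Z, (u - i) := by
    intro u; rw [hW, eval_prod]; simp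
  -- the auxiliary function chain
  set H : ℕ → ℝ → ℝ := fun s u => F s u * W.eval y - F 0 y * (derivative^[s] W).eval u with hH
  have hH0 : ∀ z ∈ insert y Z, H 0 z = 0 := by
    intro z hz
    rcases Finset.mem_insert.mp hz with rfl | hz
    · simp [hH]
    · have : W.eval z = 0 := by
        rw [hWeval]
        exact Finset.prod_eq_zero hz (by ring)
      simp [hH, h0 z hz, this]
  obtain ⟨ξ, hξmem, hξ⟩ := rolle_iter j H c d (insert y Z)
    (by rw [Finset.card_insert_of_notMem hyZ, hcard])
    (by intro u hu
        rcases Finset.mem_insert.mp hu with rfl | hu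
        exacts [hy, hsub hu])
    (by apply ContinuousOn.sub
        · exact hc.mul continuousOn_const
        · exact continuousOn_const.mul (Polynomial.continuous _).continuousOn)
    (by intro s hs x hx
        exact ((hd s hs x hx).mul_const _).sub
          ((Polynomial.hasDerivAt _ x).const_mul _ |>.congr_deriv
            (by rw [Function.iterate_succ_apply'])))
    hH0
  -- from H j ξ = 0 deduce the bound
  have hkey : F j ξ * W.eval y = F 0 y * (j.factorial : ℝ) := by
    have : F j ξ * W.eval y - F 0 y * (derivative^[j] W).eval ξ = 0 := hξ
    rw [hWj] at this
    simp at this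
    linarith [this]
  have hWy : |W.eval y| ≤ (d - c)^j := by
    rw [hWeval, ← hcard, Finset.abs_prod]
    refine (Finset.prod_le_prod (fun i _ => abs_nonneg _) (fun i hi => ?_)).trans_eq
      (Finset.prod_const _)
    have hiI := hsub hi
    rw [abs_le]
    constructor <;> [linarith [hy.1, (hsub hi).2]; linarith [hy.2, (hsub hi).1]]
  have hfac : (0:ℝ) < (j.factorial : ℝ) := by exact_mod_cast j.factorial_pos
  rw [le_div_iff₀ hfac]
  calc |F 0 y| * (j.factorial : ℝ) = |F 0 y * (j.factorial : ℝ)| := by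
        rw [abs_mul, abs_of_pos hfac]
    _ = |F j ξ| * |W.eval y| := by rw [← abs_mul, hkey]
    _ ≤ M * (d - c)^j := mul_le_mul (hM ξ hξmem) hWy (abs_nonneg _) hM0


lemma rolle_step' {φ φ' : ℝ → ℝ} {c d : ℝ} {k : ℕ} (Z : Finset ℝ)
    (hcard : Z.card = k + 1) (hsub : ↑Z ⊆ Set.Icc c d)
    (hc : ContinuousOn φ (Set.Icc c d))
    (hd : ∀ x ∈ Set.Ioo c d, HasDerivAt φ (φ' x) x)
    (h0 : ∀ z ∈ Z, φ z = 0) :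
    ∃ Z' : Finset ℝ, Z'.card = k ∧ ↑Z' ⊆ Set.Ioo c d ∧ ∀ z ∈ Z', φ' z = 0 := by
  rcases Nat.eq_zero_or_pos k with rfl | hk
  · exact ⟨∅, by simp, by simp, by simp⟩
  · obtain ⟨k', rfl⟩ : ∃ k', k = k' + 1 := ⟨k - 1, by omega⟩
    exact rolle_step Z hcard hsub hc hd h0

noncomputable def Aexp (κ : ℝ) : ℝ → ℂ := fun y => Complex.exp (Complex.I * κ * y)

lemma Aexp_hasDerivAt (κ : ℝ) (y : ℝ) :
    HasDerivAt (Aexp κ) (Complex.I * κ * Aexp κ y) y := by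
  have h1 : HasDerivAt (fun y : ℝ => Complex.I * κ * (y:ℂ)) (Complex.I * κ) y := by
    simpa using (Complex.ofRealCLM.hasDerivAt (x := y)).const_mul (Complex.I * (κ:ℂ))
  have h2 := h1.cexp
  unfold Aexp
  convert h2 using 1
  ring

lemma Aexp_abs (κ : ℝ) (y : ℝ) : ‖Aexp κ y‖ = 1 := by
  simp [Aexp, Complex.norm_exp]

lemma Aexp_cont (κ : ℝ) : Continuous (Aexp κ) := by
  unfold Aexp; fun_prop

lemma Iκ_ne_zero {κ : ℝ} (hκ0 : 0 < κ) : Complex.I * (κ:ℂ) ≠ 0 :=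
  mul_ne_zero Complex.I_ne_zero (by exact_mod_cast hκ0.ne')

/-- One integration by parts for `∫ u·e^{iκy}` with `u' = v`. -/
lemma ibp_step {κ : ℝ} (hκ0 : 0 < κ) {c d : ℝ} (hcd : c ≤ d) {u v : ℝ → ℝ}
    (hu : ContinuousOn u (Set.Icc c d)) (hv : ContinuousOn v (Set.Icc c d))
    (hud : ∀ x ∈ Set.Ioo c d, HasDerivAt u (v x) x) :
    ∫ y in c..d, (u y : ℂ) * Aexp κ y
      = ((u d : ℂ) * Aexp κ d - (u c : ℂ) * Aexp κ c) * (Complex.I * κ)⁻¹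
        - (Complex.I * κ)⁻¹ * ∫ y in c..d, (v y : ℂ) * Aexp κ y := by
  have hne := Iκ_ne_zero hκ0
  set c1 : ℂ := (Complex.I * κ)⁻¹ with hc1
  set Φ : ℝ → ℂ := fun y => (u y : ℂ) * Aexp κ y * c1 with hΦ
  have hΦc : ContinuousOn Φ (Set.Icc c d) := by
    apply ContinuousOn.mul _ continuousOn_const
    exact (Complex.continuous_ofReal.comp_continuousOn hu).mul (Aexp_cont κ).continuousOn
  have hΦd : ∀ x ∈ Set.Ioo c d,
      HasDerivWithinAt Φ ((v x : ℂ) * Aexp κ x * c1 + (u x : ℂ) * Aexp κ x) (Set.Ioi x) x := by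
    intro x hx
    have h := (((hud x hx).ofReal_comp).mul (Aexp_hasDerivAt κ x)).mul_const c1
    have heq : ((v x : ℂ) * Aexp κ x + (u x : ℂ) * (Complex.I * κ * Aexp κ x)) * c1
        = (v x : ℂ) * Aexp κ x * c1 + (u x : ℂ) * Aexp κ x := by
      rw [hc1]; linear_combination (↑(u x) * Aexp κ x) * mul_inv_cancel₀ hne
    exact (heq ▸ h).hasDerivWithinAt
  have hint : IntervalIntegrable (fun y => (v y : ℂ) * Aexp κ y * c1 + (u y : ℂ) * Aexp κ y)
      MeasureTheory.volume c d := by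
    apply ContinuousOn.intervalIntegrable
    rw [Set.uIcc_of_le hcd]
    apply ContinuousOn.add
    · exact ((Complex.continuous_ofReal.comp_continuousOn hv).mul
        (Aexp_cont κ).continuousOn).mul continuousOn_const
    · exact (Complex.continuous_ofReal.comp_continuousOn hu).mul (Aexp_cont κ).continuousOn
  have hftc := integral_eq_sub_of_hasDeriv_right_of_le hcd hΦc hΦd hint
  have hsplit : (∫ y in c..d, ((v y : ℂ) * Aexp κ y * c1 + (u y : ℂ) * Aexp κ y))
      = (∫ y in c..d, (v y : ℂ) * Aexp κ y) * c1 + ∫ y in c..d, (u y : ℂ) * Aexp κ y := by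
    rw [intervalIntegral.integral_add, intervalIntegral.integral_mul_const]
    · apply ContinuousOn.intervalIntegrable
      rw [Set.uIcc_of_le hcd]
      exact ((Complex.continuous_ofReal.comp_continuousOn hv).mul
        (Aexp_cont κ).continuousOn).mul continuousOn_const
    · apply ContinuousOn.intervalIntegrable
      rw [Set.uIcc_of_le hcd]
      exact (Complex.continuous_ofReal.comp_continuousOn hu).mul (Aexp_cont κ).continuousOn
  rw [hsplit] at hftc
  have : Φ d - Φ c = ((u d : ℂ) * Aexp κ d - (u c : ℂ) * Aexp κ c) * c1 := by
    rw [hΦ]; ring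
  rw [this] at hftc
  linear_combination hftc

lemma cell_bound {κ : ℝ} (hκ : 1 < κ) {m : ℕ} (hm : 1 ≤ m) {G0 G1 : ℝ} {Ψ : ℝ → ℝ} {C : ℝ}
    (hΨ : ContDiffOn ℝ (m+1) Ψ (Set.Icc G0 G1))
    (hC : ∀ x ∈ Set.Icc G0 G1, |iteratedDerivWithin (m+1) Ψ (Set.Icc G0 G1) x| ≤ C)
    (z : Fin (m+1) → ℝ) (hz : StrictMono z) (hz0 : G0 ≤ z 0) (hzl : z (Fin.last m) ≤ G1) :
    ‖(∫ x in (z 0)..(z (Fin.last m)), (Ψ x : ℂ) * Aexp κ x)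
        - ∫ x in (z 0)..(z (Fin.last m)),
            (((Lagrange.interpolate Finset.univ z (fun i => Ψ (z i))).eval x : ℝ) : ℂ)
              * Aexp κ x‖
      ≤ ((m:ℝ)+2) * C * (z (Fin.last m) - z 0)^m / (m.factorial * κ^2) := by
  have hκ0 : (0:ℝ) < κ := lt_trans one_pos hκ
  set c := z 0 with hc
  set d := z (Fin.last m) with hd
  have h0l : (0 : Fin (m+1)) < Fin.last m := by
    rw [Fin.lt_iff_val_lt_val]; simp; omega
  have hcd : c < d := hz h0l
  have hG01 : G0 < G1 := lt_of_le_of_lt hz0 (lt_of_lt_of_le hcd hzl)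
  set S := Set.Icc G0 G1 with hS
  have hUD : UniqueDiffOn ℝ S := uniqueDiffOn_Icc hG01
  have hIccS : Set.Icc c d ⊆ S := Set.Icc_subset_Icc hz0 hzl
  have hIooS : Set.Ioo c d ⊆ Set.Ioo G0 G1 := Set.Ioo_subset_Ioo hz0 hzl
  have hzmem : ∀ i, z i ∈ Set.Icc c d := fun i =>
    ⟨hz.monotone (Fin.zero_le i), hz.monotone (Fin.le_last i)⟩
  set p := Lagrange.interpolate Finset.univ z (fun i => Ψ (z i)) with hp
  set F : ℕ → ℝ → ℝ :=
    fun s u => iteratedDerivWithin s Ψ S u - (Polynomial.derivative^[s] p).eval u with hF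
  -- derivative chain
  have hFd : ∀ s ≤ m, ∀ x ∈ Set.Ioo G0 G1, HasDerivAt (F s) (F (s+1) x) x := by
    intro s hs x hx
    have hxS : x ∈ S := Set.Ioo_subset_Icc_self hx
    have hnh : S ∈ 𝓝 x := Icc_mem_nhds hx.1 hx.2
    have hda : DifferentiableAt ℝ (iteratedDerivWithin s Ψ S) x :=
      (hΨ.differentiableOn_iteratedDerivWithin (by exact_mod_cast Nat.lt_succ_of_le hs) hUD
        x hxS).differentiableAt hnh
    have hval : iteratedDerivWithin (s+1) Ψ S x = deriv (iteratedDerivWithin s Ψ S) x := by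
      rw [iteratedDerivWithin_succ, derivWithin_of_mem_nhds hnh]
    have h1 : HasDerivAt (iteratedDerivWithin s Ψ S) (iteratedDerivWithin (s+1) Ψ S x) x :=
      hval ▸ hda.hasDerivAt
    have h2 : HasDerivAt (fun u => (Polynomial.derivative^[s] p).eval u)
        ((Polynomial.derivative^[s+1] p).eval x) x := by
      rw [Function.iterate_succ_apply']
      exact Polynomial.hasDerivAt _ x
    exact h1.sub h2
  have hFc : ∀ s, (s:ℕ) ≤ m+1 → ContinuousOn (F s) S := fun s hs =>
    (hΨ.continuousOn_iteratedDerivWithin (by exact_mod_cast hs) hUD).sub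
      (Polynomial.continuous _).continuousOn
  -- zeros of F 0
  have hinj : Set.InjOn z ↑(Finset.univ : Finset (Fin (m+1))) := fun a _ b _ h => hz.injective h
  have hpz : ∀ i, p.eval (z i) = Ψ (z i) := fun i =>
    Lagrange.eval_interpolate_at_node _ hinj (Finset.mem_univ i)
  have hF0 : ∀ u, F 0 u = Ψ u - p.eval u := by
    intro u; rw [hF]; simp [iteratedDerivWithin_zero]
  have hF0z : ∀ i, F 0 (z i) = 0 := by
    intro i; rw [hF0, hpz i, sub_self]
  -- p has degree ≤ m
  have hpm1 : Polynomial.derivative^[m+1] p = 0 := by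
    apply Polynomial.iterate_derivative_eq_zero
    by_cases hp0 : p = 0
    · simp [hp0]
    · have := Lagrange.degree_interpolate_lt (fun i => Ψ (z i)) hinj
      rw [← hp] at this
      have h2 : p.natDegree < m + 1 :=
        (Polynomial.natDegree_lt_iff_degree_lt hp0).mpr (by simpa using this)
      omega
  have hFtop : ∀ u, F (m+1) u = iteratedDerivWithin (m+1) Ψ S u := by
    intro u; rw [hF]; simp [hpm1]
  have hMtop : ∀ x ∈ Set.Icc c d, |F (m+1) x| ≤ C := by
    intro x hx; rw [hFtop]; exact hC x (hIccS hx)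
  -- zero sets
  have hZ0 : ∃ Z0 : Finset ℝ, Z0.card = m + 1 ∧ ↑Z0 ⊆ Set.Icc c d ∧ ∀ u ∈ Z0, F 0 u = 0 := by
    refine ⟨Finset.image z Finset.univ, ?_, ?_, ?_⟩
    · rw [Finset.card_image_of_injective _ hz.injective]; simp
    · intro u hu
      simp only [Finset.coe_image, Set.mem_image] at hu
      obtain ⟨i, -, rfl⟩ := hu; exact hzmem i
    · intro u hu
      simp only [Finset.mem_image] at hu
      obtain ⟨i, -, rfl⟩ := hu; exact hF0z i
  obtain ⟨Z0, hZ0c, hZ0s, hZ0z⟩ := hZ0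
  obtain ⟨Z1, hZ1c, hZ1s, hZ1z⟩ := rolle_step' (k := m) Z0 hZ0c hZ0s
    ((hFc 0 (by omega)).mono hIccS) (fun x hx => hFd 0 (by omega) x (hIooS hx)) hZ0z
  obtain ⟨Z2, hZ2c, hZ2s, hZ2z⟩ := rolle_step' (k := m - 1) Z1 (by omega)
    (hZ1s.trans Set.Ioo_subset_Icc_self)
    ((hFc 1 (by omega)).mono hIccS) (fun x hx => hFd 1 (by omega) x (hIooS hx)) hZ1z
  -- remainder bounds for F 1 and F 2
  have hB1 : ∀ y ∈ Set.Icc c d, |F 1 y| ≤ C * (d - c)^m / m.factorial := by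
    apply remainder_bound m (fun s => F (s+1)) c d C hcd.le Z1 hZ1c
      (hZ1s.trans Set.Ioo_subset_Icc_self) ((hFc 1 (by omega)).mono hIccS)
      (fun s hs x hx => hFd (s+1) (by omega) x (hIooS hx)) hZ1z
    intro x hx; exact hMtop x hx
  have hB2 : ∀ y ∈ Set.Icc c d, |F 2 y| ≤ C * (d - c)^(m-1) / (m-1).factorial := by
    have hm12 : m - 1 + 2 = m + 1 := by omega
    apply remainder_bound (m-1) (fun s => F (s+2)) c d C hcd.le Z2 hZ2c
      (hZ2s.trans Set.Ioo_subset_Icc_self) ((hFc 2 (by omega)).mono hIccS)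
      (fun s hs x hx => hFd (s+2) (by omega) x (hIooS hx)) hZ2z
    intro x hx
    rw [hm12]
    exact hMtop x hx
  have hC0 : 0 ≤ C := (abs_nonneg _).trans (hMtop c ⟨le_refl c, hcd.le⟩)
  -- rewrite the difference as ∫ F 0 · Aexp
  have hdiff : (∫ x in c..d, (Ψ x : ℂ) * Aexp κ x)
      - (∫ x in c..d, ((p.eval x : ℝ) : ℂ) * Aexp κ x)
      = ∫ x in c..d, ((F 0 x : ℝ) : ℂ) * Aexp κ x := by
    rw [← intervalIntegral.integral_sub]
    · apply intervalIntegral.integral_congr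
      intro x hx
      simp only [hF0]
      push_cast
      ring
    · apply ContinuousOn.intervalIntegrable
      rw [Set.uIcc_of_le hcd.le]
      exact (Complex.continuous_ofReal.comp_continuousOn
        (hΨ.continuousOn.mono hIccS)).mul (Aexp_cont κ).continuousOn
    · apply ContinuousOn.intervalIntegrable
      rw [Set.uIcc_of_le hcd.le]
      exact (Complex.continuous_ofReal.comp_continuousOn
        (Polynomial.continuous _).continuousOn).mul (Aexp_cont κ).continuousOn
  -- two integrations by parts
  have hibp1 := ibp_step hκ0 hcd.le ((hFc 0 (by omega)).mono hIccS)
    ((hFc 1 (by omega)).mono hIccS) (fun x hx => hFd 0 (by omega) x (hIooS hx))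
  have hibp2 := ibp_step hκ0 hcd.le ((hFc 1 (by omega)).mono hIccS)
    ((hFc 2 (by omega)).mono hIccS) (fun x hx => hFd 1 (by omega) x (hIooS hx))
  have h0c : F 0 c = 0 := hF0z 0
  have h0d : F 0 d = 0 := hF0z (Fin.last m)
  rw [h0c, h0d] at hibp1
  set c1 : ℂ := (Complex.I * (κ:ℂ))⁻¹ with hc1
  have habsc1 : ‖c1‖ = κ⁻¹ := by
    rw [hc1, norm_inv, norm_mul, Complex.norm_I, one_mul,
      Complex.norm_real, Real.norm_eq_abs, abs_of_pos hκ0]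
  have hh0 : (0:ℝ) ≤ d - c := by linarith
  set B1 := C * (d - c)^m / m.factorial with hB1def
  set B2 := C * (d - c)^(m-1) / (m-1).factorial with hB2def
  have hB1nn : 0 ≤ B1 := div_nonneg (mul_nonneg hC0 (pow_nonneg hh0 _)) (Nat.cast_nonneg _)
  have hB2nn : 0 ≤ B2 := div_nonneg (mul_nonneg hC0 (pow_nonneg hh0 _)) (Nat.cast_nonneg _)
  have hI2 : ‖∫ y in c..d, ((F 2 y : ℝ):ℂ) * Aexp κ y‖ ≤ B2 * (d - c) := by
    have := intervalIntegral.norm_integral_le_of_norm_le_const (C := B2)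
      (f := fun y => ((F 2 y : ℝ):ℂ) * Aexp κ y) (a := c) (b := d) ?_
    · rwa [abs_of_nonneg hh0] at this
    · intro x hx
      have hxI : x ∈ Set.Icc c d := Set.Ioc_subset_Icc_self (by rwa [Set.uIoc_of_le hcd.le] at hx)
      rw [norm_mul, Aexp_abs, mul_one, Complex.norm_real,
        Real.norm_eq_abs]
      exact hB2 x hxI
  set I2 : ℂ := ∫ y in c..d, ((F 2 y : ℝ):ℂ) * Aexp κ y with hI2def
  set W : ℂ := (↑(F 1 d) * Aexp κ d - ↑(F 1 c) * Aexp κ c) * c1 - c1 * I2 with hW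
  rw [hdiff, hibp1, hibp2]
  have hstep1 : ((((0:ℝ):ℂ) * Aexp κ d - ((0:ℝ):ℂ) * Aexp κ c) * c1 - c1 * W) = -(c1 * W) := by
    push_cast
    ring
  rw [hstep1, norm_neg, norm_mul, habsc1]
  have hF1d : |F 1 d| ≤ B1 := hB1 d ⟨hcd.le, le_refl d⟩
  have hF1c : |F 1 c| ≤ B1 := hB1 c ⟨le_refl c, hcd.le⟩
  have hnormW : ‖W‖ ≤ (B1 + B1) * κ⁻¹ + κ⁻¹ * (B2 * (d - c)) := by
    rw [hW]
    refine (norm_sub_le _ _).trans ?_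
    gcongr
    · rw [norm_mul, habsc1]
      gcongr
      refine (norm_sub_le _ _).trans ?_
      gcongr
      · rw [norm_mul, Aexp_abs, mul_one, Complex.norm_real,
          Real.norm_eq_abs]
        exact hF1d
      · rw [norm_mul, Aexp_abs, mul_one, Complex.norm_real,
          Real.norm_eq_abs]
        exact hF1c
    · rw [norm_mul, habsc1]
      gcongr
  have hκinv : (0:ℝ) ≤ κ⁻¹ := inv_nonneg.mpr hκ0.le
  have hfin : κ⁻¹ * ((B1 + B1) * κ⁻¹ + κ⁻¹ * (B2 * (d - c)))
      = ((m:ℝ)+2) * C * (d - c)^m / (m.factorial * κ^2) := by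
    have hh : (d - c)^(m-1) * (d - c) = (d - c)^m := by
      rw [← pow_succ]
      congr 1
      omega
    have hfact : (m:ℝ) * ((m-1).factorial : ℝ) = (m.factorial : ℝ) := by
      exact_mod_cast Nat.mul_factorial_pred (by omega)
    rw [hB1def, hB2def, ← hh, ← hfact]
    have h1 : ((m-1).factorial : ℝ) ≠ 0 := by positivity
    have h2 : (κ:ℝ) ≠ 0 := hκ0.ne'
    have h3 : (m:ℝ) ≠ 0 := by positivity
    field_simp
    ring
  calc κ⁻¹ * ‖W‖ ≤ κ⁻¹ * ((B1 + B1) * κ⁻¹ + κ⁻¹ * (B2 * (d - c))) := by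
        gcongr
    _ = ((m:ℝ)+2) * C * (d - c)^m / (m.factorial * κ^2) := hfin

end AuxLemmas

section MainProof
open Set intervalIntegral Topology

/-- error bound for the composite moment-free Filon rule on the graded
κ-dependent partition `x_0 = 0`, `x_j = κ^{(j-1)/(n-1)-1}`, with
`N_j = ⌈max(|g'(x_{j-1})|, |g'(x_j)|)⌉` subintervals of `[x_{j-1},x_j]`. -/
theorem stmt_1 (κ : ℝ) (hκ : 1 < κ) (n m : ℕ) (hn : 1 < n) (hm : 1 ≤ m)
    (f g Ψ : ℝ → ℝ) (σ C : ℝ)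
    (hf : ContDiffOn ℝ 2 f (Set.Icc 0 1))
    (hg : ContDiffOn ℝ 2 g (Set.Icc 0 1))
    (hmono : StrictMonoOn g (Set.Icc 0 1))
    (hg' : ∀ x ∈ Set.Icc (0:ℝ) 1, 0 < derivWithin g (Set.Icc 0 1) x)
    (hg'' : ∀ x ∈ Set.Ioo (0:ℝ) 1, iteratedDerivWithin 2 g (Set.Icc 0 1) x ≠ 0)
    (hσ : IsGreatest ((fun x => |derivWithin g (Set.Icc 0 1) x|) '' Set.Icc 0 1) σ)
    (hΨdef : ∀ x ∈ Set.Icc (0:ℝ) 1, Ψ (g x) = f x / derivWithin g (Set.Icc 0 1) x)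
    (hΨ : ContDiffOn ℝ (m+1) Ψ (Set.Icc (g 0) (g 1)))
    (hC : ∀ x ∈ Set.Icc (g 0) (g 1),
      |iteratedDerivWithin (m+1) Ψ (Set.Icc (g 0) (g 1)) x| ≤ C)
    (x : ℕ → ℝ) (hx0 : x 0 = 0)
    (hxj : ∀ j, 1 ≤ j → j ≤ n → x j = κ ^ (((j:ℝ)-1)/((n:ℝ)-1) - 1))
    (N : Fin n → ℕ)
    (hNdef : ∀ j : Fin n, N j =
      ⌈max |derivWithin g (Set.Icc 0 1) (x j.val)|
           |derivWithin g (Set.Icc 0 1) (x (j.val+1))|⌉₊)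
    (t : (j : Fin n) → Fin (N j) → Fin (m+1) → ℝ)
    (ht : ∀ j : Fin n, FilonNodes (x j.val) (x (j.val+1)) m (N j) (t j)) :
    ‖oscInt κ f g 0 1 - ∑ j : Fin n, compFilonQ κ m (N j) g Ψ (t j)‖
      ≤ 3*((m:ℝ)+1) / ((m.factorial : ℝ) * κ^2) * C * σ *
          (max (1/κ) (1 - κ ^ (-(1:ℝ)/((n:ℝ)-1))))^(m-1) := by
  have hκ0 : (0:ℝ) < κ := lt_trans one_pos hκ
  have hn1 : (0:ℝ) < (n:ℝ) - 1 := by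
    have : (2:ℝ) ≤ n := by exact_mod_cast hn
    linarith
  set G : ℝ → ℝ := derivWithin g (Set.Icc 0 1) with hG
  set η : ℝ := max (1/κ) (1 - κ ^ (-(1:ℝ)/((n:ℝ)-1))) with hηdef
  have hη0 : 0 < η := lt_max_of_lt_left (by positivity)
  -- basic facts about x
  have hxmem : ∀ j, 1 ≤ j → j ≤ n → x j ∈ Set.Icc (0:ℝ) 1 := by
    intro j h1 h2
    rw [hxj j h1 h2]
    constructor
    · positivity
    · apply Real.rpow_le_one_of_one_le_of_nonpos hκ.le
      have hj : (j:ℝ) ≤ n := by exact_mod_cast h2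
      rw [sub_nonpos, div_le_one hn1]
      linarith
  have hxmem' : ∀ j, j ≤ n → x j ∈ Set.Icc (0:ℝ) 1 := by
    intro j hj
    rcases Nat.eq_zero_or_pos j with rfl | h1
    · rw [hx0]; exact ⟨le_refl 0, zero_le_one⟩
    · exact hxmem j h1 hj
  have hxlt : ∀ j, j < n → x j < x (j+1) := by
    intro j hj
    rcases Nat.eq_zero_or_pos j with rfl | h1
    · rw [hx0, hxj 1 le_rfl hn.le]
      positivity
    · rw [hxj j h1 hj.le, hxj (j+1) (by omega) (by omega)]
      rw [Real.rpow_lt_rpow_left_iff hκ]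
      push_cast
      have : ((j:ℝ)-1)/((n:ℝ)-1) < ((j:ℝ)+1-1)/((n:ℝ)-1) :=
        div_lt_div_of_pos_right (by linarith) hn1
      linarith
  have hxn : x n = 1 := by
    rw [hxj n (by omega) le_rfl, div_self hn1.ne', sub_self, Real.rpow_zero]
  -- facts about g and G
  have h01 : (0:ℝ) < 1 := one_pos
  have hUD : UniqueDiffOn ℝ (Set.Icc (0:ℝ) 1) := uniqueDiffOn_Icc h01
  have hGcont : ContinuousOn G (Set.Icc 0 1) :=
    hg.continuousOn_derivWithin hUD (by norm_num)
  have hgderiv : ∀ u ∈ Set.Ioo (0:ℝ) 1, HasDerivAt g (G u) u := by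
    intro u hu
    have hnh : Set.Icc (0:ℝ) 1 ∈ 𝓝 u := Icc_mem_nhds hu.1 hu.2
    have hda : DifferentiableAt ℝ g u :=
      ((hg.differentiableOn (by norm_num)) u (Set.Ioo_subset_Icc_self hu)).differentiableAt hnh
    have : G u = deriv g u := by rw [hG, derivWithin_of_mem_nhds hnh]
    rw [this]
    exact hda.hasDerivAt
  have hslope : ∀ a b : ℝ, 0 ≤ a → a < b → b ≤ 1 →
      ∃ ξ ∈ Set.Icc a b, g b - g a = G ξ * (b - a) := by
    intro a b ha hab hb
    obtain ⟨ξ, hξ, hξeq⟩ := exists_hasDerivAt_eq_slope g G hab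
      (hg.continuousOn.mono (Set.Icc_subset_Icc ha hb))
      (fun u hu => hgderiv u ⟨lt_of_le_of_lt ha hu.1, lt_of_lt_of_le hu.2 hb⟩)
    refine ⟨ξ, Set.Ioo_subset_Icc_self hξ, ?_⟩
    rw [hξeq, div_mul_cancel₀ _ (sub_ne_zero.mpr hab.ne')]
  have hg01 : g 0 < g 1 := hmono ⟨le_refl 0, zero_le_one⟩ ⟨zero_le_one, le_refl 1⟩ h01
  have hσ0 : 0 ≤ σ := by
    obtain ⟨u, hu, hu2⟩ := hσ.1
    rw [← hu2]; positivity
  have hGle : ∀ u ∈ Set.Icc (0:ℝ) 1, G u ≤ σ := fun u hu =>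
    (le_abs_self _).trans (hσ.2 ⟨u, hu, rfl⟩)
  have hC0 : 0 ≤ C := (abs_nonneg _).trans (hC (g 0) ⟨le_refl _, hg01.le⟩)
  -- G is monotone or antitone
  have hGd : ∀ u ∈ Set.Ioo (0:ℝ) 1, HasDerivAt G (iteratedDerivWithin 2 g (Set.Icc 0 1) u) u := by
    intro u hu
    have hnh : Set.Icc (0:ℝ) 1 ∈ 𝓝 u := Icc_mem_nhds hu.1 hu.2
    have huI : u ∈ Set.Icc (0:ℝ) 1 := Set.Ioo_subset_Icc_self hu
    have hda : DifferentiableAt ℝ (iteratedDerivWithin 1 g (Set.Icc 0 1)) u :=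
      ((hg.differentiableOn_iteratedDerivWithin (by norm_num) hUD) u huI).differentiableAt hnh
    have hval : iteratedDerivWithin 2 g (Set.Icc 0 1) u
        = deriv (iteratedDerivWithin 1 g (Set.Icc 0 1)) u := by
      have h2 : iteratedDerivWithin 2 g (Set.Icc 0 1) u
          = derivWithin (iteratedDerivWithin 1 g (Set.Icc 0 1)) (Set.Icc 0 1) u :=
        congrFun (iteratedDerivWithin_succ (n := 1)) u
      rw [h2, derivWithin_of_mem_nhds hnh]
    have h1 : HasDerivAt (iteratedDerivWithin 1 g (Set.Icc 0 1))
        (iteratedDerivWithin 2 g (Set.Icc 0 1) u) u := hval ▸ hda.hasDerivAt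
    apply h1.congr_of_eventuallyEq
    filter_upwards [hnh] with v hv
    rw [hG, ← iteratedDerivWithin_one]
  have hsign : (∀ u ∈ Set.Ioo (0:ℝ) 1, 0 < iteratedDerivWithin 2 g (Set.Icc 0 1) u)
      ∨ (∀ u ∈ Set.Ioo (0:ℝ) 1, iteratedDerivWithin 2 g (Set.Icc 0 1) u < 0) := by
    by_contra h
    push_neg at h
    obtain ⟨⟨a, ha, ha'⟩, ⟨b, hb, hb'⟩⟩ := h
    have ha'' : iteratedDerivWithin 2 g (Set.Icc 0 1) a < 0 :=
      lt_of_le_of_ne ha' (hg'' a ha)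
    have hb'' : 0 < iteratedDerivWithin 2 g (Set.Icc 0 1) b :=
      lt_of_le_of_ne hb' (Ne.symm (hg'' b hb))
    have hcont2 : ContinuousOn (iteratedDerivWithin 2 g (Set.Icc 0 1)) (Set.uIcc a b) := by
      apply (hg.continuousOn_iteratedDerivWithin le_rfl hUD).mono
      have h1 : a ∈ Set.uIcc (0:ℝ) 1 := by
        rw [Set.uIcc_of_le zero_le_one]; exact Set.Ioo_subset_Icc_self ha
      have h2 : b ∈ Set.uIcc (0:ℝ) 1 := by
        rw [Set.uIcc_of_le zero_le_one]; exact Set.Ioo_subset_Icc_self hb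
      refine (Set.uIcc_subset_uIcc h1 h2).trans ?_
      rw [Set.uIcc_of_le zero_le_one]
    have h0mem : (0:ℝ) ∈ Set.uIcc (iteratedDerivWithin 2 g (Set.Icc 0 1) a)
        (iteratedDerivWithin 2 g (Set.Icc 0 1) b) :=
      Set.mem_uIcc.mpr (Or.inl ⟨ha''.le, hb''.le⟩)
    obtain ⟨ξ, hξ, hξ0⟩ := intermediate_value_uIcc hcont2 h0mem
    have hξIoo : ξ ∈ Set.Ioo (0:ℝ) 1 := by
      rcases Set.mem_uIcc.mp hξ with h' | h'
      · exact ⟨lt_of_lt_of_le ha.1 h'.1, lt_of_le_of_lt h'.2 hb.2⟩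
      · exact ⟨lt_of_lt_of_le hb.1 h'.1, lt_of_le_of_lt h'.2 ha.2⟩
    exact hg'' ξ hξIoo hξ0
  have hGmaxend : ∀ a b : ℝ, 0 ≤ a → a ≤ b → b ≤ 1 →
      ∀ u ∈ Set.Icc a b, G u ≤ max (G a) (G b) := by
    intro a b ha hab hb u hu
    have haI : a ∈ Set.Icc (0:ℝ) 1 := ⟨ha, hab.trans hb⟩
    have hbI : b ∈ Set.Icc (0:ℝ) 1 := ⟨ha.trans hab, hb⟩
    have huI : u ∈ Set.Icc (0:ℝ) 1 := ⟨ha.trans hu.1, hu.2.trans hb⟩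
    rcases hsign with hpos | hneg
    · have : MonotoneOn G (Set.Icc (0:ℝ) 1) := by
        apply monotoneOn_of_deriv_nonneg (convex_Icc 0 1) hGcont
        · intro u hu
          rw [interior_Icc] at hu
          exact ((hGd u hu).differentiableAt).differentiableWithinAt
        · intro u hu
          rw [interior_Icc] at hu
          rw [(hGd u hu).deriv]
          exact (hpos u hu).le
      exact le_max_of_le_right (this huI hbI hu.2)
    · have : AntitoneOn G (Set.Icc (0:ℝ) 1) := by
        apply antitoneOn_of_deriv_nonpos (convex_Icc 0 1) hGcont
        · intro u hu
          rw [interior_Icc] at hu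
          exact ((hGd u hu).differentiableAt).differentiableWithinAt
        · intro u hu
          rw [interior_Icc] at hu
          rw [(hGd u hu).deriv]
          exact (hneg u hu).le
      exact le_max_of_le_left (this haI huI hu.1)
  -- N facts
  have hNge : ∀ j : Fin n, max (G (x j.val)) (G (x (j.val+1))) ≤ (N j : ℝ) := by
    intro j
    rw [hNdef j, abs_of_pos (hg' _ (hxmem' j.val j.isLt.le)),
      abs_of_pos (hg' _ (hxmem' (j.val+1) j.isLt))]
    exact Nat.le_ceil _
  have hNpos : ∀ j : Fin n, 0 < N j := by
    intro j
    rw [hNdef j, Nat.ceil_pos]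
    exact lt_max_of_lt_left (abs_pos.mpr (hg' _ (hxmem' j.val j.isLt.le)).ne')
  -- mesh bound
  have hmesh : ∀ j, j < n → x (j+1) - x j ≤ η := by
    intro j hj
    rcases Nat.eq_zero_or_pos j with rfl | h1
    · rw [hx0, hxj 1 le_rfl hn.le, sub_zero]
      have he : ((1:ℕ):ℝ) - 1 = 0 := by norm_num
      have : (((1:ℕ):ℝ)-1)/((n:ℝ)-1) - 1 = -1 := by rw [he]; field_simp; ring
      rw [this, Real.rpow_neg_one, hηdef]
      exact le_max_of_le_left (by rw [one_div])
    · rw [hxj (j+1) (by omega) (by omega), hxj j (by omega) (by omega)]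
      have hcast : ((j+1:ℕ):ℝ) = (j:ℝ) + 1 := by push_cast; ring
      rw [hcast]
      set e' : ℝ := ((j:ℝ)+1-1)/((n:ℝ)-1) - 1 with he'
      have hsplit : ((j:ℝ)-1)/((n:ℝ)-1) - 1 = e' + (-(1:ℝ)/((n:ℝ)-1)) := by
        rw [he']; field_simp; ring
      rw [hsplit, Real.rpow_add hκ0]
      have he'le : e' ≤ 0 := by
        rw [he', sub_nonpos, div_le_one hn1]
        have : (j:ℝ) + 1 ≤ (n:ℝ) := by exact_mod_cast hj
        linarith
      have h1' : κ ^ e' ≤ 1 := Real.rpow_le_one_of_one_le_of_nonpos hκ.le he'le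
      have h2' : κ ^ (-(1:ℝ)/((n:ℝ)-1)) ≤ 1 :=
        Real.rpow_le_one_of_one_le_of_nonpos hκ.le
          (by apply div_nonpos_of_nonpos_of_nonneg <;> linarith)
      have h3' : 0 < κ ^ e' := Real.rpow_pos_of_pos hκ0 _
      have heq2 : κ^e' - κ^e' * κ^(-(1:ℝ)/((n:ℝ)-1))
          = κ^e' * (1 - κ^(-(1:ℝ)/((n:ℝ)-1))) := by ring
      rw [heq2]
      calc κ^e' * (1 - κ^(-(1:ℝ)/((n:ℝ)-1))) ≤ 1 * (1 - κ^(-(1:ℝ)/((n:ℝ)-1))) := by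
            apply mul_le_mul_of_nonneg_right h1' (by linarith)
        _ = 1 - κ^(-(1:ℝ)/((n:ℝ)-1)) := one_mul _
        _ ≤ η := le_max_right _ _
  -- substitution
  have hgmem : ∀ u ∈ Set.Icc (0:ℝ) 1, g u ∈ Set.Icc (g 0) (g 1) := fun u hu =>
    ⟨hmono.monotoneOn ⟨le_refl 0, zero_le_one⟩ hu hu.1,
     hmono.monotoneOn hu ⟨zero_le_one, le_refl 1⟩ hu.2⟩
  have hΨA_cont : ContinuousOn (fun y => (Ψ y : ℂ) * Aexp κ y) (Set.Icc (g 0) (g 1)) :=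
    (Complex.continuous_ofReal.comp_continuousOn hΨ.continuousOn).mul (Aexp_cont κ).continuousOn
  have hsubst : oscInt κ f g 0 1 = ∫ y in (g 0)..(g 1), (Ψ y : ℂ) * Aexp κ y := by
    rw [oscInt]
    have heq : Set.EqOn (fun u => (f u:ℂ) * Complex.exp (Complex.I * κ * (g u)))
        (fun u => G u • ((fun y => (Ψ y : ℂ) * Aexp κ y) (g u))) (Set.uIcc (0:ℝ) 1) := by
      intro u hu
      rw [Set.uIcc_of_le zero_le_one] at hu
      have hGne : G u ≠ 0 := (hg' u hu).ne'
      have hGne' : (G u : ℂ) ≠ 0 := by exact_mod_cast hGne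
      simp only [Aexp, Complex.real_smul]
      rw [hΨdef u hu]
      push_cast
      field_simp
    have hA : ContinuousOn g (Set.uIcc (0:ℝ) 1) := by
      rw [Set.uIcc_of_le zero_le_one]; exact hg.continuousOn
    have hB : ∀ u ∈ Set.Ioo (min (0:ℝ) 1) (max (0:ℝ) 1),
        HasDerivWithinAt g (G u) (Set.Ioi u) u := by
      intro u hu
      rw [min_eq_left zero_le_one, max_eq_right zero_le_one] at hu
      exact (hgderiv u hu).hasDerivWithinAt
    have hCc : ContinuousOn G (Set.uIcc (0:ℝ) 1) := by
      rw [Set.uIcc_of_le zero_le_one]; exact hGcont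
    have hD : ContinuousOn (fun y => (Ψ y : ℂ) * Aexp κ y) (g '' Set.uIcc (0:ℝ) 1) := by
      apply hΨA_cont.mono
      rw [Set.uIcc_of_le zero_le_one]
      rintro y ⟨u, hu, rfl⟩
      exact hgmem u hu
    rw [intervalIntegral.integral_congr heq]
    exact intervalIntegral.integral_comp_smul_deriv'' hA hB hCc hD
  have hIntΨ : ∀ u v : ℝ, u ∈ Set.Icc (g 0) (g 1) → v ∈ Set.Icc (g 0) (g 1) →
      IntervalIntegrable (fun y => (Ψ y:ℂ) * Aexp κ y) volume u v := by
    intro u v hu hv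
    apply ContinuousOn.intervalIntegrable
    apply hΨA_cont.mono
    have h1 : u ∈ Set.uIcc (g 0) (g 1) := by rw [Set.uIcc_of_le hg01.le]; exact hu
    have h2 : v ∈ Set.uIcc (g 0) (g 1) := by rw [Set.uIcc_of_le hg01.le]; exact hv
    refine (Set.uIcc_subset_uIcc h1 h2).trans ?_
    rw [Set.uIcc_of_le hg01.le]
  -- node facts
  have hΔpos : ∀ j : Fin n, (0:ℝ) < x (j.val+1) - x j.val :=
    fun j => sub_pos.mpr (hxlt j.val j.isLt)
  have htmem : ∀ (j : Fin n) (l : Fin (N j)) (i : Fin (m+1)),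
      t j l i ∈ Set.Icc (x j.val) (x (j.val+1)) := by
    intro j l i
    obtain ⟨hmon, h0, hl⟩ := ht j l
    have hΔ := hΔpos j
    have hN : (0:ℝ) < (N j : ℝ) := by exact_mod_cast hNpos j
    have hl1 : ((l:ℝ)+1) ≤ (N j:ℝ) := by
      have : (l.val+1 : ℕ) ≤ N j := l.isLt
      exact_mod_cast this
    constructor
    · have h00 : x j.val ≤ t j l 0 := by
        rw [h0]
        have : 0 ≤ (x (j.val+1) - x j.val) * (l:ℝ)/(N j:ℝ) := by positivity
        linarith
      exact h00.trans (hmon.monotone (Fin.zero_le i))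
    · have hll : t j l (Fin.last m) ≤ x (j.val+1) := by
        rw [hl]
        have h2 : (x (j.val+1) - x j.val) * ((l:ℝ)+1)/(N j:ℝ) ≤ (x (j.val+1) - x j.val) := by
          rw [div_le_iff₀ hN]
          nlinarith
        linarith
      exact (hmon.monotone (Fin.le_last i)).trans hll
  have ht01 : ∀ (j : Fin n) (l : Fin (N j)) (i : Fin (m+1)), t j l i ∈ Set.Icc (0:ℝ) 1 :=
    fun j l i => Set.Icc_subset_Icc (hxmem' j.val j.isLt.le).1 (hxmem' (j.val+1) j.isLt).2
      (htmem j l i)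
  -- splitting per j
  have hinner : ∀ j : Fin n, (∫ y in (g (x j.val))..(g (x (j.val+1))), (Ψ y:ℂ) * Aexp κ y)
      = ∑ l : Fin (N j),
          ∫ y in (g (t j l 0))..(g (t j l (Fin.last m))), (Ψ y:ℂ) * Aexp κ y := by
    intro j
    have hΔ := hΔpos j
    have hN : (0:ℝ) < (N j : ℝ) := by exact_mod_cast hNpos j
    set b : ℕ → ℝ := fun l => g (x j.val + (x (j.val+1) - x j.val) * l / (N j)) with hb
    have hargmem : ∀ l : ℕ, l ≤ N j →
        (x j.val + (x (j.val+1) - x j.val) * l / (N j)) ∈ Set.Icc (0:ℝ) 1 := by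
      intro l hle
      have hcast : (l:ℝ) ≤ (N j:ℝ) := by exact_mod_cast hle
      constructor
      · have h1 := (hxmem' j.val j.isLt.le).1
        have : 0 ≤ (x (j.val+1) - x j.val) * l / (N j) := by positivity
        linarith
      · have h2 := (hxmem' (j.val+1) j.isLt).2
        have : (x (j.val+1) - x j.val) * l / (N j) ≤ (x (j.val+1) - x j.val) := by
          rw [div_le_iff₀ hN]; nlinarith
        linarith
    have hint : ∀ k, k < N j →
        IntervalIntegrable (fun y => (Ψ y:ℂ) * Aexp κ y) volume (b k) (b (k+1)) := by
      intro k hk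
      exact hIntΨ _ _ (hgmem _ (hargmem k hk.le)) (hgmem _ (hargmem (k+1) hk))
    have hsum := intervalIntegral.sum_integral_adjacent_intervals hint
    have hb0 : b 0 = g (x j.val) := by rw [hb]; norm_num
    have hbN : b (N j) = g (x (j.val+1)) := by
      rw [hb]
      congr 1
      beta_reduce; congr 1; rw [mul_div_assoc, div_self hN.ne', mul_one]; ring
    rw [← hb0, ← hbN, ← hsum,
      ← Fin.sum_univ_eq_sum_range (fun l => ∫ y in (b l)..(b (l+1)), (Ψ y:ℂ) * Aexp κ y) (N j)]
    apply Finset.sum_congr rfl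
    intro l _
    obtain ⟨hmon, h0, hl⟩ := ht j l
    have he0 : g (t j l 0) = b l.val := by rw [h0]
    have hel : g (t j l (Fin.last m)) = b (l.val+1) := by
      rw [hl, hb]
      congr 2
      push_cast
      ring
    rw [he0, hel]
  -- outer splitting
  have houter : (∫ y in (g 0)..(g 1), (Ψ y:ℂ) * Aexp κ y)
      = ∑ j : Fin n, ∫ y in (g (x j.val))..(g (x (j.val+1))), (Ψ y:ℂ) * Aexp κ y := by
    have hint : ∀ k, k < n →
        IntervalIntegrable (fun y => (Ψ y:ℂ) * Aexp κ y) volume (g (x k)) (g (x (k+1))) :=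
      fun k hk => hIntΨ _ _ (hgmem _ (hxmem' k hk.le)) (hgmem _ (hxmem' (k+1) hk))
    have hsum := intervalIntegral.sum_integral_adjacent_intervals (a := fun k => g (x k)) hint
    rw [show (g 0) = g (x 0) by rw [hx0], show (g 1) = g (x n) by rw [hxn], ← hsum]
    exact (Fin.sum_univ_eq_sum_range
      (fun k => ∫ y in (g (x k))..(g (x (k+1))), (Ψ y:ℂ) * Aexp κ y) n).symm
  -- decomposition of the error
  set E : (j : Fin n) → Fin (N j) → ℂ := fun j l =>
    (∫ y in (g (t j l 0))..(g (t j l (Fin.last m))), (Ψ y:ℂ) * Aexp κ y)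
      - filonQ κ m g Ψ (t j l) with hE
  have hdecomp : oscInt κ f g 0 1 - ∑ j : Fin n, compFilonQ κ m (N j) g Ψ (t j)
      = ∑ j : Fin n, ∑ l : Fin (N j), E j l := by
    rw [hsubst, houter, ← Finset.sum_sub_distrib]
    apply Finset.sum_congr rfl
    intro j _
    rw [hinner j, compFilonQ, ← Finset.sum_sub_distrib]
  -- per-cell bound
  have hh0 : ∀ (j : Fin n) (l : Fin (N j)), 0 ≤ g (t j l (Fin.last m)) - g (t j l 0) := by
    intro j l
    obtain ⟨hmon, h0, hl⟩ := ht j l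
    have := hmono.monotoneOn (ht01 j l 0) (ht01 j l (Fin.last m))
      (hmon.monotone (Fin.zero_le (Fin.last m)))
    linarith
  have hcell : ∀ (j : Fin n) (l : Fin (N j)), ‖E j l‖
      ≤ ((m:ℝ)+2) * C * (g (t j l (Fin.last m)) - g (t j l 0))^m / (m.factorial * κ^2) := by
    intro j l
    obtain ⟨hmon, h0, hl⟩ := ht j l
    have hzmono : StrictMono (fun i => g (t j l i)) := fun i i' hii' =>
      hmono (ht01 j l i) (ht01 j l i') (hmon hii')
    exact cell_bound hκ hm hΨ hC (fun i => g (t j l i)) hzmono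
      (hgmem _ (ht01 j l 0)).1 (hgmem _ (ht01 j l (Fin.last m))).2
  -- each cell has g-length at most η
  have hhb : ∀ (j : Fin n) (l : Fin (N j)),
      g (t j l (Fin.last m)) - g (t j l 0) ≤ η := by
    intro j l
    obtain ⟨hmon, h0, hl⟩ := ht j l
    have h0lt : t j l 0 < t j l (Fin.last m) :=
      hmon (by rw [Fin.lt_iff_val_lt_val]; simp; omega)
    obtain ⟨ξ, hξ, heq⟩ := hslope (t j l 0) (t j l (Fin.last m))
      (ht01 j l 0).1 h0lt (ht01 j l (Fin.last m)).2
    have hξxj : ξ ∈ Set.Icc (x j.val) (x (j.val+1)) :=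
      Set.Icc_subset_Icc (htmem j l 0).1 (htmem j l (Fin.last m)).2 hξ
    have hGξ : G ξ ≤ max (G (x j.val)) (G (x (j.val+1))) :=
      hGmaxend _ _ (hxmem' j.val j.isLt.le).1 (hxlt j.val j.isLt).le
        (hxmem' (j.val+1) j.isLt).2 ξ hξxj
    have hδ : t j l (Fin.last m) - t j l 0 = (x (j.val+1) - x j.val)/(N j) := by
      rw [h0, hl]
      field_simp
      ring
    have hN : (0:ℝ) < (N j:ℝ) := by exact_mod_cast hNpos j
    have hΔ := hΔpos j
    rw [heq, hδ]
    calc G ξ * ((x (j.val+1) - x j.val)/(N j))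
        ≤ (N j:ℝ) * ((x (j.val+1) - x j.val)/(N j)) := by
          apply mul_le_mul_of_nonneg_right (hGξ.trans (hNge j))
            (div_nonneg hΔ.le hN.le)
      _ = x (j.val+1) - x j.val := by field_simp
      _ ≤ η := hmesh j.val j.isLt
  -- telescoping sum of cell lengths
  have hsumh : ∑ j : Fin n, ∑ l : Fin (N j), (g (t j l (Fin.last m)) - g (t j l 0))
      = g 1 - g 0 := by
    have inner : ∀ j : Fin n, ∑ l : Fin (N j), (g (t j l (Fin.last m)) - g (t j l 0))
        = g (x (j.val+1)) - g (x j.val) := by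
      intro j
      have hN : (0:ℝ) < (N j : ℝ) := by exact_mod_cast hNpos j
      set b : ℕ → ℝ := fun l => g (x j.val + (x (j.val+1) - x j.val) * l / (N j)) with hb
      have hb0 : b 0 = g (x j.val) := by rw [hb]; norm_num
      have hbN : b (N j) = g (x (j.val+1)) := by
        rw [hb]; congr 1; beta_reduce; congr 1; rw [mul_div_assoc, div_self hN.ne', mul_one]; ring
      have hstep : ∀ l : Fin (N j),
          g (t j l (Fin.last m)) - g (t j l 0) = b (l.val+1) - b l.val := by
        intro l
        obtain ⟨hmon, h0, hl⟩ := ht j l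
        have he0 : g (t j l 0) = b l.val := by rw [h0]
        have hel : g (t j l (Fin.last m)) = b (l.val+1) := by
          rw [hl, hb]; congr 2; push_cast; ring
        rw [he0, hel]
      rw [Finset.sum_congr rfl (fun l _ => hstep l),
        Fin.sum_univ_eq_sum_range (fun l => b (l+1) - b l) (N j),
        Finset.sum_range_sub b, hb0, hbN]
    rw [Finset.sum_congr rfl (fun j _ => inner j),
      Fin.sum_univ_eq_sum_range (fun k => g (x (k+1)) - g (x k)) n,
      Finset.sum_range_sub (fun k => g (x k)), hx0, hxn]
  have hg10σ : g 1 - g 0 ≤ σ := by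
    obtain ⟨ξ, hξ, heq⟩ := hslope 0 1 le_rfl one_pos le_rfl
    rw [heq]
    have := hGle ξ hξ
    nlinarith
  set K : ℝ := ((m:ℝ)+2) * C / (m.factorial * κ^2) with hK
  have hK0 : 0 ≤ K := by positivity
  have hηpow0 : (0:ℝ) ≤ η^(m-1) := by positivity
  rw [hdecomp]
  calc ‖∑ j : Fin n, ∑ l : Fin (N j), E j l‖
      ≤ ∑ j : Fin n, ‖∑ l : Fin (N j), E j l‖ := norm_sum_le _ _
    _ ≤ ∑ j : Fin n, ∑ l : Fin (N j), ‖E j l‖ :=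
        Finset.sum_le_sum (fun j _ => norm_sum_le _ _)
    _ ≤ ∑ j : Fin n, ∑ l : Fin (N j),
          K * η^(m-1) * (g (t j l (Fin.last m)) - g (t j l 0)) := by
        apply Finset.sum_le_sum
        intro j _
        apply Finset.sum_le_sum
        intro l _
        have hh := hh0 j l
        have hhb' := hhb j l
        have hpow : (g (t j l (Fin.last m)) - g (t j l 0))^m
            ≤ η^(m-1) * (g (t j l (Fin.last m)) - g (t j l 0)) := by
          calc (g (t j l (Fin.last m)) - g (t j l 0))^m
              = (g (t j l (Fin.last m)) - g (t j l 0))^(m-1)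
                * (g (t j l (Fin.last m)) - g (t j l 0)) := by
                rw [← pow_succ]
                congr 1
                omega
            _ ≤ η^(m-1) * (g (t j l (Fin.last m)) - g (t j l 0)) := by
                apply mul_le_mul_of_nonneg_right (pow_le_pow_left₀ hh hhb' _) hh
        calc ‖E j l‖ ≤ ((m:ℝ)+2) * C * (g (t j l (Fin.last m)) - g (t j l 0))^m
              / (m.factorial * κ^2) := by exact hcell j l
          _ = K * (g (t j l (Fin.last m)) - g (t j l 0))^m := by rw [hK]; ring
          _ ≤ K * (η^(m-1) * (g (t j l (Fin.last m)) - g (t j l 0))) := by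
              apply mul_le_mul_of_nonneg_left hpow hK0
          _ = K * η^(m-1) * (g (t j l (Fin.last m)) - g (t j l 0)) := by ring
    _ = K * η^(m-1) * (g 1 - g 0) := by
        rw [← hsumh]
        rw [Finset.mul_sum]
        apply Finset.sum_congr rfl
        intro j _
        rw [Finset.mul_sum]
    _ ≤ K * η^(m-1) * σ := by
        apply mul_le_mul_of_nonneg_left hg10σ (by positivity)
    _ ≤ 3*((m:ℝ)+1) / ((m.factorial : ℝ) * κ^2) * C * σ * η^(m-1) := by
        have hmle : ((m:ℝ)+2) ≤ 3*((m:ℝ)+1) := by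
          have : (0:ℝ) ≤ (m:ℝ) := Nat.cast_nonneg m
          linarith
        calc K * η^(m-1) * σ = ((m:ℝ)+2) * C * σ * η^(m-1) / (m.factorial * κ^2) := by
              rw [hK]; ring
          _ ≤ 3*((m:ℝ)+1) * C * σ * η^(m-1) / (m.factorial * κ^2) := by
              gcongr
          _ = 3*((m:ℝ)+1) / ((m.factorial : ℝ) * κ^2) * C * σ * η^(m-1) := by ring

end MainProof
end
end

section
/- Let κ > 1, let n ∈ ℕ with n > 1, let m ∈ ℕ, and set η := max(1/κ, 1 − κ^{−1/(n−1)}). Suppose f ∈ C^{m+1}([0,1]) and g(x) = x for x ∈ [0,1]. Let x_0 = 0 and x_j = κ^{(j−1)/(n−1)−1} for j = 1, …, n, and N_j := 1 for each j. Then for the quadrature Q_{κ,n,m}[f,g] := Σ_{j=1}^n Q_{N_j,κ,m}^{[x_{j−1},x_j]}[f,g] one has |∫_0^1 f(x) e^{iκx} dx − Q_{κ,n,m}[f,g]| ≤ (3(m+1)/(m! κ²)) ‖f^{(m+1)}‖_∞ η^{m−1}. -/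
open scoped BigOperators
open MeasureTheory Set Polynomial

noncomputable section

lemma passAux {G0 G1 : ℝ → ℝ} {a b : ℝ} (ha : 0 ≤ a) (hb : b ≤ 1)
    (hchain : ∀ x ∈ Set.Icc a b, HasDerivWithinAt G0 (G1 x) (Set.Icc (0:ℝ) 1) x) :
    ∀ l : List ℝ, l.Pairwise (· < ·) → (∀ y ∈ l, y ∈ Set.Icc a b ∧ G0 y = 0) →
    ∃ Z : Finset ℝ, (↑Z : Set ℝ) ⊆ Set.Icc a b ∧ l.length ≤ Z.card + 1 ∧
      (∀ y ∈ Z, G1 y = 0) ∧ (∀ x0, x0 ∈ l.head? → ∀ y ∈ Z, x0 < y) := by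
  intro l
  induction l with
  | nil => exact fun _ _ => ⟨∅, by simp, by simp, by simp, by simp⟩
  | cons u l ih =>
    rcases l with _ | ⟨v, l'⟩
    · exact fun _ _ => ⟨∅, by simp, by simp, by simp, by simp⟩
    · intro hs hz
      obtain ⟨Z, hZsub, hZcard, hZzero, hZlt⟩ := ih hs.of_cons (fun y hy => hz y (by simp [hy]))
      have huv : u < v := (List.pairwise_cons.1 hs).1 v (by simp)
      have hu := hz u (by simp)
      have hv := hz v (by simp)
      have hsub : Set.Icc u v ⊆ Set.Icc a b := Set.Icc_subset_Icc hu.1.1 hv.1.2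
      -- Rolle on [u, v]
      have hcont : ContinuousOn G0 (Set.Icc u v) := fun x hx =>
        ((hchain x (hsub hx)).continuousWithinAt).mono
          (Set.Icc_subset_Icc (ha.trans hu.1.1) (hv.1.2.trans hb))
      have hderiv : ∀ x ∈ Set.Ioo u v, HasDerivAt G0 (G1 x) x := by
        intro x hx
        have hxab : x ∈ Set.Icc a b := hsub (Set.Ioo_subset_Icc_self hx)
        have : Set.Icc (0:ℝ) 1 ∈ nhds x :=
          Icc_mem_nhds (lt_of_le_of_lt (ha.trans hu.1.1) hx.1) (lt_of_lt_of_le hx.2 (hv.1.2.trans hb))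
        exact (hchain x hxab).hasDerivAt this
      obtain ⟨ξ, hξmem, hξ⟩ := exists_hasDerivAt_eq_zero huv hcont (hu.2.trans hv.2.symm) hderiv
      have hξZ : ξ ∉ Z := fun hmem => absurd (hZlt v rfl ξ hmem) (not_lt.2 hξmem.2.le)
      refine ⟨insert ξ Z, ?_, ?_, ?_, ?_⟩
      · intro y hy
        rcases Finset.mem_insert.1 (by exact_mod_cast hy) with h | h
        · exact h ▸ hsub (Set.Ioo_subset_Icc_self hξmem)
        · exact hZsub h
      · rw [Finset.card_insert_of_notMem hξZ]; simpa using Nat.succ_le_succ hZcard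
      · intro y hy
        rcases Finset.mem_insert.1 hy with h | h
        · exact h ▸ hξ
        · exact hZzero y h
      · intro x0 hx0 y hy
        have hx0u : x0 = u := by simpa using hx0.symm
        rcases Finset.mem_insert.1 hy with h | h
        · exact hx0u ▸ h ▸ hξmem.1
        · exact hx0u ▸ huv.trans (hZlt v rfl y h)

lemma passFinset {G0 G1 : ℝ → ℝ} {a b : ℝ} (ha : 0 ≤ a) (hb : b ≤ 1)
    (hchain : ∀ x ∈ Set.Icc a b, HasDerivWithinAt G0 (G1 x) (Set.Icc (0:ℝ) 1) x)
    (Z : Finset ℝ) (hsub : (↑Z : Set ℝ) ⊆ Set.Icc a b) (hzero : ∀ y ∈ Z, G0 y = 0) :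
    ∃ Z' : Finset ℝ, (↑Z' : Set ℝ) ⊆ Set.Icc a b ∧ Z.card ≤ Z'.card + 1 ∧
      ∀ y ∈ Z', G1 y = 0 := by
  obtain ⟨Z', h1, h2, h3, _⟩ := passAux ha hb hchain (Z.sort (· ≤ ·)) ((Finset.sortedLT_sort Z).pairwise)
    (fun y hy => by
      have : y ∈ Z := (Finset.mem_sort _).1 hy
      exact ⟨hsub this, hzero y this⟩)
  exact ⟨Z', h1, by simpa [Finset.length_sort] using h2, h3⟩

lemma iterPass {a b : ℝ} (ha : 0 ≤ a) (hb : b ≤ 1) :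
    ∀ (k : ℕ) (G : ℕ → ℝ → ℝ),
    (∀ i < k, ∀ x ∈ Set.Icc a b, HasDerivWithinAt (G i) (G (i+1) x) (Set.Icc (0:ℝ) 1) x) →
    ∀ Z : Finset ℝ, (↑Z : Set ℝ) ⊆ Set.Icc a b → (∀ y ∈ Z, G 0 y = 0) →
    ∃ Z' : Finset ℝ, (↑Z' : Set ℝ) ⊆ Set.Icc a b ∧ Z.card ≤ Z'.card + k ∧
      ∀ y ∈ Z', G k y = 0 := by
  intro k
  induction k with
  | zero => exact fun G _ Z h1 h2 => ⟨Z, h1, le_rfl, h2⟩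
  | succ k ih =>
    intro G hchain Z hsub hzero
    obtain ⟨Z1, h1, h2, h3⟩ := passFinset ha hb
      (hchain 0 (Nat.succ_pos k)) Z hsub hzero
    obtain ⟨Z', g1, g2, g3⟩ := ih (fun i => G (i+1))
      (fun i hi => hchain (i+1) (Nat.succ_lt_succ hi)) Z1 h1 h3
    exact ⟨Z', g1, by omega, g3⟩

lemma existsRolleZero {a b : ℝ} (ha : 0 ≤ a) (hb : b ≤ 1) (k : ℕ) (G : ℕ → ℝ → ℝ)
    (hchain : ∀ i < k, ∀ x ∈ Set.Icc a b, HasDerivWithinAt (G i) (G (i+1) x) (Set.Icc (0:ℝ) 1) x)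
    (Z : Finset ℝ) (hsub : (↑Z : Set ℝ) ⊆ Set.Icc a b) (hzero : ∀ y ∈ Z, G 0 y = 0)
    (hcard : k + 1 ≤ Z.card) :
    ∃ ξ ∈ Set.Icc a b, G k ξ = 0 := by
  obtain ⟨Z', h1, h2, h3⟩ := iterPass ha hb k G hchain Z hsub hzero
  have : 1 ≤ Z'.card := by omega
  obtain ⟨ξ, hξ⟩ := Finset.card_pos.1 this
  exact ⟨ξ, h1 hξ, h3 ξ hξ⟩



lemma iterDerivMonicProd (Z : Finset ℝ) :
    Polynomial.derivative^[Z.card] (∏ z ∈ Z, (Polynomial.X - Polynomial.C z))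
      = Polynomial.C ((Z.card).factorial : ℝ) := by
  set Q := ∏ z ∈ Z, (Polynomial.X - Polynomial.C z) with hQ
  have hmonic : Q.Monic := Polynomial.monic_prod_of_monic _ _ (fun z _ => Polynomial.monic_X_sub_C z)
  have hdeg : Q.natDegree = Z.card := by
    rw [hQ, Polynomial.natDegree_prod _ _ (fun z _ => (Polynomial.monic_X_sub_C z).ne_zero)]
    simp [Polynomial.natDegree_X_sub_C]
  have hdeg0 : (Polynomial.derivative^[Z.card] Q).natDegree = 0 := by
    have := Polynomial.natDegree_iterate_derivative Q Z.card
    omega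
  have := Polynomial.eq_C_of_natDegree_le_zero hdeg0.le
  rw [this, Polynomial.coeff_iterate_derivative]
  have hc : Q.coeff (0 + Z.card) = 1 := by
    simpa [hdeg] using hmonic.coeff_natDegree
  rw [hc]
  simp [Nat.descFactorial_self]

section
variable {m : ℕ} {f : ℝ → ℝ} {C a b : ℝ}

lemma interpErrBound
    (hf : ContDiffOn ℝ (m+1) f (Set.Icc 0 1))
    (hC : ∀ x ∈ Set.Icc (0:ℝ) 1, |iteratedDerivWithin (m+1) f (Set.Icc 0 1) x| ≤ C)
    (ha : 0 ≤ a) (hb : b ≤ 1) (hab : a ≤ b)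
    (t : Fin (m+1) → ℝ) (hmono : StrictMono t) (ht0 : t 0 = a) (htl : t (Fin.last m) = b)
    (k : ℕ) (hk : k ≤ m + 1) (y : ℝ) (hy : y ∈ Set.Icc a b) :
    |iteratedDerivWithin k f (Set.Icc 0 1) y
      - (Polynomial.derivative^[k]
          (Lagrange.interpolate Finset.univ t (fun j => f (t j)))).eval y|
      ≤ C * (b - a) ^ (m + 1 - k) / ((m + 1 - k).factorial : ℝ) := by
  have hC0 : 0 ≤ C := le_trans (abs_nonneg _) (hC 0 (by constructor <;> norm_num))
  have hs : UniqueDiffOn ℝ (Set.Icc (0:ℝ) 1) := uniqueDiffOn_Icc zero_lt_one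
  set s : Set ℝ := Set.Icc (0:ℝ) 1 with hsdef
  have habs : Set.Icc a b ⊆ s := Set.Icc_subset_Icc ha hb
  set p : Polynomial ℝ := Lagrange.interpolate Finset.univ t (fun j => f (t j)) with hp
  set E : ℕ → ℝ → ℝ := fun i y =>
    iteratedDerivWithin i f s y - (Polynomial.derivative^[i] p).eval y with hE
  -- derivative chain
  have chain : ∀ i ≤ m, ∀ x ∈ Set.Icc a b, HasDerivWithinAt (E i) (E (i+1) x) s x := by
    intro i hi x hx
    have hx01 : x ∈ s := habs hx
    have hdiff : DifferentiableWithinAt ℝ (iteratedDerivWithin i f s) s x := by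
      refine (hf.differentiableOn_iteratedDerivWithin ?_ hs) x hx01
      exact_mod_cast Nat.lt_succ_of_le hi
    have h1 : HasDerivWithinAt (iteratedDerivWithin i f s)
        (iteratedDerivWithin (i+1) f s x) s x := by
      rw [iteratedDerivWithin_succ]
      exact hdiff.hasDerivWithinAt
    have h2 : HasDerivWithinAt (fun y => (Polynomial.derivative^[i] p).eval y)
        ((Polynomial.derivative^[i+1] p).eval x) s x := by
      rw [Function.iterate_succ_apply']
      exact (Polynomial.hasDerivAt _ x).hasDerivWithinAt
    exact h1.sub h2
  -- nodes are zeros of E 0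
  have hinj : Set.InjOn t ↑(Finset.univ : Finset (Fin (m+1))) := hmono.injective.injOn
  have hnode : ∀ i, t i ∈ Set.Icc a b := fun i =>
    ⟨ht0 ▸ hmono.monotone (Fin.zero_le i), htl ▸ hmono.monotone (Fin.le_last i)⟩
  set Z0 : Finset ℝ := Finset.image t Finset.univ with hZ0
  have hZ0card : Z0.card = m + 1 := by
    rw [hZ0, Finset.card_image_of_injective _ hmono.injective, Finset.card_univ, Fintype.card_fin]
  have hZ0sub : (↑Z0 : Set ℝ) ⊆ Set.Icc a b := by
    intro z hz
    simp only [hZ0, Finset.coe_image, Set.mem_image] at hz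
    obtain ⟨i, _, rfl⟩ := hz
    exact hnode i
  have hZ0zero : ∀ z ∈ Z0, E 0 z = 0 := by
    intro z hz
    simp only [hZ0, Finset.mem_image] at hz
    obtain ⟨i, _, rfl⟩ := hz
    simp only [hE, Function.iterate_zero, id_eq, iteratedDerivWithin_zero]
    rw [hp, Lagrange.eval_interpolate_at_node (fun j => f (t j)) hinj (Finset.mem_univ i)]
    ring
  -- zeros of E k
  obtain ⟨Z1, hZ1sub, hZ1card, hZ1zero⟩ := iterPass ha hb k E
    (fun i hik x hx => chain i (by omega) x hx) Z0 hZ0sub hZ0zero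
  set r := m + 1 - k with hr
  have hrZ1 : r ≤ Z1.card := by omega
  obtain ⟨Z, hZsub', hZcard⟩ := Finset.exists_subset_card_eq hrZ1
  have hZsub : (↑Z : Set ℝ) ⊆ Set.Icc a b := fun z hz => hZ1sub (Finset.coe_subset.2 hZsub' hz)
  have hZzero : ∀ z ∈ Z, E k z = 0 := fun z hz => hZ1zero z (hZsub' hz)
  have hRHS : 0 ≤ C * (b - a) ^ r / (r.factorial : ℝ) := by
    apply div_nonneg (mul_nonneg hC0 (pow_nonneg (by linarith [hy.1, hy.2]) _))
    positivity
  by_cases hyZ : y ∈ Z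
  · calc |iteratedDerivWithin k f s y - (Polynomial.derivative^[k] p).eval y|
        = |E k y| := rfl
      _ = 0 := by rw [hZzero y hyZ]; simp
      _ ≤ _ := hRHS
  · -- the λ-trick
    set Q : Polynomial ℝ := ∏ z ∈ Z, (Polynomial.X - Polynomial.C z) with hQ
    have hQeval : ∀ u : ℝ, Q.eval u = ∏ z ∈ Z, (u - z) := by
      intro u; rw [hQ, Polynomial.eval_prod]; simp
    have hQy : Q.eval y ≠ 0 := by
      rw [hQeval]
      exact Finset.prod_ne_zero_iff.2 fun z hz => sub_ne_zero.2 (fun h => hyZ (h ▸ hz))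
    set lam : ℝ := E k y / Q.eval y with hlam
    set G : ℕ → ℝ → ℝ := fun j u => E (k + j) u - lam * (Polynomial.derivative^[j] Q).eval u
      with hG
    have hGchain : ∀ j < r, ∀ x ∈ Set.Icc a b, HasDerivWithinAt (G j) (G (j+1) x) s x := by
      intro j hj x hx
      have h1 := chain (k + j) (by omega) x hx
      have h2 : HasDerivWithinAt (fun u => lam * (Polynomial.derivative^[j] Q).eval u)
          (lam * (Polynomial.derivative^[j+1] Q).eval x) s x := by
        rw [Function.iterate_succ_apply']
        exact ((Polynomial.hasDerivAt _ x).hasDerivWithinAt).const_mul lam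
      exact h1.sub h2
    have hGzero : ∀ z ∈ insert y Z, G 0 z = 0 := by
      intro z hz
      rcases Finset.mem_insert.1 hz with rfl | hz
      · simp only [hG, Nat.add_zero, Function.iterate_zero, id_eq]
        rw [hlam]
        field_simp
        ring
      · have h1 := hZzero z hz
        have h2 : Q.eval z = 0 := by
          rw [hQeval]
          exact Finset.prod_eq_zero hz (by ring)
        simp [hG, h1, h2]
    have hinssub : (↑(insert y Z) : Set ℝ) ⊆ Set.Icc a b := by
      intro u hu
      rcases Finset.mem_insert.1 (by exact_mod_cast hu) with rfl | hu
      · exact hy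
      · exact hZsub hu
    have hinscard : r + 1 ≤ (insert y Z).card := by
      rw [Finset.card_insert_of_notMem hyZ, hZcard]
    obtain ⟨ξ, hξmem, hξ⟩ := existsRolleZero ha hb r G hGchain (insert y Z) hinssub hGzero hinscard
    -- G r ξ = 0 gives |lam| * r! ≤ C
    have hQr : Polynomial.derivative^[r] Q = Polynomial.C ((r.factorial : ℝ)) := by
      have := iterDerivMonicProd Z
      rwa [hZcard] at this
    have hpzero : Polynomial.derivative^[m+1] p = 0 := by
      apply Polynomial.iterate_derivative_eq_zero
      rcases eq_or_ne p 0 with hp0 | hp0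
      · simp [hp0]
      · have hd := Lagrange.degree_interpolate_lt (fun j => f (t j)) hinj
        rw [← hp] at hd
        rw [Polynomial.natDegree_lt_iff_degree_lt (n := m+1) hp0]
        simpa using hd
    have hkr : k + r = m + 1 := by omega
    have hGr : G r ξ = iteratedDerivWithin (m+1) f s ξ - lam * (r.factorial : ℝ) := by
      simp only [hG, hE, hkr, hQr, hpzero]
      simp
    have hlamfac : |lam| * (r.factorial : ℝ) ≤ C := by
      have h1 : lam * (r.factorial : ℝ) = iteratedDerivWithin (m+1) f s ξ := by
        have := hξ; rw [hGr] at this; linarith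
      calc |lam| * (r.factorial : ℝ) = |lam * (r.factorial : ℝ)| := by
            rw [abs_mul, abs_of_nonneg (by positivity : (0:ℝ) ≤ (r.factorial : ℝ))]
        _ = |iteratedDerivWithin (m+1) f s ξ| := by rw [h1]
        _ ≤ C := hC ξ (habs hξmem)
    -- conclude
    have hQbound : |Q.eval y| ≤ (b - a) ^ r := by
      rw [hQeval, Finset.abs_prod]
      calc ∏ z ∈ Z, |y - z| ≤ ∏ _z ∈ Z, (b - a) :=
            Finset.prod_le_prod (fun _ _ => abs_nonneg _) (fun z hz => by
              have h1 := hZsub hz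
              rw [abs_sub_le_iff]
              constructor <;> [linarith [hy.2, (h1 : z ∈ Set.Icc a b).1];
                linarith [hy.1, (h1 : z ∈ Set.Icc a b).2]])
        _ = (b - a) ^ r := by rw [Finset.prod_const, hZcard]
    have hEk : E k y = lam * Q.eval y := by
      rw [hlam, div_mul_cancel₀ _ hQy]
    rw [show iteratedDerivWithin k f s y - (Polynomial.derivative^[k] p).eval y = E k y from rfl,
      hEk, abs_mul]
    have hfacpos : (0:ℝ) < (r.factorial : ℝ) := by positivity
    have hlamle : |lam| ≤ C / (r.factorial : ℝ) := by
      rw [le_div_iff₀ hfacpos]; exact hlamfac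
    calc |lam| * |Q.eval y| ≤ (C / (r.factorial : ℝ)) * (b - a) ^ r :=
          mul_le_mul hlamle hQbound (abs_nonneg _) (by positivity)
      _ = C * (b - a) ^ r / (r.factorial : ℝ) := by ring

end

section
variable {m : ℕ} {f : ℝ → ℝ} {C a b κ : ℝ}

lemma subBound (hκ : 0 < κ)
    (hf : ContDiffOn ℝ (m+1) f (Set.Icc 0 1))
    (hC : ∀ x ∈ Set.Icc (0:ℝ) 1, |iteratedDerivWithin (m+1) f (Set.Icc 0 1) x| ≤ C)
    (hm : 1 ≤ m) (ha : 0 ≤ a) (hb : b ≤ 1) (hab : a ≤ b)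
    (t : Fin (m+1) → ℝ) (hmono : StrictMono t) (ht0 : t 0 = a) (htl : t (Fin.last m) = b) :
    ‖(∫ y in a..b,
        ((f y - (Lagrange.interpolate Finset.univ t (fun j => f (t j))).eval y : ℝ) : ℂ)
          * Complex.exp (Complex.I * κ * y))‖
      ≤ C * ((m:ℝ)+2) / ((m.factorial : ℝ) * κ^2) * (b-a)^m := by
  have hC0 : 0 ≤ C := le_trans (abs_nonneg _) (hC 0 (by constructor <;> norm_num))
  have hs : UniqueDiffOn ℝ (Set.Icc (0:ℝ) 1) := uniqueDiffOn_Icc zero_lt_one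
  set s : Set ℝ := Set.Icc (0:ℝ) 1 with hsdef
  have habs : Set.Icc a b ⊆ s := Set.Icc_subset_Icc ha hb
  set p : Polynomial ℝ := Lagrange.interpolate Finset.univ t (fun j => f (t j)) with hp
  set E : ℕ → ℝ → ℝ := fun i y =>
    iteratedDerivWithin i f s y - (Polynomial.derivative^[i] p).eval y with hE
  have chain : ∀ i ≤ m, ∀ x ∈ Set.Icc a b, HasDerivWithinAt (E i) (E (i+1) x) s x := by
    intro i hi x hx
    have hx01 : x ∈ s := habs hx
    have hdiff : DifferentiableWithinAt ℝ (iteratedDerivWithin i f s) s x := by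
      refine (hf.differentiableOn_iteratedDerivWithin ?_ hs) x hx01
      exact_mod_cast Nat.lt_succ_of_le hi
    have h1 : HasDerivWithinAt (iteratedDerivWithin i f s)
        (iteratedDerivWithin (i+1) f s x) s x := by
      rw [iteratedDerivWithin_succ]
      exact hdiff.hasDerivWithinAt
    have h2 : HasDerivWithinAt (fun y => (Polynomial.derivative^[i] p).eval y)
        ((Polynomial.derivative^[i+1] p).eval x) s x := by
      rw [Function.iterate_succ_apply']
      exact (Polynomial.hasDerivAt _ x).hasDerivWithinAt
    exact h1.sub h2
  have hEcont : ∀ i ≤ m + 1, ContinuousOn (E i) (Set.Icc a b) := by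
    intro i hi
    apply ContinuousOn.sub
    · exact (hf.continuousOn_iteratedDerivWithin (by exact_mod_cast hi) hs).mono habs
    · exact (Polynomial.continuous _).continuousOn
  -- derivatives at interior points
  have hDAt : ∀ i ≤ m, ∀ x ∈ Set.Ioo a b, HasDerivAt (E i) (E (i+1) x) x := by
    intro i hi x hx
    have hmem : s ∈ nhds x :=
      Icc_mem_nhds (lt_of_le_of_lt ha hx.1) (lt_of_lt_of_le hx.2 hb)
    exact (chain i hi x (Set.Ioo_subset_Icc_self hx)).hasDerivAt hmem
  set c : ℂ := Complex.I * κ with hc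
  have hcne : c ≠ 0 := by
    simp [hc, Complex.I_ne_zero, Complex.ext_iff]
    exact ne_of_gt hκ
  have hcabs : ‖c‖ = κ := by
    rw [hc, norm_mul, Complex.norm_I, one_mul, Complex.norm_real, Real.norm_eq_abs, abs_of_pos hκ]
  have hexpabs : ∀ u : ℝ, ‖Complex.exp (c * u)‖ = 1 := by
    intro u
    rw [Complex.norm_exp]
    have : (c * u).re = 0 := by simp [hc]
    rw [this, Real.exp_zero]
  -- exp deriv
  have hexpD : ∀ u : ℝ, HasDerivAt (fun y : ℝ => Complex.exp (c * y)) (c * Complex.exp (c * u)) u := by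
    intro u
    have h0 : HasDerivAt (fun z : ℂ => c * z) c (u : ℂ) := by
      simpa using (hasDerivAt_id (u : ℂ)).const_mul c
    have h1 := h0.cexp
    simpa [mul_comm] using h1.comp_ofReal
  -- integrability
  have hInt : ∀ i ≤ m + 1, IntervalIntegrable
      (fun y => ((E i y : ℝ) : ℂ) * Complex.exp (c * y)) volume a b := by
    intro i hi
    apply ContinuousOn.intervalIntegrable
    rw [Set.uIcc_of_le hab]
    exact ((Complex.continuous_ofReal.comp_continuousOn (hEcont i hi)).mul
      ((Complex.continuous_exp.comp (continuous_const.mul Complex.continuous_ofReal)).continuousOn))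
  -- FTC step : for i < m :  ∫ (E (i+1) * exp / c + E i * exp) = boundary
  have hFTC : ∀ i ≤ m,
      (∫ y in a..b, (((E (i+1) y : ℝ) : ℂ) * Complex.exp (c * y) / c
          + ((E i y : ℝ) : ℂ) * Complex.exp (c * y)))
        = ((E i b : ℝ) : ℂ) * Complex.exp (c * b) / c
          - ((E i a : ℝ) : ℂ) * Complex.exp (c * a) / c := by
    intro i hi
    have := intervalIntegral.integral_eq_sub_of_hasDeriv_right_of_le hab
      (f := fun y => ((E i y : ℝ) : ℂ) * Complex.exp (c * y) / c)
      (f' := fun y => ((E (i+1) y : ℝ) : ℂ) * Complex.exp (c * y) / c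
          + ((E i y : ℝ) : ℂ) * Complex.exp (c * y))
      ?_ ?_ ?_
    · exact this
    · apply ContinuousOn.div_const
      exact ((Complex.continuous_ofReal.comp_continuousOn (hEcont i (by omega))).mul
        ((Complex.continuous_exp.comp (continuous_const.mul Complex.continuous_ofReal)).continuousOn))
    · intro x hx
      have hD : HasDerivAt (fun y => ((E i y : ℝ) : ℂ) * Complex.exp (c * y) / c)
          (((E (i+1) x : ℝ) : ℂ) * Complex.exp (c * x) / c
            + ((E i x : ℝ) : ℂ) * Complex.exp (c * x)) x := by
        have h1 : HasDerivAt (fun y : ℝ => ((E i y : ℝ) : ℂ)) ((E (i+1) x : ℝ) : ℂ) x :=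
          (hDAt i hi x hx).ofReal_comp
        have h2 := (h1.mul (hexpD x)).div_const c
        have heq : (((E (i+1) x : ℝ) : ℂ) * Complex.exp (c * x)
            + ((E i x : ℝ) : ℂ) * (c * Complex.exp (c * x))) / c
            = ((E (i+1) x : ℝ) : ℂ) * Complex.exp (c * x) / c
              + ((E i x : ℝ) : ℂ) * Complex.exp (c * x) := by
          field_simp
        rwa [heq] at h2
      exact hD.hasDerivWithinAt
    · exact ((hInt (i+1) (by omega)).div_const c).add (hInt i (by omega))
  -- E 0 vanishes at a and b
  have hinj : Set.InjOn t ↑(Finset.univ : Finset (Fin (m+1))) := hmono.injective.injOn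
  have hE0node : ∀ i, E 0 (t i) = 0 := by
    intro i
    simp only [hE, Function.iterate_zero, id_eq, iteratedDerivWithin_zero]
    rw [hp, Lagrange.eval_interpolate_at_node (fun j => f (t j)) hinj (Finset.mem_univ i)]
    ring
  have hE0a : E 0 a = 0 := ht0 ▸ hE0node 0
  have hE0b : E 0 b = 0 := htl ▸ hE0node (Fin.last m)
  -- first IBP
  have hIBP1 : (∫ y in a..b, ((E 0 y : ℝ) : ℂ) * Complex.exp (c * y))
      = - (1/c) * ∫ y in a..b, ((E 1 y : ℝ) : ℂ) * Complex.exp (c * y) := by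
    have h0 := hFTC 0 (by omega)
    rw [hE0a, hE0b] at h0
    simp only [Complex.ofReal_zero, zero_mul, zero_div, sub_zero] at h0
    rw [intervalIntegral.integral_add ((hInt 1 (by omega)).div_const c) (hInt 0 (by omega))] at h0
    have : ∫ y in a..b, ((E 1 y : ℝ) : ℂ) * Complex.exp (c * y) / c
        = (1/c) * ∫ y in a..b, ((E 1 y : ℝ) : ℂ) * Complex.exp (c * y) := by
      rw [intervalIntegral.integral_div]
      ring
    rw [this] at h0
    linear_combination h0
  -- second IBP
  have hIBP2 : (∫ y in a..b, ((E 1 y : ℝ) : ℂ) * Complex.exp (c * y))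
      = ((E 1 b : ℝ) : ℂ) * Complex.exp (c * b) / c
        - ((E 1 a : ℝ) : ℂ) * Complex.exp (c * a) / c
        - (1/c) * ∫ y in a..b, ((E 2 y : ℝ) : ℂ) * Complex.exp (c * y) := by
    have h1 := hFTC 1 hm
    rw [intervalIntegral.integral_add ((hInt 2 (by omega)).div_const c) (hInt 1 (by omega))] at h1
    have : ∫ y in a..b, ((E 2 y : ℝ) : ℂ) * Complex.exp (c * y) / c
        = (1/c) * ∫ y in a..b, ((E 2 y : ℝ) : ℂ) * Complex.exp (c * y) := by
      rw [intervalIntegral.integral_div]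
      ring
    rw [this] at h1
    linear_combination h1
  -- error bounds on E 1 and E 2
  have hB1 : ∀ u ∈ Set.Icc a b, |E 1 u| ≤ C * (b-a)^m / (m.factorial : ℝ) := by
    intro u hu
    have h := interpErrBound hf hC ha hb hab t hmono ht0 htl 1 (by omega) u hu
    rw [show m + 1 - 1 = m from by omega] at h
    exact h
  have hB2 : ∀ u ∈ Set.Icc a b, |E 2 u| ≤ C * (b-a)^(m-1) / ((m-1).factorial : ℝ) := by
    intro u hu
    have h := interpErrBound hf hC ha hb hab t hmono ht0 htl 2 (by omega) u hu
    rw [show m + 1 - 2 = m - 1 from by omega] at h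
    exact h
  -- assemble
  have habsum : ‖(∫ y in a..b, ((E 0 y : ℝ) : ℂ) * Complex.exp (c * y))‖
      ≤ (1/κ) * ((C * (b-a)^m / (m.factorial : ℝ)) / κ + (C * (b-a)^m / (m.factorial : ℝ)) / κ
        + (1/κ) * (C * (b-a)^(m-1) / ((m-1).factorial : ℝ) * (b-a))) := by
    rw [hIBP1, norm_mul, hIBP2]
    have hb2int : ‖(∫ y in a..b, ((E 2 y : ℝ) : ℂ) * Complex.exp (c * y))‖
        ≤ C * (b-a)^(m-1) / ((m-1).factorial : ℝ) * (b - a) := by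
      have := intervalIntegral.norm_integral_le_of_norm_le_const
        (C := C * (b-a)^(m-1) / ((m-1).factorial : ℝ))
        (f := fun y => ((E 2 y : ℝ) : ℂ) * Complex.exp (c * y)) (a := a) (b := b) ?_
      · rw [abs_of_nonneg (by linarith)] at this
        exact this
      · intro y hy
        rw [Set.uIoc_of_le hab] at hy
        have hy' : y ∈ Set.Icc a b := Set.Ioc_subset_Icc_self hy
        rw [norm_mul]
        have h1 : ‖((E 2 y : ℝ) : ℂ)‖ = |E 2 y| := Complex.norm_real _
        rw [h1, hexpabs y, mul_one]
        exact hB2 y hy'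
    have hterm : ∀ u ∈ Set.Icc a b, ‖(((E 1 u : ℝ) : ℂ) * Complex.exp (c * u) / c)‖
        ≤ (C * (b-a)^m / (m.factorial : ℝ)) / κ := by
      intro u hu
      rw [norm_div, norm_mul, hcabs, hexpabs u, mul_one, Complex.norm_real, Real.norm_eq_abs]
      gcongr
      exact hB1 u hu
    have habsc : ‖(-(1/c))‖ = 1/κ := by
      rw [norm_neg, norm_div, norm_one, hcabs]
    have tri : ∀ X Y : ℂ, ‖(X - Y)‖ ≤ ‖X‖ + ‖Y‖ := fun X Y => by
      simpa using norm_sub_le X Y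
    have t1 := hterm b (Set.right_mem_Icc.2 hab)
    have t2 := hterm a (Set.left_mem_Icc.2 hab)
    have t3 : ‖((1/c) * ∫ y in a..b, ((E 2 y : ℝ) : ℂ) * Complex.exp (c * y))‖
        ≤ (1/κ) * (C * (b-a)^(m-1) / ((m-1).factorial : ℝ) * (b-a)) := by
      rw [norm_mul, norm_div, norm_one, hcabs]
      exact mul_le_mul_of_nonneg_left hb2int (by positivity)
    rw [habsc]
    refine mul_le_mul_of_nonneg_left ?_ (by positivity)
    calc ‖(((E 1 b : ℝ) : ℂ) * Complex.exp (c * b) / c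
            - ((E 1 a : ℝ) : ℂ) * Complex.exp (c * a) / c
            - (1/c) * ∫ y in a..b, ((E 2 y : ℝ) : ℂ) * Complex.exp (c * y))‖
        ≤ ‖(((E 1 b : ℝ) : ℂ) * Complex.exp (c * b) / c
            - ((E 1 a : ℝ) : ℂ) * Complex.exp (c * a) / c)‖
          + ‖((1/c) * ∫ y in a..b, ((E 2 y : ℝ) : ℂ) * Complex.exp (c * y))‖ := tri _ _
      _ ≤ (‖(((E 1 b : ℝ) : ℂ) * Complex.exp (c * b) / c)‖
            + ‖(((E 1 a : ℝ) : ℂ) * Complex.exp (c * a) / c)‖)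
          + ‖((1/c) * ∫ y in a..b, ((E 2 y : ℝ) : ℂ) * Complex.exp (c * y))‖ :=
          add_le_add (tri _ _) le_rfl
      _ ≤ (C * (b-a)^m / (m.factorial : ℝ)) / κ + (C * (b-a)^m / (m.factorial : ℝ)) / κ
          + (1/κ) * (C * (b-a)^(m-1) / ((m-1).factorial : ℝ) * (b-a)) :=
          add_le_add (add_le_add t1 t2) t3
  -- rewrite the goal integrand
  have hgoal : (∫ y in a..b, ((f y - p.eval y : ℝ) : ℂ) * Complex.exp (c * y))
      = ∫ y in a..b, ((E 0 y : ℝ) : ℂ) * Complex.exp (c * y) := by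
    apply intervalIntegral.integral_congr
    intro y _
    have hEy : E 0 y = f y - p.eval y := by
      show iteratedDerivWithin 0 f s y - (Polynomial.derivative^[0] p).eval y = _
      rw [iteratedDerivWithin_zero, Function.iterate_zero_apply]
    show ((f y - p.eval y : ℝ) : ℂ) * Complex.exp (c * y) = ((E 0 y : ℝ) : ℂ) * Complex.exp (c * y)
    rw [hEy]
  rw [hgoal]
  refine habsum.trans ?_
  have hm' : 0 < m := hm
  have hfac : ((m:ℝ)) * ((m-1).factorial : ℝ) = (m.factorial : ℝ) := by
    exact_mod_cast Nat.mul_factorial_pred hm'.ne'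
  have hmpos : (0:ℝ) < (m:ℝ) := by exact_mod_cast hm'
  have hfacinv : ((m-1).factorial : ℝ) = (m.factorial : ℝ) / (m:ℝ) := by
    field_simp [← hfac]
    linarith [hfac]
  have hpow : (b-a)^(m-1) * (b-a) = (b-a)^m := by
    rw [← pow_succ]
    congr 1
    omega
  have hfacpos : (0:ℝ) < (m.factorial : ℝ) := by positivity
  have heq : (1/κ) * ((C * (b-a)^m / (m.factorial : ℝ)) / κ + (C * (b-a)^m / (m.factorial : ℝ)) / κ
      + (1/κ) * (C * (b-a)^(m-1) / ((m-1).factorial : ℝ) * (b-a)))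
      = C * ((m:ℝ)+2) / ((m.factorial : ℝ) * κ^2) * (b-a)^m := by
    rw [hfacinv, ← hpow]
    field_simp
    ring
  rw [heq]

end


/-- error bound for the composite moment-free Filon rule with the linear
oscillator `g(x) = x` on the graded partition `x_0 = 0`, `x_j = κ^{(j-1)/(n-1)-1}`,
with `N_j = 1` on each subinterval. -/
theorem stmt_2 (κ : ℝ) (hκ : 1 < κ) (n m : ℕ) (hn : 1 < n) (hm : 1 ≤ m)
    (f : ℝ → ℝ) (C : ℝ)
    (hf : ContDiffOn ℝ (m+1) f (Set.Icc 0 1))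
    (hC : ∀ x ∈ Set.Icc (0:ℝ) 1,
      |iteratedDerivWithin (m+1) f (Set.Icc 0 1) x| ≤ C)
    (x : ℕ → ℝ) (hx0 : x 0 = 0)
    (hxj : ∀ j, 1 ≤ j → j ≤ n → x j = κ ^ (((j:ℝ)-1)/((n:ℝ)-1) - 1))
    (t : Fin n → Fin 1 → Fin (m+1) → ℝ)
    (ht : ∀ j : Fin n, FilonNodes (x j.val) (x (j.val+1)) m 1 (t j)) :
    ‖oscInt κ f (fun y => y) 0 1 -
        ∑ j : Fin n, compFilonQ κ m 1 (fun y => y) f (t j)‖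
      ≤ 3*((m:ℝ)+1) / ((m.factorial : ℝ) * κ^2) * C *
          (max (1/κ) (1 - κ ^ (-(1:ℝ)/((n:ℝ)-1))))^(m-1) := by
  have hκ0 : (0:ℝ) < κ := lt_trans zero_lt_one hκ
  have hC0 : 0 ≤ C := le_trans (abs_nonneg _) (hC 0 (by constructor <;> norm_num))
  have hnn : (0:ℝ) < (n:ℝ) - 1 := by
    have : (1:ℝ) < (n:ℝ) := by exact_mod_cast hn
    linarith
  set η : ℝ := max (1/κ) (1 - κ ^ (-(1:ℝ)/((n:ℝ)-1))) with hη
  have hκn1 : κ ^ (-(1:ℝ)/((n:ℝ)-1)) ≤ 1 :=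
    Real.rpow_le_one_of_one_le_of_nonpos hκ.le
      (div_nonpos_of_nonpos_of_nonneg (by norm_num) hnn.le)
  have hη0 : 0 ≤ η := le_trans (by positivity) (le_max_left _ _)
  -- partition facts
  have hxle1 : ∀ j, j ≤ n → x j ≤ 1 := by
    intro j hj
    rcases Nat.eq_zero_or_pos j with rfl | hj1
    · rw [hx0]; norm_num
    · rw [hxj j hj1 hj]
      apply Real.rpow_le_one_of_one_le_of_nonpos hκ.le
      have hjn : (j:ℝ) ≤ (n:ℝ) := by exact_mod_cast hj
      rw [sub_nonpos, div_le_one hnn]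
      linarith
  have hx0le : ∀ j, j ≤ n → 0 ≤ x j := by
    intro j hj
    rcases Nat.eq_zero_or_pos j with rfl | hj1
    · rw [hx0]
    · rw [hxj j hj1 hj]
      positivity
  have hxmono : ∀ j, j + 1 ≤ n → x j ≤ x (j+1) := by
    intro j hj
    rcases Nat.eq_zero_or_pos j with rfl | hj1
    · rw [hx0]; exact hx0le 1 hj
    · rw [hxj j hj1 (by omega), hxj (j+1) (by omega) hj]
      apply Real.rpow_le_rpow_of_exponent_le hκ.le
      have h1 : ((j:ℝ)-1)/((n:ℝ)-1) ≤ ((j:ℝ)+1-1)/((n:ℝ)-1) := by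
        gcongr
        linarith
      push_cast
      linarith [h1]
  have hstep : ∀ j, j + 1 ≤ n → x (j+1) - x j ≤ η := by
    intro j hj
    rcases Nat.eq_zero_or_pos j with rfl | hj1
    · have : x 1 = 1/κ := by
        rw [hxj 1 le_rfl (by omega)]
        have : ((1:ℕ):ℝ) - 1 = 0 := by norm_num
        rw [show (((1:ℕ):ℝ)-1)/((n:ℝ)-1) - 1 = -1 by rw [this]; field_simp; ring]
        rw [Real.rpow_neg_one]
        exact (one_div κ).symm
      rw [hx0, this, sub_zero]
      exact le_max_left _ _
    · have hxx : x j = x (j+1) * κ ^ (-(1:ℝ)/((n:ℝ)-1)) := by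
        rw [hxj j hj1 (by omega), hxj (j+1) (by omega) hj]
        rw [← Real.rpow_add hκ0]
        congr 1
        push_cast
        field_simp
        ring
      have hx1 : x (j+1) ≤ 1 := hxle1 (j+1) hj
      have hx0' : 0 ≤ x (j+1) := hx0le (j+1) hj
      calc x (j+1) - x j = x (j+1) * (1 - κ ^ (-(1:ℝ)/((n:ℝ)-1))) := by
            rw [hxx]; ring
        _ ≤ 1 * (1 - κ ^ (-(1:ℝ)/((n:ℝ)-1))) :=
            mul_le_mul_of_nonneg_right hx1 (by linarith)
        _ = 1 - κ ^ (-(1:ℝ)/((n:ℝ)-1)) := one_mul _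
        _ ≤ η := le_max_right _ _
  have hxn : x n = 1 := by
    rw [hxj n (by omega) le_rfl]
    rw [show ((n:ℝ)-1)/((n:ℝ)-1) - 1 = 0 by field_simp; ring]
    exact Real.rpow_zero κ
  have hsum : ∑ j ∈ Finset.range n, (x (j+1) - x j) = 1 := by
    rw [Finset.sum_range_sub]
    rw [hxn, hx0]
    ring
  -- node facts
  have hnodes : ∀ j : Fin n, StrictMono (t j 0) ∧ t j 0 0 = x j.val ∧
      t j 0 (Fin.last m) = x (j.val+1) := by
    intro j
    obtain ⟨h1, h2, h3⟩ := ht j 0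
    refine ⟨h1, ?_, ?_⟩
    · rw [h2]; norm_num
    · rw [h3]; norm_num
  have hInt1 : ∀ i, i + 1 ≤ n → IntervalIntegrable
      (fun y => (f y:ℂ) * Complex.exp (Complex.I*κ*y)) volume (x i) (x (i+1)) := by
    intro i hi
    apply ContinuousOn.intervalIntegrable
    rw [Set.uIcc_of_le (hxmono i hi)]
    have hsub : Set.Icc (x i) (x (i+1)) ⊆ Set.Icc 0 1 :=
      Set.Icc_subset_Icc (hx0le i (by omega)) (hxle1 (i+1) hi)
    exact ((Complex.continuous_ofReal.comp_continuousOn (hf.continuousOn.mono hsub)).mul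
      ((Complex.continuous_exp.comp (continuous_const.mul Complex.continuous_ofReal)).continuousOn))
  have hInt2 : ∀ j : Fin n, IntervalIntegrable
      (fun y => (((Lagrange.interpolate Finset.univ (t j 0) (fun i => f (t j 0 i))).eval y : ℝ):ℂ)
        * Complex.exp (Complex.I*κ*y)) volume (x j.val) (x (j.val+1)) := by
    intro j
    apply ContinuousOn.intervalIntegrable
    exact ((Complex.continuous_ofReal.comp (Polynomial.continuous _)).mul
      (Complex.continuous_exp.comp (continuous_const.mul Complex.continuous_ofReal))).continuousOn
  have hsplit : oscInt κ f (fun y => y) 0 1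
      = ∑ j : Fin n, ∫ y in (x j.val)..(x (j.val+1)), (f y:ℂ) * Complex.exp (Complex.I*κ*y) := by
    simp only [oscInt]
    rw [Fin.sum_univ_eq_sum_range
      (fun i => ∫ y in (x i)..(x (i+1)), (f y:ℂ) * Complex.exp (Complex.I*κ*y)) n]
    rw [intervalIntegral.sum_integral_adjacent_intervals (fun k hk => hInt1 k hk)]
    rw [hx0, hxn]
  have hmain : oscInt κ f (fun y => y) 0 1 - ∑ j : Fin n, compFilonQ κ m 1 (fun y => y) f (t j)
      = ∑ j : Fin n, ∫ y in (x j.val)..(x (j.val+1)),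
          ((f y - (Lagrange.interpolate Finset.univ (t j 0) (fun i => f (t j 0 i))).eval y : ℝ):ℂ)
            * Complex.exp (Complex.I*κ*y) := by
    rw [hsplit, ← Finset.sum_sub_distrib]
    refine Finset.sum_congr rfl (fun j _ => ?_)
    simp only [compFilonQ, Fin.sum_univ_one, filonQ]
    rw [(hnodes j).2.1, (hnodes j).2.2]
    rw [← intervalIntegral.integral_sub (hInt1 j.val j.isLt) (hInt2 j)]
    apply intervalIntegral.integral_congr
    intro y _
    push_cast
    ring
  rw [hmain]
  have hbound : ∀ j : Fin n, ‖(∫ y in (x j.val)..(x (j.val+1)),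
        ((f y - (Lagrange.interpolate Finset.univ (t j 0) (fun i => f (t j 0 i))).eval y : ℝ):ℂ)
          * Complex.exp (Complex.I*κ*y))‖
      ≤ C*((m:ℝ)+2)/((m.factorial:ℝ)*κ^2) * (x (j.val+1) - x j.val)^m := fun j =>
    subBound hκ0 hf hC hm (hx0le j.val (by omega)) (hxle1 (j.val+1) j.isLt)
      (hxmono j.val j.isLt) (t j 0) (hnodes j).1 (hnodes j).2.1 (hnodes j).2.2
  have hsum2 : ∑ i ∈ Finset.range n, (x (i+1) - x i)^m ≤ η^(m-1) := by
    calc ∑ i ∈ Finset.range n, (x (i+1) - x i)^m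
        ≤ ∑ i ∈ Finset.range n, η^(m-1) * (x (i+1) - x i) := by
          apply Finset.sum_le_sum
          intro i hi
          have hi' : i + 1 ≤ n := Finset.mem_range.1 hi
          have h0 : 0 ≤ x (i+1) - x i := by linarith [hxmono i hi']
          have h1 : x (i+1) - x i ≤ η := hstep i hi'
          calc (x (i+1) - x i)^m = (x (i+1) - x i)^(m-1) * (x (i+1) - x i) := by
                rw [← pow_succ]; congr 1; omega
            _ ≤ η^(m-1) * (x (i+1) - x i) :=
                mul_le_mul_of_nonneg_right (pow_le_pow_left₀ h0 h1 _) h0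
      _ = η^(m-1) * ∑ i ∈ Finset.range n, (x (i+1) - x i) := by rw [← Finset.mul_sum]
      _ = η^(m-1) := by rw [hsum, mul_one]
  have hK : 0 ≤ C*((m:ℝ)+2)/((m.factorial:ℝ)*κ^2) := by positivity
  calc ‖(∑ j : Fin n, ∫ y in (x j.val)..(x (j.val+1)),
          ((f y - (Lagrange.interpolate Finset.univ (t j 0) (fun i => f (t j 0 i))).eval y : ℝ):ℂ)
            * Complex.exp (Complex.I*κ*y))‖
      ≤ ∑ j : Fin n, ‖(∫ y in (x j.val)..(x (j.val+1)),
          ((f y - (Lagrange.interpolate Finset.univ (t j 0) (fun i => f (t j 0 i))).eval y : ℝ):ℂ)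
            * Complex.exp (Complex.I*κ*y))‖ := norm_sum_le _ _
    _ ≤ ∑ j : Fin n, C*((m:ℝ)+2)/((m.factorial:ℝ)*κ^2) * (x (j.val+1) - x j.val)^m :=
        Finset.sum_le_sum (fun j _ => hbound j)
    _ = C*((m:ℝ)+2)/((m.factorial:ℝ)*κ^2) * ∑ i ∈ Finset.range n, (x (i+1) - x i)^m := by
        rw [Fin.sum_univ_eq_sum_range
          (fun i => C*((m:ℝ)+2)/((m.factorial:ℝ)*κ^2) * (x (i+1) - x i)^m) n, ← Finset.mul_sum]
    _ ≤ C*((m:ℝ)+2)/((m.factorial:ℝ)*κ^2) * η^(m-1) := mul_le_mul_of_nonneg_left hsum2 hK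
    _ ≤ 3*((m:ℝ)+1) / ((m.factorial : ℝ) * κ^2) * C * η^(m-1) := by
        apply mul_le_mul_of_nonneg_right ?_ (pow_nonneg hη0 _)
        rw [div_mul_eq_mul_div]
        gcongr ?_ / ?_
        · nlinarith [hC0, Nat.cast_nonneg (α := ℝ) m]


end
end

section
/- There exists a positive constant c such that for all real κ > 1, all n ∈ ℕ satisfying (n−1)(ln(n−2+e) − 1) ≥ ln κ, and all integers j with 2 ≤ j ≤ n, one has (κ^{1/(n−1)} − 1)^{m_j−2}/(m_j−2)! ≤ c (n−2)^{−1/2}, where m_j := ⌈n(n−1)/(n+1−j)⌉. -/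
/-- Auxiliary: `b^(N+d)/(N+d)! ≤ b^N/N!` when `0 ≤ b ≤ N+1`. -/
lemma aux_fact_decay (b : ℝ) (hb : 0 ≤ b) (N : ℕ) (hbN : b ≤ (N : ℝ) + 1) :
    ∀ d : ℕ, b ^ (N + d) / (Nat.factorial (N + d)) ≤ b ^ N / (Nat.factorial N) := by
  intro d
  induction d with
  | zero => simp
  | succ d ih =>
    refine le_trans ?_ ih
    have hfac : (0:ℝ) < (Nat.factorial (N + d)) := by positivity
    have hstep : b ^ (N + (d+1)) / (Nat.factorial (N + (d+1)))
        = (b ^ (N + d) / (Nat.factorial (N + d))) * (b / ((N:ℝ) + d + 1)) := by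
      have : (N + (d+1)) = (N + d) + 1 := by ring
      rw [this, pow_succ, Nat.factorial_succ, Nat.cast_mul, div_mul_div_comm]
      push_cast
      ring
    rw [hstep]
    have hratio : b / ((N:ℝ) + d + 1) ≤ 1 := by
      rw [div_le_one (by positivity)]
      calc b ≤ (N:ℝ) + 1 := hbN
        _ ≤ (N:ℝ) + d + 1 := by
          have : (0:ℝ) ≤ (d:ℝ) := by positivity
          linarith
    calc (b ^ (N + d) / (Nat.factorial (N + d))) * (b / ((N:ℝ) + d + 1))
        ≤ (b ^ (N + d) / (Nat.factorial (N + d))) * 1 := by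
          apply mul_le_mul_of_nonneg_left hratio (by positivity)
      _ = b ^ (N + d) / (Nat.factorial (N + d)) := by ring

/-- Auxiliary Stirling lower bound: `a·√N·(N/e)^N ≤ N!` for `N ≥ 1`, where `a` is a
positive lower bound of the Stirling sequence. -/
lemma aux_stirling (a : ℝ) (ha : 0 < a)
    (hstir : ∀ n : ℕ, a ≤ Stirling.stirlingSeq (n + 1)) (N : ℕ) (hN : 1 ≤ N) :
    a * Real.sqrt N * ((N:ℝ) / Real.exp 1) ^ N ≤ (Nat.factorial N : ℝ) := by
  have h := hstir (N - 1)
  have hN' : N - 1 + 1 = N := by omega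
  rw [hN'] at h
  unfold Stirling.stirlingSeq at h
  have hNpos : (0:ℝ) < (N:ℝ) := by exact_mod_cast Nat.lt_of_lt_of_le Nat.zero_lt_one hN
  have hpos : (0:ℝ) < Real.sqrt (2 * N) * ((N:ℝ) / Real.exp 1) ^ N := by
    positivity
  rw [le_div_iff₀ hpos] at h
  refine le_trans ?_ h
  have hsq : Real.sqrt ((N:ℕ):ℝ) ≤ Real.sqrt (2 * ((N:ℕ):ℝ)) := by
    apply Real.sqrt_le_sqrt; linarith
  calc a * Real.sqrt ((N:ℕ):ℝ) * (((N:ℕ):ℝ) / Real.exp 1) ^ N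
      ≤ a * Real.sqrt (2 * ((N:ℕ):ℝ)) * (((N:ℕ):ℝ) / Real.exp 1) ^ N := by
        apply mul_le_mul_of_nonneg_right _ (by positivity)
        exact mul_le_mul_of_nonneg_left hsq ha.le
    _ = a * (Real.sqrt (2 * N) * ((N:ℝ) / Real.exp 1) ^ N) := by
        push_cast; ring

/-- with `m_j = ⌈n(n-1)/(n+1-j)⌉`, there is a constant `c > 0` such that for
all `κ > 1` and `n` with `(n-1)(ln(n-2+e) - 1) ≥ ln κ`, and all `2 ≤ j ≤ n`,
`(κ^{1/(n-1)} - 1)^{m_j-2}/(m_j-2)! ≤ c (n-2)^{-1/2}`. -/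
theorem stmt_4 :
    ∃ c : ℝ, 0 < c ∧ ∀ (κ : ℝ) (n : ℕ), 1 < κ →
      Real.log κ ≤ ((n:ℝ)-1) * (Real.log ((n:ℝ)-2+Real.exp 1) - 1) →
      ∀ j : ℕ, 2 ≤ j → j ≤ n →
        (κ ^ ((1:ℝ)/((n:ℝ)-1)) - 1) ^ (⌈((n:ℝ)*((n:ℝ)-1))/((n:ℝ)+1-(j:ℝ))⌉₊ - 2) /
            ((Nat.factorial (⌈((n:ℝ)*((n:ℝ)-1))/((n:ℝ)+1-(j:ℝ))⌉₊ - 2) : ℝ))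
          ≤ c * ((n:ℝ)-2) ^ (-(1:ℝ)/2) := by
  obtain ⟨a, ha, hstir⟩ := Stirling.stirlingSeq'_bounded_by_pos_constant
  refine ⟨1/a, by positivity, ?_⟩
  intro κ n hκ hlog j hj2 hjn
  have hn2 : 2 ≤ n := le_trans hj2 hjn
  -- n ≥ 3
  have hn3 : 3 ≤ n := by
    rcases Nat.lt_or_ge n 3 with h | h
    · exfalso
      interval_cases n
      · have : ((2:ℕ):ℝ) - 2 + Real.exp 1 = Real.exp 1 := by push_cast; ring
        rw [this, Real.log_exp] at hlog
        have := Real.log_pos hκ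
        norm_num at hlog
        linarith
    · exact h
  have hn3' : (3:ℝ) ≤ (n:ℝ) := by exact_mod_cast hn3
  set e := Real.exp 1 with he
  have he1 : 1 < e := by rw [he]; linarith [Real.add_one_le_exp 1]
  set A : ℝ := (n:ℝ) - 2 with hA
  have hA1 : 1 ≤ A := by rw [hA]; linarith
  set x : ℝ := κ ^ ((1:ℝ)/((n:ℝ)-1)) - 1 with hx
  have hn1pos : (0:ℝ) < (n:ℝ) - 1 := by linarith
  have hx0 : 0 ≤ x := by
    rw [hx, sub_nonneg]
    exact Real.one_le_rpow hκ.le (by positivity)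
  -- x ≤ A / e
  have hxA : x ≤ A / e := by
    have h1 : κ ^ ((1:ℝ)/((n:ℝ)-1)) ≤ (A + e) / e := by
      have hAe : (0:ℝ) < A + e := by linarith
      have hlog2 : ((1:ℝ)/((n:ℝ)-1)) * Real.log κ ≤ Real.log (A + e) - 1 := by
        have := mul_le_mul_of_nonneg_left hlog (le_of_lt (by positivity :
          (0:ℝ) < (1:ℝ)/((n:ℝ)-1)))
        calc ((1:ℝ)/((n:ℝ)-1)) * Real.log κ
            ≤ ((1:ℝ)/((n:ℝ)-1)) * (((n:ℝ)-1) * (Real.log ((n:ℝ)-2+e) - 1)) := this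
          _ = Real.log (A + e) - 1 := by
              rw [hA]; field_simp
        
      calc κ ^ ((1:ℝ)/((n:ℝ)-1)) = Real.exp (((1:ℝ)/((n:ℝ)-1)) * Real.log κ) := by
            rw [Real.rpow_def_of_pos (by linarith : (0:ℝ) < κ), mul_comm]
        _ ≤ Real.exp (Real.log (A + e) - 1) := Real.exp_le_exp.mpr hlog2
        _ = (A + e) / e := by
            rw [Real.exp_sub, Real.exp_log hAe]
    have : (A + e) / e - 1 = A / e := by field_simp; ring
    rw [hx]
    linarith [h1, this]
  -- the ceiling value
  set m : ℕ := ⌈((n:ℝ)*((n:ℝ)-1))/((n:ℝ)+1-(j:ℝ))⌉₊ with hm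
  have hjn' : (j:ℝ) ≤ (n:ℝ) := by exact_mod_cast hjn
  have hj2' : (2:ℝ) ≤ (j:ℝ) := by exact_mod_cast hj2
  have hdpos : (0:ℝ) < (n:ℝ) + 1 - (j:ℝ) := by linarith
  have hnm : n ≤ m := by
    have hval : (n:ℝ) ≤ ((n:ℝ)*((n:ℝ)-1))/((n:ℝ)+1-(j:ℝ)) := by
      rw [le_div_iff₀ hdpos]
      have : (n:ℝ) + 1 - (j:ℝ) ≤ (n:ℝ) - 1 := by linarith
      nlinarith [hn3', this]
    have h2 : (n:ℝ) ≤ (m:ℝ) := le_trans hval (Nat.le_ceil _)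
    exact Nat.cast_le.mp h2
  set N : ℕ := n - 2 with hN
  have hN1 : 1 ≤ N := by omega
  have hNA : ((N:ℕ):ℝ) = A := by rw [hN, hA]; push_cast [Nat.cast_sub hn2]; ring
  have hkm : m - 2 = N + (m - n) := by omega
  -- Step 1 & 2: x^(m-2)/(m-2)! ≤ (A/e)^N/N!
  have hb0 : 0 ≤ A / e := by positivity
  have step12 : x ^ (m - 2) / (Nat.factorial (m - 2) : ℝ)
      ≤ (A/e) ^ N / (Nat.factorial N : ℝ) := by
    have h1 : x ^ (m - 2) ≤ (A/e) ^ (m - 2) := pow_le_pow_left₀ hx0 hxA _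
    have h2 : x ^ (m - 2) / (Nat.factorial (m - 2) : ℝ)
        ≤ (A/e) ^ (m - 2) / (Nat.factorial (m - 2) : ℝ) := by
      apply div_le_div_of_nonneg_right h1 ?_ |>.trans_eq rfl
      · positivity
    refine h2.trans ?_
    rw [hkm]
    apply aux_fact_decay (A/e) hb0 N
    calc A / e ≤ A := by
          rw [div_le_iff₀ (by linarith : (0:ℝ) < e)]
          nlinarith
      _ = (N:ℝ) := hNA.symm
      _ ≤ (N:ℝ) + 1 := by linarith
  -- Step 3: Stirling
  have hfacN : a * Real.sqrt N * ((N:ℝ) / e) ^ N ≤ (Nat.factorial N : ℝ) :=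
    aux_stirling a ha hstir N hN1
  have hApos : (0:ℝ) < A := by linarith
  have hsqApos : (0:ℝ) < Real.sqrt A := Real.sqrt_pos.mpr hApos
  have step3 : (A/e) ^ N / (Nat.factorial N : ℝ) ≤ (1/a) * (Real.sqrt A)⁻¹ := by
    have hBpos : (0:ℝ) < (A / e) ^ N := by positivity
    have hfpos : (0:ℝ) < (Nat.factorial N : ℝ) := by positivity
    rw [div_le_iff₀ hfpos]
    rw [hNA] at hfacN
    calc (1/a) * (Real.sqrt A)⁻¹ * (Nat.factorial N : ℝ)
        ≥ (1/a) * (Real.sqrt A)⁻¹ * (a * Real.sqrt A * (A / e) ^ N) := by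
          apply mul_le_mul_of_nonneg_left hfacN (by positivity)
      _ = (A/e) ^ N := by field_simp
  -- put together
  have hrpow : ((n:ℝ)-2) ^ (-(1:ℝ)/2) = (Real.sqrt A)⁻¹ := by
    rw [← hA]
    have : (-(1:ℝ)/2) = -(1/2) := by norm_num
    rw [this, Real.rpow_neg hApos.le, Real.sqrt_eq_rpow]
  rw [hrpow]
  calc x ^ (m - 2) / (Nat.factorial (m - 2) : ℝ)
      ≤ (A/e) ^ N / (Nat.factorial N : ℝ) := step12
    _ ≤ (1/a) * (Real.sqrt A)⁻¹ := step3
end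

section
/- Let r ≥ 0 be an integer and m ∈ ℕ. If g ∈ C^{2m}([0,1]) satisfies Assumption A(r), then there exists a positive constant c (depending on g and m but not on κ) such that for all κ > 1 and all integers j with 0 ≤ j ≤ 2m, sup_{x∈[0,1]} |w_κ^{(j)}(x)| ≤ c, where w_κ(x) := exp(iκ g(λ_r x)). -/
open scoped BigOperators
open Set

noncomputable section

/-- `κ_{σ(r)} := κ` if `σ(r) ≤ 1`, and `κ σ(r)` otherwise. -/
def kappaSigma (κ σr : ℝ) : ℝ := if σr ≤ 1 then κ else κ * σr

/-- `λ_r := κ_{σ(r)}^{-1/(r+1)}`. -/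
def lambdaR (κ σr : ℝ) (r : ℕ) : ℝ := (kappaSigma κ σr) ^ (-(1:ℝ)/((r:ℝ)+1))



lemma iteratedDeriv_cexp (n : ℕ) : iteratedDeriv n Complex.exp = Complex.exp := by
  rw [iteratedDeriv_eq_iterate, Complex.iter_deriv_exp]

lemma norm_iteratedFDeriv_real_cexp (n : ℕ) (z : ℂ) :
    ‖iteratedFDeriv ℝ n Complex.exp z‖ = Real.exp z.re := by
  have hT : HasFTaylorSeriesUpToOn (⊤ : ℕ∞) Complex.exp
      (ftaylorSeriesWithin ℂ Complex.exp univ) univ :=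
    (Complex.contDiff_exp (n := (⊤ : ℕ∞))).contDiffOn.ftaylorSeriesWithin uniqueDiffOn_univ
  have hR := hT.restrictScalars ℝ
  have h1 : iteratedFDerivWithin ℝ n Complex.exp univ z
      = (ftaylorSeriesWithin ℂ Complex.exp univ z n).restrictScalars ℝ :=
    (hR.eq_iteratedFDerivWithin_of_uniqueDiffOn (by exact_mod_cast le_top) uniqueDiffOn_univ
      (mem_univ z)).symm
  have h2 : ‖iteratedFDeriv ℝ n Complex.exp z‖
      = ‖ftaylorSeriesWithin ℂ Complex.exp univ z n‖ := by
    rw [← iteratedFDerivWithin_univ, h1, ContinuousMultilinearMap.norm_restrictScalars]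
  rw [h2]
  have h3 : ftaylorSeriesWithin ℂ Complex.exp univ z n
      = iteratedFDeriv ℂ n Complex.exp z := by
    rw [ftaylorSeriesWithin_univ]; rfl
  rw [h3, norm_iteratedFDeriv_eq_norm_iteratedDeriv, iteratedDeriv_cexp,
    Complex.norm_exp]

lemma taylor_bound (r : ℕ) (g : ℝ → ℝ) (M : ℝ)
    (hgr : ContDiffOn ℝ (r+1) g (Set.Icc 0 1))
    (hg0 : ∀ j ≤ r, iteratedDerivWithin j g (Set.Icc 0 1) 0 = 0)
    (hbd : ∀ y ∈ Set.Icc (0:ℝ) 1, |iteratedDerivWithin (r+1) g (Set.Icc 0 1) y| ≤ M) :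
    ∀ k ≤ r+1, ∀ y ∈ Set.Icc (0:ℝ) 1,
      |iteratedDerivWithin (r+1-k) g (Set.Icc 0 1) y| ≤ M * y ^ k := by
  intro k
  induction k with
  | zero => intro _ y hy; simpa using hbd y hy
  | succ k IH =>
    intro hk y hy
    have hkr : k ≤ r := by omega
    have hIH := IH (by omega)
    have hi : r + 1 - (k+1) = r - k := by omega
    have hi2 : r + 1 - k = (r - k) + 1 := by omega
    rw [hi]
    have h0 : iteratedDerivWithin (r-k) g (Set.Icc 0 1) 0 = 0 := hg0 _ (by omega)
    obtain ⟨hy0, hy1⟩ := hy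
    have hM : 0 ≤ M := le_trans (abs_nonneg _) (hbd 0 (by norm_num))
    have hsub : Set.Icc (0:ℝ) y ⊆ Set.Icc 0 1 := Set.Icc_subset_Icc le_rfl hy1
    have hdiff : DifferentiableOn ℝ (iteratedDerivWithin (r-k) g (Set.Icc 0 1))
        (Set.Icc (0:ℝ) 1) := by
      apply hgr.differentiableOn_iteratedDerivWithin _ (uniqueDiffOn_Icc one_pos)
      exact_mod_cast by exact_mod_cast Nat.lt_succ_of_le (by omega : r - k ≤ r)
    have key : ∀ t ∈ Set.Icc (0:ℝ) y,
        HasDerivWithinAt (iteratedDerivWithin (r-k) g (Set.Icc 0 1))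
          (iteratedDerivWithin ((r-k)+1) g (Set.Icc 0 1) t) (Set.Icc 0 y) t := by
      intro t ht
      have ht1 : t ∈ Set.Icc (0:ℝ) 1 := hsub ht
      have := (hdiff t ht1).hasDerivWithinAt
      rw [← iteratedDerivWithin_succ] at this
      exact this.mono hsub
    have bound : ∀ t ∈ Set.Icc (0:ℝ) y,
        ‖iteratedDerivWithin ((r-k)+1) g (Set.Icc 0 1) t‖ ≤ M * y ^ k := by
      intro t ht
      rw [Real.norm_eq_abs]
      calc |iteratedDerivWithin ((r-k)+1) g (Set.Icc 0 1) t|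
          = |iteratedDerivWithin (r+1-k) g (Set.Icc 0 1) t| := by rw [hi2]
        _ ≤ M * t ^ k := hIH t (hsub ht)
        _ ≤ M * y ^ k := by
            apply mul_le_mul_of_nonneg_left (pow_le_pow_left₀ ht.1 ht.2 k) hM
    have := (convex_Icc (0:ℝ) y).norm_image_sub_le_of_norm_hasDerivWithin_le key bound
      (Set.left_mem_Icc.2 hy0) (Set.right_mem_Icc.2 hy0)
    rw [h0, sub_zero, sub_zero, Real.norm_eq_abs, Real.norm_eq_abs, abs_of_nonneg hy0] at this
    calc |iteratedDerivWithin (r-k) g (Set.Icc 0 1) y| ≤ M * y ^ k * y := this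
      _ = M * y ^ (k+1) := by ring

/-- iterated derivative within of `L ∘ g` for a CLM `L`. -/
lemma iteratedDerivWithin_clm_comp (L : ℝ →L[ℝ] ℂ) {g : ℝ → ℝ} {s : Set ℝ}
    {N : WithTop ℕ∞} (hf : ContDiffOn ℝ N g s) (hs : UniqueDiffOn ℝ s) {x : ℝ} (hx : x ∈ s)
    {i : ℕ} (hi : (i : WithTop ℕ∞) ≤ N) :
    iteratedDerivWithin i (fun u => L (g u)) s x = L (iteratedDerivWithin i g s x) := by
  rw [iteratedDerivWithin_eq_iteratedFDerivWithin, iteratedDerivWithin_eq_iteratedFDerivWithin]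
  rw [show (fun u => L (g u)) = L ∘ g from rfl,
    L.iteratedFDerivWithin_comp_left (hf x hx) hs hx hi]
  rfl

/-- bound for iterated derivatives of `y ↦ l * y`. -/
lemma scaling_bound {l : ℝ} (hl0 : 0 ≤ l) {i : ℕ} (hi : 1 ≤ i) {x : ℝ}
    (hx : x ∈ Set.Icc (0:ℝ) 1) :
    ‖iteratedFDerivWithin ℝ i (fun y : ℝ => l * y) (Set.Icc 0 1) x‖ ≤ l ^ i := by
  have uds : UniqueDiffOn ℝ (Set.Icc (0:ℝ) 1) := uniqueDiffOn_Icc one_pos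
  rw [norm_iteratedFDerivWithin_eq_norm_iteratedDerivWithin]
  match i, hi with
  | 1, _ =>
    have hd : derivWithin (fun y : ℝ => l * y) (Set.Icc 0 1) x = l := by
      simpa using ((hasDerivWithinAt_id x (Set.Icc (0:ℝ) 1)).const_mul l).derivWithin (uds x hx)
    rw [iteratedDerivWithin_one, hd]
    simp [abs_of_nonneg hl0]
  | (k+2), _ =>
    rw [iteratedDerivWithin_succ']
    have hEq : Set.EqOn (derivWithin (fun y : ℝ => l * y) (Set.Icc 0 1)) (fun _ => l)
        (Set.Icc 0 1) := by
      intro t ht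
      simpa using ((hasDerivWithinAt_id t (Set.Icc (0:ℝ) 1)).const_mul l).derivWithin (uds t ht)
    rw [iteratedDerivWithin_congr hEq hx, iteratedDerivWithin_eq_iteratedFDerivWithin,
      iteratedFDerivWithin_const_of_ne (by omega) l (Set.Icc 0 1)]
    simpa using pow_nonneg hl0 (k+2)

set_option maxHeartbeats 1000000 in
/-- if `g ∈ C^{2m}([0,1])` satisfies Assumption A(r), then all derivatives of
order `≤ 2m` of `w_κ(x) = exp(iκ g(λ_r x))` are bounded on `[0,1]` uniformly in `κ > 1`. -/
theorem stmt_7 (r m : ℕ) (hm : 1 ≤ m) (g : ℝ → ℝ) (σr : ℝ)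
    (hg2m : ContDiffOn ℝ (2*m) g (Set.Icc 0 1))
    (hgr : ContDiffOn ℝ (r+1) g (Set.Icc 0 1))
    (hmono : StrictMonoOn g (Set.Icc 0 1))
    (hnoinfl : ConvexOn ℝ (Set.Icc 0 1) g ∨ ConcaveOn ℝ (Set.Icc 0 1) g)
    (hg0 : ∀ j ≤ r, iteratedDerivWithin j g (Set.Icc 0 1) 0 = 0)
    (hgne : ∀ x ∈ Set.Icc (0:ℝ) 1, iteratedDerivWithin (r+1) g (Set.Icc 0 1) x ≠ 0)
    (hσ : IsGreatest
      ((fun x => |iteratedDerivWithin (r+1) g (Set.Icc 0 1) x| / ((r+1).factorial : ℝ)) ''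
        Set.Icc 0 1) σr) :
    ∃ c : ℝ, 0 < c ∧ ∀ κ : ℝ, 1 < κ → ∀ j ≤ 2*m, ∀ x ∈ Set.Icc (0:ℝ) 1,
      ‖iteratedDerivWithin j
          (fun y : ℝ => Complex.exp (Complex.I * κ * g (lambdaR κ σr r * y)))
          (Set.Icc 0 1) x‖ ≤ c := by
  have uds : UniqueDiffOn ℝ (Set.Icc (0:ℝ) 1) := uniqueDiffOn_Icc one_pos
  have hfacpos : (0:ℝ) < ((r+1).factorial : ℝ) := by positivity
  -- σr > 0
  have hσpos : 0 < σr := by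
    obtain ⟨x₀, hx₀, hval⟩ := hσ.1
    rw [← hval]
    exact div_pos (abs_pos.2 (hgne x₀ hx₀)) hfacpos
  -- bound M on (r+1)-th derivative
  set M : ℝ := σr * ((r+1).factorial : ℝ) with hMdef
  have hMb : ∀ y ∈ Set.Icc (0:ℝ) 1, |iteratedDerivWithin (r+1) g (Set.Icc 0 1) y| ≤ M := by
    intro y hy
    have := hσ.2 ⟨y, hy, rfl⟩
    rw [div_le_iff₀ hfacpos] at this
    simpa [hMdef, mul_comm] using this
  have hM0 : (0:ℝ) ≤ M := le_trans (abs_nonneg _) (hMb 0 (by norm_num))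
  have tb := taylor_bound r g M hgr hg0 hMb
  -- uniform bound K on derivatives of order ≤ 2m
  have hbdd : ∀ i : ℕ, ∃ C, 0 ≤ C ∧ ∀ y ∈ Set.Icc (0:ℝ) 1,
      i ≤ 2*m → |iteratedDerivWithin i g (Set.Icc 0 1) y| ≤ C := by
    intro i
    by_cases hi : i ≤ 2*m
    · have hcont : ContinuousOn (iteratedDerivWithin i g (Set.Icc 0 1)) (Set.Icc (0:ℝ) 1) :=
        hg2m.continuousOn_iteratedDerivWithin (by exact_mod_cast hi) uds
      obtain ⟨C, hC⟩ := isCompact_Icc.exists_bound_of_continuousOn hcont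
      exact ⟨max C 0, le_max_right _ _, fun y hy _ =>
        le_trans (by simpa using hC y hy) (le_max_left _ _)⟩
    · exact ⟨0, le_rfl, fun y hy h => absurd h hi⟩
  choose B hB0 hB using hbdd
  have hne : (Finset.range (2*m+1)).Nonempty := ⟨0, by simp⟩
  set K : ℝ := (Finset.range (2*m+1)).sup' hne B with hKdef
  have hK : ∀ i ≤ 2*m, ∀ y ∈ Set.Icc (0:ℝ) 1,
      |iteratedDerivWithin i g (Set.Icc 0 1) y| ≤ K := by
    intro i hi y hy
    exact le_trans (hB i y hy hi) (Finset.le_sup' B (by simp; omega))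
  have hK0 : (0:ℝ) ≤ K := le_trans (hB0 0) (Finset.le_sup' B (by simp))
  -- constants
  set s0 : ℝ := max 1 σr⁻¹ with hs0def
  have hs00 : (0:ℝ) ≤ s0 := le_trans zero_le_one (le_max_left _ _)
  set B0 : ℝ := (M + K) * s0 with hB0def
  have hB00 : (0:ℝ) ≤ B0 := mul_nonneg (by linarith) hs00
  set D : ℝ := max 1 (((2*m).factorial : ℝ) * B0) with hDdef
  have hD1 : (1:ℝ) ≤ D := le_max_left _ _
  refine ⟨((2*m).factorial : ℝ) * D ^ (2*m), by positivity, ?_⟩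
  intro κ hκ j hj x hx
  -- facts about λ
  set l : ℝ := lambdaR κ σr r with hldef
  have hks1 : 1 ≤ kappaSigma κ σr := by
    rw [kappaSigma]
    split
    · linarith
    · nlinarith [hσpos]
  have hkspos : 0 < kappaSigma κ σr := lt_of_lt_of_le one_pos hks1
  have hl0 : 0 < l := Real.rpow_pos_of_pos hkspos _
  have hl1 : l ≤ 1 := by
    apply Real.rpow_le_one_of_one_le_of_nonpos hks1
    apply div_nonpos_of_nonpos_of_nonneg (by norm_num)
    positivity
  have hlpow : l ^ (r+1) = (kappaSigma κ σr)⁻¹ := by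
    rw [hldef, lambdaR, ← Real.rpow_natCast _ (r+1), ← Real.rpow_mul hkspos.le]
    rw [show -(1:ℝ)/((r:ℝ)+1) * ((r+1 : ℕ):ℝ) = -1 by push_cast; field_simp]
    exact Real.rpow_neg_one _
  have hkl : κ * l ^ (r+1) ≤ s0 := by
    rw [hlpow, kappaSigma]
    split
    · rw [mul_inv_cancel₀ (by linarith)]; exact le_max_left _ _
    · rw [mul_inv, ← mul_assoc, mul_inv_cancel₀ (by linarith), one_mul]
      exact le_max_right _ _
  -- key pointwise bound
  have key : ∀ i ≤ 2*m, ∀ u ∈ Set.Icc (0:ℝ) 1,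
      κ * l ^ i * |iteratedDerivWithin i g (Set.Icc 0 1) (l * u)| ≤ B0 := by
    intro i hi u hu
    have hlu : l * u ∈ Set.Icc (0:ℝ) 1 := by
      constructor
      · exact mul_nonneg hl0.le hu.1
      · calc l * u ≤ 1 * 1 := mul_le_mul hl1 hu.2 hu.1 zero_le_one
          _ = 1 := by ring
    have hκ0 : (0:ℝ) < κ := by linarith
    by_cases hir : i ≤ r + 1
    · -- Taylor bound
      have htay := tb (r+1-i) (by omega) (l*u) hlu
      rw [show r+1-(r+1-i) = i by omega] at htay
      have h1 : |iteratedDerivWithin i g (Set.Icc 0 1) (l*u)| ≤ M * l ^ (r+1-i) := by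
        refine htay.trans ?_
        apply mul_le_mul_of_nonneg_left _ hM0
        calc (l*u) ^ (r+1-i) ≤ l ^ (r+1-i) := by
              apply pow_le_pow_left₀ (mul_nonneg hl0.le hu.1)
              calc l * u ≤ l * 1 := by nlinarith [hu.2, hl0.le]
                _ = l := by ring
          _ ≤ l ^ (r+1-i) := le_rfl
      calc κ * l ^ i * |iteratedDerivWithin i g (Set.Icc 0 1) (l*u)|
          ≤ κ * l ^ i * (M * l ^ (r+1-i)) := by
            apply mul_le_mul_of_nonneg_left h1 (by positivity)
        _ = M * (κ * l ^ (i + (r+1-i))) := by rw [pow_add]; ring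
        _ = M * (κ * l ^ (r+1)) := by rw [show i + (r+1-i) = r+1 by omega]
        _ ≤ M * s0 := mul_le_mul_of_nonneg_left hkl hM0
        _ ≤ B0 := by rw [hB0def]; nlinarith [hK0, hs00]
    · -- sup bound
      have h1 := hK i hi (l*u) hlu
      have hpow : l ^ i ≤ l ^ (r+1) := pow_le_pow_of_le_one hl0.le hl1 (by omega)
      calc κ * l ^ i * |iteratedDerivWithin i g (Set.Icc 0 1) (l*u)|
          ≤ κ * l ^ i * K := mul_le_mul_of_nonneg_left h1 (by positivity)
        _ ≤ κ * l ^ (r+1) * K :=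
            mul_le_mul_of_nonneg_right (mul_le_mul_of_nonneg_left hpow hκ0.le) hK0
        _ ≤ s0 * K := mul_le_mul_of_nonneg_right hkl hK0
        _ ≤ B0 := by rw [hB0def]; nlinarith [hM0, hs00]
  -- the CLM and the inner function
  set L : ℝ →L[ℝ] ℂ := (Complex.I * (κ:ℂ)) • Complex.ofRealCLM with hLdef
  have hLapp : ∀ t : ℝ, L t = Complex.I * (κ:ℂ) * (t:ℂ) := by
    intro t; simp [hLdef, smul_eq_mul]
  set hC : ℝ → ℂ := fun u => Complex.I * (κ:ℂ) * ((g u : ℝ) : ℂ) with hhCdef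
  have hhCL : hC = fun u => L (g u) := by funext u; rw [hLapp]
  set ℓ : ℝ → ℝ := fun y => l * y with hℓdef
  have hmaps : MapsTo ℓ (Set.Icc (0:ℝ) 1) (Set.Icc (0:ℝ) 1) := by
    intro y hy
    constructor
    · exact mul_nonneg hl0.le hy.1
    · calc l * y ≤ 1 * 1 := mul_le_mul hl1 hy.2 hy.1 zero_le_one
        _ = 1 := by ring
  have hCcd : ContDiffOn ℝ (2*m) hC (Set.Icc (0:ℝ) 1) := by
    rw [hhCL]; exact hg2m.continuousLinearMap_comp L
  have hℓcd : ContDiffOn ℝ (2*m) ℓ (Set.Icc (0:ℝ) 1) :=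
    ((contDiff_const.mul contDiff_id).contDiffOn)
  have hFcd : ContDiffOn ℝ (2*m) (hC ∘ ℓ) (Set.Icc (0:ℝ) 1) := hCcd.comp hℓcd hmaps
  -- norms of derivatives of hC
  have hCnorm : ∀ i ≤ 2*m, ∀ u ∈ Set.Icc (0:ℝ) 1,
      ‖iteratedFDerivWithin ℝ i hC (Set.Icc 0 1) u‖
        = κ * |iteratedDerivWithin i g (Set.Icc 0 1) u| := by
    intro i hi u hu
    rw [norm_iteratedFDerivWithin_eq_norm_iteratedDerivWithin, hhCL,
      iteratedDerivWithin_clm_comp L hg2m uds hu (by exact_mod_cast hi), hLapp]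
    rw [norm_mul, norm_mul]
    simp [abs_of_pos (show (0:ℝ) < κ by linarith)]
  -- bound on derivatives of the inner function F = hC ∘ ℓ
  have inner : ∀ i, 1 ≤ i → i ≤ 2*m → ∀ z ∈ Set.Icc (0:ℝ) 1,
      ‖iteratedFDerivWithin ℝ i (hC ∘ ℓ) (Set.Icc 0 1) z‖ ≤ D ^ i := by
    intro i hi1 hi2 z hz
    have hpowpos : (0:ℝ) < l ^ i := pow_pos hl0 i
    have comp := norm_iteratedFDerivWithin_comp_le (𝕜 := ℝ) (n := i)
      (hCcd) (hℓcd) (by exact_mod_cast hi2) uds uds hmaps hz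
      (C := B0 / l ^ i) (D := l)
      (fun i' hi' => by
        rw [hCnorm i' (le_trans hi' hi2) (ℓ z) (hmaps hz), le_div_iff₀ hpowpos]
        have h1 : l ^ i ≤ l ^ i' := pow_le_pow_of_le_one hl0.le hl1 hi'
        have h2 := key i' (le_trans hi' hi2) z hz
        nlinarith [abs_nonneg (iteratedDerivWithin i' g (Set.Icc 0 1) (l * z)),
          mul_nonneg (show (0:ℝ) ≤ κ by linarith) (abs_nonneg (iteratedDerivWithin i' g (Set.Icc 0 1) (l * z)))])
      (fun i' hi'1 hi'2 => scaling_bound hl0.le hi'1 hz)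
    calc ‖iteratedFDerivWithin ℝ i (hC ∘ ℓ) (Set.Icc 0 1) z‖
        ≤ (i.factorial : ℝ) * (B0 / l ^ i) * l ^ i := comp
      _ = (i.factorial : ℝ) * B0 := by field_simp
      _ ≤ ((2*m).factorial : ℝ) * B0 := by
          apply mul_le_mul_of_nonneg_right _ hB00
          exact_mod_cast Nat.factorial_le hi2
      _ ≤ D := le_max_right _ _
      _ ≤ D ^ i := le_self_pow₀ (by linarith) (by omega)
  -- final composition with exp
  have hwfun : (fun y : ℝ => Complex.exp (Complex.I * κ * g (lambdaR κ σr r * y)))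
      = Complex.exp ∘ (hC ∘ ℓ) := rfl
  rw [hwfun, ← norm_iteratedFDerivWithin_eq_norm_iteratedDerivWithin]
  have hexp : ContDiffOn ℝ (2*m) Complex.exp (univ : Set ℂ) :=
    (Complex.contDiff_exp (𝕜 := ℝ)).contDiffOn
  have hre : ((hC ∘ ℓ) x).re = 0 := by
    simp [hhCdef, hℓdef, Function.comp, Complex.mul_re]
  have comp := norm_iteratedFDerivWithin_comp_le (𝕜 := ℝ) (n := j)
    hexp hFcd (by exact_mod_cast hj) uniqueDiffOn_univ uds (mapsTo_univ _ _) hx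
    (C := 1) (D := D)
    (fun i hi => by
      rw [iteratedFDerivWithin_univ, norm_iteratedFDeriv_real_cexp, hre, Real.exp_zero])
    (fun i hi1 hi2 => inner i hi1 (le_trans hi2 hj) x hx)
  calc ‖iteratedFDerivWithin ℝ j (Complex.exp ∘ (hC ∘ ℓ)) (Set.Icc 0 1) x‖
      ≤ (j.factorial : ℝ) * 1 * D ^ j := comp
    _ ≤ ((2*m).factorial : ℝ) * D ^ (2*m) := by
        rw [mul_one]
        apply mul_le_mul
        · exact_mod_cast Nat.factorial_le hj
        · exact pow_le_pow_right₀ hD1 hj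
        · positivity
        · positivity
end
end
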